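/- arXiv:1912.12930 — 8 statements merged into one kernel-verified Lean document; each statement's English description precedes it below -/
import Mathlib

section
/- Let m, n, k be positive integers with m ≤ n. If for every k-tuple (f₁,…,f_k) of positive definite integral quadratic forms of rank m+1 there exists a positive definite integral quadratic form of rank n+1 representing every f_i, then for every k-tuple (g₁,…,g_k) of positive definite integral quadratic forms of rank m there exists a positive definite integral quadratic form of rank n representing every g_i. (This is the inequality κ(m+1,n+1) ≤ κ(m,n).) -/
open Matrix

/-- A positive definite integral quadratic form of rank `m`. -/
def IsPDForm {m : ℕ} (M : Matrix (Fin m) (Fin m) ℤ) : Prop :=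
  M.IsSymm ∧ ∀ x : Fin m → ℤ, x ≠ 0 → 0 < x ⬝ᵥ M.mulVec x

/-- `N` is represented by `L` if `Tᵀ L T = N` for some integer matrix `T`. -/
def Represents {n m : ℕ} (L : Matrix (Fin n) (Fin n) ℤ)
    (N : Matrix (Fin m) (Fin m) ℤ) : Prop :=
  ∃ T : Matrix (Fin n) (Fin m) ℤ, Tᵀ * L * T = N

/-- An integer `a` is represented by the form `M`. -/
def RepresentsInt {m : ℕ} (M : Matrix (Fin m) (Fin m) ℤ) (a : ℤ) : Prop :=
  ∃ x : Fin m → ℤ, x ⬝ᵥ M.mulVec x = a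

/-- Two integral forms of rank `n` are isometric. -/
def IsomForm {n : ℕ} (A B : Matrix (Fin n) (Fin n) ℤ) : Prop :=
  ∃ U : Matrix (Fin n) (Fin n) ℤ, IsUnit U.det ∧ Uᵀ * A * U = B

section Aux

lemma gram_entry {N q : ℕ} (L : Matrix (Fin N) (Fin N) ℤ) (T : Matrix (Fin N) (Fin q) ℤ)
    (a b : Fin q) :
    (Tᵀ * L * T) a b = Matrix.toBilin' L (fun r => T r a) (fun r => T r b) := by
  rw [Matrix.toBilin'_apply']
  simp only [Matrix.mul_apply, Matrix.transpose_apply, Matrix.mulVec, dotProduct,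
    Finset.sum_mul, Finset.mul_sum]
  rw [Finset.sum_comm]
  simp [mul_assoc]

lemma pd_nonneg {N : ℕ} {M : Matrix (Fin N) (Fin N) ℤ} (h : IsPDForm M) (x : Fin N → ℤ) :
    0 ≤ x ⬝ᵥ M.mulVec x := by
  by_cases hx : x = 0
  · simp [hx]
  · exact (h.2 x hx).le

lemma beta_comm {N : ℕ} {L : Matrix (Fin N) (Fin N) ℤ} (hL : L.IsSymm) (x y : Fin N → ℤ) :
    Matrix.toBilin' L x y = Matrix.toBilin' L y x := by
  rw [Matrix.toBilin'_apply', Matrix.toBilin'_apply', Matrix.dotProduct_mulVec,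
    ← Matrix.mulVec_transpose, hL.eq, dotProduct_comm]

/-- the zero vector vanishes iff ... helper: PD implies definiteness -/
lemma pd_eq_zero {N : ℕ} {M : Matrix (Fin N) (Fin N) ℤ} (h : IsPDForm M) {x : Fin N → ℤ}
    (hx : x ⬝ᵥ M.mulVec x = 0) : x = 0 := by
  by_contra hc
  exact absurd hx (h.2 x hc).ne'

def pad {m : ℕ} (g : Matrix (Fin m) (Fin m) ℤ) : Matrix (Fin (m+1)) (Fin (m+1)) ℤ :=
  Matrix.of fun a b =>
    if ha : (a : ℕ) < m then
      if hb : (b : ℕ) < m then g ⟨a, ha⟩ ⟨b, hb⟩ else 0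
    else if (b : ℕ) < m then 0 else 1

@[simp] lemma pad_cc {m : ℕ} (g : Matrix (Fin m) (Fin m) ℤ) (a b : Fin m) :
    pad g a.castSucc b.castSucc = g a b := by
  simp [pad, a.isLt, b.isLt]

@[simp] lemma pad_cl {m : ℕ} (g : Matrix (Fin m) (Fin m) ℤ) (a : Fin m) :
    pad g a.castSucc (Fin.last m) = 0 := by
  simp [pad, a.isLt]

@[simp] lemma pad_lc {m : ℕ} (g : Matrix (Fin m) (Fin m) ℤ) (b : Fin m) :
    pad g (Fin.last m) b.castSucc = 0 := by
  simp [pad, b.isLt]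

@[simp] lemma pad_ll {m : ℕ} (g : Matrix (Fin m) (Fin m) ℤ) :
    pad g (Fin.last m) (Fin.last m) = 1 := by
  simp [pad]

lemma pad_q {m : ℕ} (g : Matrix (Fin m) (Fin m) ℤ) (x : Fin (m+1) → ℤ) :
    x ⬝ᵥ (pad g).mulVec x =
      (fun a => x a.castSucc) ⬝ᵥ g.mulVec (fun a => x a.castSucc)
        + x (Fin.last m) * x (Fin.last m) := by
  simp only [dotProduct, Matrix.mulVec, Fin.sum_univ_castSucc, pad_cc, pad_cl,
    pad_lc, pad_ll, zero_mul, mul_zero, add_zero, one_mul, zero_add,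
    Finset.sum_const_zero]

lemma pad_pd {m : ℕ} {g : Matrix (Fin m) (Fin m) ℤ} (hg : IsPDForm g) : IsPDForm (pad g) := by
  constructor
  · apply Matrix.IsSymm.ext
    intro a b
    by_cases ha : (a : ℕ) < m <;> by_cases hb : (b : ℕ) < m <;>
      simp [pad, ha, hb, hg.1.apply]
  · intro x hx
    rw [pad_q]
    by_cases hc : (fun a : Fin m => x a.castSucc) = 0
    · have hl : x (Fin.last m) ≠ 0 := by
        intro h0
        apply hx
        funext a
        refine Fin.lastCases ?_ ?_ a
        · exact h0
        · intro b; exact congrFun hc b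
      have : (0:ℤ) < x (Fin.last m) * x (Fin.last m) := mul_self_pos.mpr hl
      simpa [hc] using this
    · exact add_pos_of_pos_of_nonneg (hg.2 _ hc) (mul_self_nonneg _)

end Aux

set_option maxHeartbeats 1600000 in
/-- κ(m+1, n+1) ≤ κ(m, n): if every k-tuple of rank-(m+1) forms is simultaneously
represented by some rank-(n+1) form, then every k-tuple of rank-m forms is simultaneously
represented by some rank-n form. -/
theorem kappa_antitone (m n k : ℕ) (hm : 0 < m) (hn : 0 < n) (hk : 0 < k) (hmn : m ≤ n)
    (H : ∀ f : Fin k → Matrix (Fin (m + 1)) (Fin (m + 1)) ℤ, (∀ i, IsPDForm (f i)) →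
      ∃ L : Matrix (Fin (n + 1)) (Fin (n + 1)) ℤ, IsPDForm L ∧ ∀ i, Represents L (f i)) :
    ∀ g : Fin k → Matrix (Fin m) (Fin m) ℤ, (∀ i, IsPDForm (g i)) →
      ∃ L : Matrix (Fin n) (Fin n) ℤ, IsPDForm L ∧ ∀ i, Represents L (g i) := by
  intro g hg
  obtain ⟨L, hL, hrep⟩ := H (fun i => pad (g i)) (fun i => pad_pd (hg i))
  set B := Matrix.toBilin' L with hB
  clear_value B
  have hBval : ∀ x y : Fin (n+1) → ℤ, B x y = x ⬝ᵥ L.mulVec y := fun x y => by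
    rw [hB]; exact Matrix.toBilin'_apply' L x y
  have hBnn : ∀ x : Fin (n+1) → ℤ, 0 ≤ B x x := fun x => by
    rw [hBval]; exact pd_nonneg hL x
  have hBzero : ∀ x : Fin (n+1) → ℤ, B x x = 0 → x = 0 := fun x hx => by
    rw [hBval] at hx; exact pd_eq_zero hL hx
  have hBcomm : ∀ x y, B x y = B y x := fun x y => by
    rw [hB]; exact beta_comm hL.1 x y
  choose T hT using hrep
  -- columns
  set v : Fin k → (Fin (n+1) → ℤ) := fun i r => T i r (Fin.last m) with hv
  set s : Fin k → Fin m → (Fin (n+1) → ℤ) := fun i a r => T i r a.castSucc with hs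
  clear_value v s
  have hvv : ∀ i, B (v i) (v i) = 1 := by
    intro i
    have := congrFun (congrFun (hT i) (Fin.last m)) (Fin.last m)
    rw [gram_entry] at this
    rw [hB, hv]
    simpa using this
  have hsv : ∀ i a, B (s i a) (v i) = 0 := by
    intro i a
    have := congrFun (congrFun (hT i) a.castSucc) (Fin.last m)
    rw [gram_entry] at this
    rw [hB, hv, hs]
    simpa using this
  have hss : ∀ i a b, B (s i a) (s i b) = g i a b := by
    intro i a b
    have := congrFun (congrFun (hT i) a.castSucc) b.castSucc
    rw [gram_entry] at this
    rw [hB, hs]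
    simpa using this
  set u : Fin (n+1) → ℤ := v ⟨0, hk⟩ with hu
  clear_value u
  have huu : B u u = 1 := by rw [hu]; exact hvv _
  -- orthogonalize each s i against u
  have key : ∀ i, ∃ s' : Fin m → (Fin (n+1) → ℤ),
      (∀ a b, B (s' a) (s' b) = g i a b) ∧ ∀ a, B (s' a) u = 0 := by
    intro i
    obtain ⟨t, ht⟩ : ∃ t : ℤ, B u (v i) = t := ⟨_, rfl⟩
    have htv : B (v i) u = t := by rw [hBcomm]; exact ht
    have hQt : B (v i - t • u) (v i - t • u) = 1 - t * t := by
      simp only [map_sub, _root_.map_smul, LinearMap.sub_apply, LinearMap.smul_apply,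
        smul_eq_mul, hvv i, huu, htv, ht]
      ring
    have ht1 : t * t ≤ 1 := by
      have h := hBnn (v i - t • u)
      rw [hQt] at h
      linarith
    rcases eq_or_ne t 0 with ht0 | htne
    · -- reflection case
      set d : Fin (n+1) → ℤ := v i - u with hd
      clear_value d
      have hdd : B d d = 2 := by
        simp only [hd, map_sub, LinearMap.sub_apply, hvv i, huu, htv, ht, ht0]
        ring
      have hdu : B d u = -1 := by
        simp only [hd, map_sub, LinearMap.sub_apply, htv, ht0, huu]
        ring
      refine ⟨fun a => s i a - (B (s i a) d) • d, ?_, ?_⟩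
      · intro a b
        have h1 : B d (s i b) = B (s i b) d := hBcomm _ _
        simp only [map_sub, _root_.map_smul, LinearMap.sub_apply, LinearMap.smul_apply,
          smul_eq_mul, hss i, hdd, h1]
        ring
      · intro a
        have hsd : B (s i a) d = - B (s i a) u := by
          simp only [hd, map_sub, hsv i a]
          ring
        simp only [map_sub, _root_.map_smul, LinearMap.sub_apply, LinearMap.smul_apply,
          smul_eq_mul, hdu, hsd]
        ring
    · -- t = ±1 case : v i = t • u
      have ht' : t = 1 ∨ t = -1 := by
        clear * - ht1 htne
        have h1 : 0 ≤ (t + 1) * (t + 1) := mul_self_nonneg _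
        have h2 : 0 ≤ (t - 1) * (t - 1) := mul_self_nonneg _
        have h3 : -1 ≤ t := by nlinarith
        have h4 : t ≤ 1 := by nlinarith
        omega
      have hveq : v i = t • u := by
        have h0 : B (v i - t • u) (v i - t • u) = 0 := by
          rw [hQt]
          rcases ht' with h | h <;> rw [h] <;> ring
        exact sub_eq_zero.mp (hBzero _ h0)
      refine ⟨s i, hss i, ?_⟩
      intro a
      have h1 : B (s i a) (v i) = 0 := hsv i a
      rw [hveq, _root_.map_smul, smul_eq_mul] at h1
      rcases ht' with h | h <;> rw [h] at h1 <;> linarith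
  choose s' hs'g hs'o using key
  -- the orthogonal complement of u
  set φ : (Fin (n+1) → ℤ) →ₗ[ℤ] ℤ := B.flip u with hφ
  have hφval : ∀ x, φ x = B x u := fun x => by rw [hφ]; rfl
  clear_value φ
  set K := LinearMap.ker φ with hK
  have hmem : ∀ x : Fin (n+1) → ℤ, x ∈ K ↔ B x u = 0 := by
    intro x
    rw [hK, LinearMap.mem_ker, hφval]
  -- rank of K is n
  have hrange : LinearMap.range φ = ⊤ := by
    rw [LinearMap.range_eq_top]
    intro z
    refine ⟨z • u, ?_⟩
    rw [hφval, _root_.map_smul, LinearMap.smul_apply, huu, smul_eq_mul, mul_one]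
  have hfr : Module.finrank ℤ K = n := by
    have h1 := LinearMap.rank_range_add_rank_ker φ
    rw [hrange] at h1
    have h2 : Module.rank ℤ ↥(⊤ : Submodule ℤ ℤ) = 1 := by
      rw [rank_top, Module.rank_self]
    have h3 : Module.rank ℤ (Fin (n+1) → ℤ) = (n+1 : ℕ) := by
      rw [← Module.finrank_eq_rank, Module.finrank_pi]
      simp
    rw [h2, h3] at h1
    have h4 : (Module.finrank ℤ K : Cardinal) = Module.rank ℤ K :=
      Module.finrank_eq_rank ℤ K
    rw [← h4] at h1
    have h6 : 1 + Module.finrank ℤ K = n + 1 := by exact_mod_cast h1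
    omega
  -- basis of K
  let b : Module.Basis (Fin n) ℤ K := (Module.finBasis ℤ K).reindex (finCongr hfr)
  -- the rank-n form
  set L' : Matrix (Fin n) (Fin n) ℤ :=
    Matrix.of fun a c => B (b a : Fin (n+1) → ℤ) (b c : Fin (n+1) → ℤ) with hL'
  have hL'app : ∀ a c, L' a c = B (b a : Fin (n+1) → ℤ) (b c : Fin (n+1) → ℤ) := by
    intro a c
    rw [hL']
    rfl
  clear_value L'
  have hL'val : ∀ x y : Fin n → ℤ, x ⬝ᵥ L'.mulVec y =
      B (∑ a, x a • (b a : Fin (n+1) → ℤ)) (∑ c, y c • (b c : Fin (n+1) → ℤ)) := by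
    intro x y
    simp only [dotProduct, Matrix.mulVec, map_sum, _root_.map_smul,
      LinearMap.sum_apply, LinearMap.smul_apply, smul_eq_mul, hL'app, Finset.mul_sum]
    rw [Finset.sum_comm]
    refine Finset.sum_congr rfl fun a _ => Finset.sum_congr rfl fun c _ => ?_
    ring
  have hcoe : ∀ z : Fin n → ℤ, ((∑ r, z r • b r : K) : Fin (n+1) → ℤ)
      = ∑ r, z r • (b r : Fin (n+1) → ℤ) := by
    intro z
    simp
  refine ⟨L', ⟨?_, ?_⟩, ?_⟩
  · -- symmetric
    apply Matrix.IsSymm.ext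
    intro a c
    rw [hL'app, hL'app]
    exact hBcomm _ _
  · -- positive definite
    intro x hx
    rw [hL'val x x]
    have hwc := hcoe x
    have hwne : ((∑ r, x r • b r : K) : Fin (n+1) → ℤ) ≠ 0 := by
      intro h0
      apply hx
      have hw0 : (∑ r, x r • b r : K) = 0 := ZeroMemClass.coe_eq_zero.mp h0
      have h1 : b.equivFun.symm x = 0 := by
        rw [Module.Basis.equivFun_symm_apply]
        exact hw0
      have h2 : b.equivFun.symm x = b.equivFun.symm 0 := by
        rw [h1]; simp
      exact b.equivFun.symm.injective h2
    rw [← hwc, hBval]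
    exact hL.2 _ hwne
  · -- representation
    intro i
    have hmemK : ∀ a, s' i a ∈ K := fun a => (hmem _).mpr (hs'o i a)
    refine ⟨Matrix.of fun r c => b.repr ⟨s' i c, hmemK c⟩ r, ?_⟩
    ext a c
    rw [gram_entry]
    rw [Matrix.toBilin'_apply']
    have hcol : ∀ c' : Fin m,
        (∑ r, (b.repr ⟨s' i c', hmemK c'⟩ r) • (b r : Fin (n+1) → ℤ)) = s' i c' := by
      intro c'
      have h2 : ((∑ r, (b.repr ⟨s' i c', hmemK c'⟩ r) • b r : K) : Fin (n+1) → ℤ)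
          = s' i c' :=
        congrArg Subtype.val (b.sum_repr ⟨s' i c', hmemK c'⟩)
      rw [← hcoe]
      exact h2
    rw [hL'val]
    simp only [Matrix.of_apply]
    rw [hcol a, hcol c]
    exact hs'g i a c
end

section
/- (a) There is no positive definite integral binary quadratic form that represents the three integers 1, 2, and 15. (b) For every integer m ≥ 2, there is no positive definite integral quadratic form of rank m+1 that represents both the identity form I_m and the form I_{m-2} ⊥ ⟨3⟩ ⊥ ⟨3⟩. (Consequently κ(1,2) = 2 and κ(m,m+1) = 1 for m ≥ 2.) -/
open Matrix

lemma one_le_sq (x : ℤ) (h : x ≠ 0) : 1 ≤ x^2 := by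
  rcases lt_or_gt_of_ne h with h'|h' <;> nlinarith

set_option maxHeartbeats 2000000 in
-- core arithmetic: no two orthogonal norm-3 vectors in <1,1,c>
lemma core3 (c p1 p2 p3 q1 q2 q3 : ℤ) (hc : 1 ≤ c)
    (hp : p1^2 + p2^2 + c*p3^2 = 3) (hq : q1^2 + q2^2 + c*q3^2 = 3)
    (ho : p1*q1 + p2*q2 + c*p3*q3 = 0) : False := by
  rcases le_or_gt c 3 with h | h
  · have b1 : p1^2 ≤ 3 := by nlinarith [sq_nonneg p2, sq_nonneg p3]
    have b2 : p2^2 ≤ 3 := by nlinarith [sq_nonneg p1, sq_nonneg p3]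
    have b3 : p3^2 ≤ 3 := by nlinarith [sq_nonneg p1, sq_nonneg p2]
    have c1 : q1^2 ≤ 3 := by nlinarith [sq_nonneg q2, sq_nonneg q3]
    have c2 : q2^2 ≤ 3 := by nlinarith [sq_nonneg q1, sq_nonneg q3]
    have c3 : q3^2 ≤ 3 := by nlinarith [sq_nonneg q1, sq_nonneg q2]
    have B : ∀ x : ℤ, x^2 ≤ 3 → -1 ≤ x ∧ x ≤ 1 := by
      intro x hx
      constructor <;> nlinarith [sq_nonneg (x-1), sq_nonneg (x+1)]
    obtain ⟨l1, u1⟩ := B _ b1; obtain ⟨l2, u2⟩ := B _ b2; obtain ⟨l3, u3⟩ := B _ b3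
    obtain ⟨m1, n1⟩ := B _ c1; obtain ⟨m2, n2⟩ := B _ c2; obtain ⟨m3, n3⟩ := B _ c3
    interval_cases c <;> interval_cases p1 <;> interval_cases p2 <;> interval_cases p3 <;>
      interval_cases q1 <;> interval_cases q2 <;> interval_cases q3 <;> omega
  · have hp3 : p3 = 0 := by
      by_contra h3
      have : 1 ≤ p3^2 := one_le_sq _ h3
      nlinarith [sq_nonneg p1, sq_nonneg p2]
    have hq3 : q3 = 0 := by
      by_contra h3
      have : 1 ≤ q3^2 := one_le_sq _ h3
      nlinarith [sq_nonneg q1, sq_nonneg q2]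
    subst hp3
    have b1 : p1^2 ≤ 3 := by nlinarith [sq_nonneg p2]
    have b2 : p2^2 ≤ 3 := by nlinarith [sq_nonneg p1]
    have B : ∀ x : ℤ, x^2 ≤ 3 → -1 ≤ x ∧ x ≤ 1 := by
      intro x hx
      constructor <;> nlinarith [sq_nonneg (x-1), sq_nonneg (x+1)]
    obtain ⟨l1, u1⟩ := B _ b1; obtain ⟨l2, u2⟩ := B _ b2
    interval_cases p1 <;> interval_cases p2 <;> omega


-- norm-one vectors have a single ±1 coordinate, at a weight-1 position
lemma norm_one {ι : Type} [Fintype ι] [DecidableEq ι] (ν : ι → ℤ) (hν : ∀ i, 1 ≤ ν i)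
    (x : ι → ℤ) (h : ∑ i, ν i * x i * x i = 1) :
    ∃ i', (ν i' = 1 ∧ (x i' = 1 ∨ x i' = -1)) ∧ ∀ i, i ≠ i' → x i = 0 := by
  have hnn : ∀ i : ι, 0 ≤ ν i * x i * x i := by
    intro i
    have h0 : (0:ℤ) ≤ ν i := le_trans zero_le_one (hν i)
    rw [mul_assoc]
    exact mul_nonneg h0 (mul_self_nonneg _)
  have hex : ∃ i', x i' ≠ 0 := by
    by_contra hco
    push_neg at hco
    simp [hco] at h
  obtain ⟨i', hi'⟩ := hex
  have h1 : 1 ≤ ν i' * x i' * x i' := by nlinarith [hν i', one_le_sq (x i') hi']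
  have hle : ν i' * x i' * x i' ≤ 1 := by
    rw [← h]
    exact Finset.single_le_sum (fun i _ => hnn i) (Finset.mem_univ i')
  have heq : ν i' * x i' * x i' = 1 := le_antisymm hle h1
  have hrest : ∑ i ∈ Finset.univ.erase i', ν i * x i * x i = 0 := by
    have := Finset.add_sum_erase Finset.univ (fun i => ν i * x i * x i) (Finset.mem_univ i')
    beta_reduce at this
    linarith [heq, h, this]
  have hzero : ∀ i, i ≠ i' → x i = 0 := by
    intro i hi
    have hmem : i ∈ Finset.univ.erase i' := Finset.mem_erase.mpr ⟨hi, Finset.mem_univ i⟩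
    have := (Finset.sum_eq_zero_iff_of_nonneg (fun j _ => hnn j)).mp hrest i hmem
    nlinarith [hν i, sq_nonneg (x i), one_le_sq (x i) , this]
  have hν1 : ν i' = 1 := by nlinarith [hν i', one_le_sq (x i') hi']
  have hx1 : x i' * x i' = 1 := by nlinarith
  exact ⟨i', ⟨hν1, mul_self_eq_one_iff.mp hx1⟩, hzero⟩


lemma core3' (w1 w2 w3 p1 p2 p3 q1 q2 q3 : ℤ) (h1 : 1 ≤ w1) (h2 : 1 ≤ w2) (h3 : 1 ≤ w3)
    (hw : w2 = 1 ∧ w3 = 1 ∨ w1 = 1 ∧ w3 = 1 ∨ w1 = 1 ∧ w2 = 1)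
    (hp : w1*p1*p1 + w2*p2*p2 + w3*p3*p3 = 3)
    (hq : w1*q1*q1 + w2*q2*q2 + w3*q3*q3 = 3)
    (ho : w1*p1*q1 + w2*p2*q2 + w3*p3*q3 = 0) : False := by
  rcases hw with ⟨e1, e2⟩ | ⟨e1, e2⟩ | ⟨e1, e2⟩ <;> subst e1 <;> subst e2
  · exact core3 w1 p2 p3 p1 q2 q3 q1 h1 (by ring_nf; ring_nf at hp; linarith)
      (by ring_nf; ring_nf at hq; linarith) (by ring_nf; ring_nf at ho; linarith)
  · exact core3 w2 p1 p3 p2 q1 q3 q2 h2 (by ring_nf; ring_nf at hp; linarith)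
      (by ring_nf; ring_nf at hq; linarith) (by ring_nf; ring_nf at ho; linarith)
  · exact core3 w3 p1 p2 p3 q1 q2 q3 h3 (by ring_nf; ring_nf at hp; linarith)
      (by ring_nf; ring_nf at hq; linarith) (by ring_nf; ring_nf at ho; linarith)

lemma comb (k : ℕ) : ∀ (ι : Type) (_ : Fintype ι) (_ : DecidableEq ι)
    (ν : ι → ℤ) (_ : ∀ i, 1 ≤ ν i) (i₀ : ι) (_ : ∀ i, i ≠ i₀ → ν i = 1)
    (_ : Fintype.card ι = k + 3) (v : Fin k → ι → ℤ) (p q : ι → ℤ)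
    (_ : ∀ j, ∑ i, ν i * v j i * v j i = 1)
    (_ : ∀ j l, j ≠ l → ∑ i, ν i * v j i * v l i = 0)
    (_ : ∑ i, ν i * p i * p i = 3) (_ : ∑ i, ν i * q i * q i = 3)
    (_ : ∑ i, ν i * p i * q i = 0)
    (_ : ∀ j, ∑ i, ν i * v j i * p i = 0)
    (_ : ∀ j, ∑ i, ν i * v j i * q i = 0), False := by
  induction k with
  | zero =>
    intro ι _ _ ν hν i₀ hν1 hcard v p q hv hvo hp hq hpq hvp hvq
    obtain ⟨x, y, z, hxy, hxz, hyz, hu⟩ := Finset.card_eq_three.mp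
      (show (Finset.univ : Finset ι).card = 3 by rw [Finset.card_univ, hcard])
    have hsum : ∀ f : ι → ℤ, ∑ i, f i = f x + f y + f z := by
      intro f
      rw [show (Finset.univ : Finset ι) = {x, y, z} from hu]
      rw [Finset.sum_insert (by simp [hxy, hxz]), Finset.sum_insert (by simp [hyz]),
        Finset.sum_singleton, add_assoc]
    rw [hsum] at hp hq hpq
    have hmem : i₀ ∈ ({x, y, z} : Finset ι) := hu ▸ Finset.mem_univ i₀
    simp only [Finset.mem_insert, Finset.mem_singleton] at hmem
    apply core3' (ν x) (ν y) (ν z) (p x) (p y) (p z) (q x) (q y) (q z)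
      (hν x) (hν y) (hν z) ?_ hp hq hpq
    rcases hmem with h | h | h
    · exact Or.inl ⟨hν1 y (h ▸ hxy.symm ∘ Eq.symm ∘ Eq.symm), hν1 z (by subst h; exact fun e => hxz e.symm)⟩
    · exact Or.inr (Or.inl ⟨hν1 x (by subst h; exact hxy), hν1 z (by subst h; exact fun e => hyz e.symm)⟩)
    · exact Or.inr (Or.inr ⟨hν1 x (by subst h; exact hxz), hν1 y (by subst h; exact hyz)⟩)
  | succ k IH =>
    intro ι _ _ ν hν i₀ hν1 hcard v p q hv hvo hp hq hpq hvp hvq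
    obtain ⟨i', ⟨hw1, hpm⟩, hz⟩ := norm_one ν hν (v 0) (hv 0)
    -- any vector orthogonal to v 0 vanishes at i'
    have horth : ∀ y : ι → ℤ, ∑ i, ν i * v 0 i * y i = 0 → y i' = 0 := by
      intro y hy
      rw [Finset.sum_eq_single i' (fun b _ hb => by rw [hz b hb]; ring) (by simp)] at hy
      rw [hw1] at hy
      rcases hpm with h | h <;> rw [h] at hy <;> linarith
    have hpz : p i' = 0 := horth p (hvp 0)
    have hqz : q i' = 0 := horth q (hvq 0)
    have hvz : ∀ j : Fin k, v j.succ i' = 0 :=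
      fun j => horth (v j.succ) (hvo 0 j.succ (Fin.succ_ne_zero j).symm)
    -- restrict to the complement of i'
    have hsplit : ∀ f : ι → ℤ, ∑ i, f i = f i' + ∑ i : {a : ι // a ≠ i'}, f i.val := by
      intro f
      rw [Fintype.sum_eq_add_sum_compl i' f]
      congr 1
      exact Finset.sum_subtype ({i'}ᶜ) (fun x => by simp) f
    have hcard' : Fintype.card {a : ι // a ≠ i'} = k + 3 := by
      simp [Fintype.card_subtype_compl, hcard]
    -- new special index
    have hne : Nonempty {a : ι // a ≠ i'} := by
      rw [← Fintype.card_pos_iff, hcard']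
      omega
    obtain ⟨d⟩ := hne
    by_cases hi : i₀ = i'
    · exact IH {a : ι // a ≠ i'} inferInstance inferInstance (fun i => ν i.val) (fun i => hν i.val) d
        (fun i _ => hν1 i.val (hi ▸ i.prop))
        hcard' (fun j i => v j.succ i.val) (fun i => p i.val) (fun i => q i.val)
        (fun j => by have := hv j.succ; rw [hsplit, hvz j] at this; linarith)
        (fun j l hjl => by
          have := hvo j.succ l.succ (fun e => hjl (Fin.succ_injective _ e))
          rw [hsplit, hvz j] at this; linarith)
        (by rw [hsplit, hpz] at hp; linarith)
        (by rw [hsplit, hqz] at hq; linarith)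
        (by rw [hsplit, hpz] at hpq; linarith)
        (fun j => by have := hvp j.succ; rw [hsplit, hvz j] at this; linarith)
        (fun j => by have := hvq j.succ; rw [hsplit, hvz j] at this; linarith)
    · exact IH {a : ι // a ≠ i'} inferInstance inferInstance (fun i => ν i.val) (fun i => hν i.val) ⟨i₀, hi⟩
        (fun i hii => hν1 i.val (fun e => hii (Subtype.ext e)))
        hcard' (fun j i => v j.succ i.val) (fun i => p i.val) (fun i => q i.val)
        (fun j => by have := hv j.succ; rw [hsplit, hvz j] at this; linarith)
        (fun j l hjl => by
          have := hvo j.succ l.succ (fun e => hjl (Fin.succ_injective _ e))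
          rw [hsplit, hvz j] at this; linarith)
        (by rw [hsplit, hpz] at hp; linarith)
        (by rw [hsplit, hqz] at hq; linarith)
        (by rw [hsplit, hpz] at hpq; linarith)
        (fun j => by have := hvp j.succ; rw [hsplit, hvz j] at this; linarith)
        (fun j => by have := hvq j.succ; rw [hsplit, hvz j] at this; linarith)


lemma key (m : ℕ) (L : Matrix (Fin (m+1)) (Fin (m+1)) ℤ) (hL : IsPDForm L)
    (T : Matrix (Fin (m+1)) (Fin m) ℤ) (hT : Tᵀ * L * T = 1) :
    ∃ c : ℤ, 0 < c ∧ ∃ a : (Fin (m+1) → ℤ) → (Fin m → ℤ), ∃ b : (Fin (m+1) → ℤ) → ℤ,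
      ∀ x y : Fin (m+1) → ℤ, x ⬝ᵥ L.mulVec y = a x ⬝ᵥ a y + c * (b x * b y) := by
  classical
  set A : Matrix (Fin m) (Fin (m+1)) ℤ := Tᵀ * L with hA
  have hAT : A * T = 1 := hT
  -- symmetry of the bilinear form
  have hsymm : ∀ u v : Fin (m+1) → ℤ, u ⬝ᵥ L.mulVec v = v ⬝ᵥ L.mulVec u := by
    intro u v
    rw [Matrix.dotProduct_mulVec, ← Matrix.mulVec_transpose, dotProduct_comm, hL.1]
  -- a nonzero kernel vector of A
  have hker : ∃ w : Fin (m+1) → ℤ, w ≠ 0 ∧ A.mulVec w = 0 := by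
    set A' : Matrix (Fin (m+1)) (Fin (m+1)) ℤ :=
      fun i j => if h : (i : ℕ) < m then A ⟨i.1, h⟩ j else 0 with hA'
    have hdet : A'.det = 0 := by
      apply Matrix.det_eq_zero_of_row_eq_zero (Fin.last m)
      intro j
      simp [hA']
    obtain ⟨w, hw0, hwk⟩ := Matrix.exists_mulVec_eq_zero_iff.mpr hdet
    refine ⟨w, hw0, ?_⟩
    funext j
    have := congrFun hwk (Fin.castSucc j)
    simpa [hA', Matrix.mulVec, dotProduct, j.isLt] using this
  obtain ⟨w, hw0, hAw⟩ := hker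
  obtain ⟨i0, hi0⟩ := Function.ne_iff.mp hw0
  simp only [Pi.zero_apply] at hi0
  -- proportionality: every kernel vector is proportional to w
  have hprop : ∀ r : Fin (m+1) → ℤ, A.mulVec r = 0 → ∀ i, w i0 * r i = r i0 * w i := by
    intro r hr
    set x : Fin (m+1) → ℤ := fun i => w i0 * r i - r i0 * w i with hxdef
    have hx : A.mulVec x = 0 := by
      have : x = w i0 • r - r i0 • w := by funext i; simp [hxdef, smul_eq_mul]
      rw [this, Matrix.mulVec_sub, Matrix.mulVec_smul, Matrix.mulVec_smul, hr, hAw]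
      simp
    have hxi0 : x i0 = 0 := by simp [hxdef]; ring
    have hx0 : x = 0 := by
      by_contra hxne
      set B' : Matrix (Fin (m+1)) (Fin (m+1)) ℤ :=
        fun i j => if h : (i : ℕ) < m then A ⟨i.1, h⟩ j else (if j = i0 then 1 else 0) with hB'
      have hB'x : B'.mulVec x = 0 := by
        funext i
        by_cases h : (i : ℕ) < m
        · have := congrFun hx ⟨i.1, h⟩
          simpa [hB', Matrix.mulVec, dotProduct, h] using this
        · simp only [hB', Matrix.mulVec, dotProduct, dif_neg h, Pi.zero_apply]
          rw [Finset.sum_eq_single i0 (fun b _ hb => by simp [hb]) (by simp)]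
          simpa using hxi0
      have hdetB : B'.det = 0 := Matrix.exists_mulVec_eq_zero_iff.mp ⟨x, hxne, hB'x⟩
      obtain ⟨u, hu0, huk⟩ := Matrix.exists_vecMul_eq_zero_iff.mpr hdetB
      -- B' * w  computed
      have hB'w : B'.mulVec w = fun i : Fin (m+1) => if (i : ℕ) < m then (0:ℤ) else w i0 := by
        funext i
        by_cases h : (i : ℕ) < m
        · have := congrFun hAw ⟨i.1, h⟩
          simpa [hB', Matrix.mulVec, dotProduct, h] using this
        · simp only [hB', Matrix.mulVec, dotProduct, dif_neg h, if_neg h]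
          rw [Finset.sum_eq_single i0 (fun b _ hb => by simp [hb]) (by simp)]
          simp
      -- t = 0
      have ht : u (Fin.last m) = 0 := by
        have h1 : u ⬝ᵥ B'.mulVec w = 0 := by
          rw [Matrix.dotProduct_mulVec, huk, zero_dotProduct]
        rw [hB'w] at h1
        simp only [dotProduct] at h1
        rw [Fin.sum_univ_castSucc] at h1
        simp only [Fin.coe_castSucc, Fin.is_lt, if_true, mul_zero, Finset.sum_const_zero,
          Fin.val_last, lt_irrefl, if_false, zero_add] at h1
        rcases mul_eq_zero.mp h1 with h | h
        · exact h
        · exact absurd h hi0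
      -- u' ᵥ* A = 0 hence u' = 0
      have hu' : (fun i => u (Fin.castSucc i)) ᵥ* A = 0 := by
        funext j
        have := congrFun huk j
        simp only [Matrix.vecMul, dotProduct, hB'] at this
        rw [Fin.sum_univ_castSucc] at this
        simp only [Fin.coe_castSucc, Fin.is_lt, dif_pos, Fin.val_last, lt_irrefl,
          dif_neg, not_false_iff] at this
        simp only [ht, zero_mul, add_zero] at this
        simpa [Matrix.vecMul, dotProduct, Fin.eta] using this
      have hu'' : (fun i => u (Fin.castSucc i)) = 0 := by
        have h2 : ((fun i => u (Fin.castSucc i)) ᵥ* A) ᵥ* T = 0 := by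
          rw [hu', Matrix.zero_vecMul]
        rw [Matrix.vecMul_vecMul, hAT, Matrix.vecMul_one] at h2
        exact h2
      apply hu0
      funext i
      induction i using Fin.lastCases with
      | last => simpa using ht
      | cast j => simpa using congrFun hu'' j
    intro i
    have := congrFun hx0 i
    simp only [hxdef, Pi.zero_apply] at this
    linarith
  -- minimal norm kernel vector
  have hP : ∃ k : ℕ, ∃ v : Fin (m+1) → ℤ, v ≠ 0 ∧ A.mulVec v = 0 ∧ v ⬝ᵥ L.mulVec v = (k : ℤ) := by
    refine ⟨(w ⬝ᵥ L.mulVec w).toNat, w, hw0, hAw, ?_⟩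
    rw [Int.toNat_of_nonneg (le_of_lt (hL.2 w hw0))]
  obtain ⟨w₀, hw₀0, hAw₀, hw₀n⟩ := Nat.find_spec hP
  set k0 : ℕ := Nat.find hP with hk0
  have hmin : ∀ v : Fin (m+1) → ℤ, v ≠ 0 → A.mulVec v = 0 →
      (k0 : ℤ) ≤ v ⬝ᵥ L.mulVec v := by
    intro v hv0 hvk
    have hpos : 0 < v ⬝ᵥ L.mulVec v := hL.2 v hv0
    have : k0 ≤ (v ⬝ᵥ L.mulVec v).toNat := by
      apply Nat.find_min' hP
      refine ⟨v, hv0, hvk, ?_⟩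
      rw [Int.toNat_of_nonneg (le_of_lt hpos)]
    omega
  have hc : 0 < (k0 : ℤ) := by rw [← hw₀n]; exact hL.2 w₀ hw₀0
  -- w₀ i0 ≠ 0
  have hw₀i0 : w₀ i0 ≠ 0 := by
    intro h0
    apply hw₀0
    funext i
    have h1 := hprop w₀ hAw₀ i
    rw [h0, zero_mul] at h1
    rcases mul_eq_zero.mp h1 with h | h
    · exact absurd h hi0
    · simpa using h
  -- proportionality to w₀
  have hprop₀ : ∀ r : Fin (m+1) → ℤ, A.mulVec r = 0 → ∀ i, w₀ i0 * r i = r i0 * w₀ i := by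
    intro r hr i
    have h1 := hprop r hr i
    have h2 := hprop w₀ hAw₀ i
    apply mul_left_cancel₀ hi0
    calc w i0 * (w₀ i0 * r i) = w₀ i0 * (w i0 * r i) := by ring
    _ = w₀ i0 * (r i0 * w i) := by rw [h1]
    _ = r i0 * (w i0 * w₀ i) := by rw [h2]; ring
    _ = w i0 * (r i0 * w₀ i) := by ring
  -- every kernel vector is an integer multiple of w₀
  have hgen : ∀ r : Fin (m+1) → ℤ, A.mulVec r = 0 → ∃ t : ℤ, r = t • w₀ := by
    intro r hr
    set a : ℤ := w₀ i0 with ha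
    set b : ℤ := r i0 with hb
    set q : ℤ := b / a with hq
    set s : ℤ := b % a with hs
    have hsnn : 0 ≤ s := Int.emod_nonneg b hw₀i0
    have hslt : s < |a| := Int.emod_lt_abs b hw₀i0
    have hbqs : b = a * q + s := by rw [hq, hs]; exact (Int.mul_ediv_add_emod b a).symm
    set r' : Fin (m+1) → ℤ := r - q • w₀ with hr'
    have hAr' : A.mulVec r' = 0 := by
      rw [hr', Matrix.mulVec_sub, Matrix.mulVec_smul, hr, hAw₀]
      simp
    have har' : ∀ i, a * r' i = s * w₀ i := by
      intro i
      have := hprop₀ r hr i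
      simp only [hr', Pi.sub_apply, Pi.smul_apply, smul_eq_mul]
      calc a * (r i - q * w₀ i) = w₀ i0 * r i - a * q * w₀ i := by rw [ha]; ring
      _ = b * w₀ i - a * q * w₀ i := by rw [this, hb]
      _ = s * w₀ i := by rw [hbqs]; ring
    by_cases hr'0 : r' = 0
    · refine ⟨q, ?_⟩
      have : r - q • w₀ = 0 := hr'0
      funext i
      have := congrFun this i
      simp only [Pi.sub_apply, Pi.smul_apply, smul_eq_mul, Pi.zero_apply] at this ⊢
      linarith
    · exfalso
      have hge : (k0 : ℤ) ≤ r' ⬝ᵥ L.mulVec r' := hmin r' hr'0 hAr'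
      -- a² ⬝ norm r' = s² ⬝ norm w₀
      have hsc : ∀ (t : ℤ) (v : Fin (m+1) → ℤ),
          (t • v) ⬝ᵥ L.mulVec (t • v) = t^2 * (v ⬝ᵥ L.mulVec v) := by
        intro t v
        rw [Matrix.mulVec_smul, dotProduct_smul, smul_dotProduct, smul_eq_mul, smul_eq_mul, sq]
        ring
      have hkey : a^2 * (r' ⬝ᵥ L.mulVec r') = s^2 * (k0 : ℤ) := by
        have h1 : (a • r') ⬝ᵥ L.mulVec (a • r') = (s • w₀) ⬝ᵥ L.mulVec (s • w₀) := by
          have : a • r' = s • w₀ := by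
            funext i
            simpa [smul_eq_mul] using har' i
          rw [this]
        rw [hsc, hsc, hw₀n] at h1
        exact h1
      have hs2 : s^2 < a^2 := by
        have := sq_abs a
        nlinarith
      nlinarith
  -- the decomposition maps
  have hkerx : ∀ x : Fin (m+1) → ℤ, A.mulVec (x - T.mulVec (A.mulVec x)) = 0 := by
    intro x
    rw [Matrix.mulVec_sub, Matrix.mulVec_mulVec, hAT, Matrix.one_mulVec, sub_self]
  refine ⟨(k0 : ℤ), hc, fun x => A.mulVec x,
    fun x => Classical.choose (hgen _ (hkerx x)), ?_⟩
  intro x y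
  have hx := Classical.choose_spec (hgen _ (hkerx x))
  have hy := Classical.choose_spec (hgen _ (hkerx y))
  set bx := Classical.choose (hgen _ (hkerx x)) with hbx
  set by' := Classical.choose (hgen _ (hkerx y)) with hby
  have hxd : x = T.mulVec (A.mulVec x) + bx • w₀ := by
    rw [← hx]; ring_nf
  have hyd : y = T.mulVec (A.mulVec y) + by' • w₀ := by
    rw [← hy]; ring_nf
  -- inner product computations
  have hTdot : ∀ (u : Fin m → ℤ) (z : Fin (m+1) → ℤ),
      (T.mulVec u) ⬝ᵥ z = u ⬝ᵥ (Tᵀ.mulVec z) := by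
    intro u z
    rw [Matrix.dotProduct_mulVec, Matrix.vecMul_transpose]
  have hTT : ∀ u v : Fin m → ℤ, (T.mulVec u) ⬝ᵥ L.mulVec (T.mulVec v) = u ⬝ᵥ v := by
    intro u v
    rw [hTdot, Matrix.mulVec_mulVec, Matrix.mulVec_mulVec, hT,
      Matrix.one_mulVec]
  have hTw : ∀ u : Fin m → ℤ, (T.mulVec u) ⬝ᵥ L.mulVec w₀ = 0 := by
    intro u
    rw [hTdot, Matrix.mulVec_mulVec, ← hA, hAw₀, dotProduct_zero]
  have e3 : w₀ ⬝ᵥ L.mulVec (T.mulVec (A.mulVec y)) = 0 := by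
    rw [hsymm]; exact hTw _
  conv_lhs => rw [hxd, hyd]
  simp only [Matrix.mulVec_add, Matrix.mulVec_smul, dotProduct_add, add_dotProduct,
    dotProduct_smul, smul_dotProduct, smul_eq_mul, hTT, hTw, e3, hw₀n, mul_zero, add_zero,
    zero_add]
  ring
lemma gram_entry_s2 {n m : ℕ} (L : Matrix (Fin n) (Fin n) ℤ) (S : Matrix (Fin n) (Fin m) ℤ)
    (j k : Fin m) :
    (Sᵀ * L * S) j k = (fun i => S i j) ⬝ᵥ L.mulVec (fun i => S i k) := by
  simp only [Matrix.mul_apply, Matrix.transpose_apply, dotProduct, Matrix.mulVec,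
    Finset.sum_mul, Finset.mul_sum]
  rw [Finset.sum_comm]
  apply Finset.sum_congr rfl
  intro l _
  apply Finset.sum_congr rfl
  intro i _
  ring

lemma arithA (c α β γ δ : ℤ) (hc : 0 < c) (h2 : α*α + c*(β*β) = 2)
    (h15 : γ*γ + c*(δ*δ) = 15) : False := by
  have hmul : ∀ t : ℤ, 0 ≤ t * t := fun t => mul_self_nonneg t
  rcases le_or_gt c 2 with h | h
  · have hγ : γ*γ ≤ 15 := by nlinarith [hmul δ]
    have hδ : δ*δ ≤ 15 := by nlinarith [hmul γ]
    have B : ∀ t : ℤ, t*t ≤ 15 → -3 ≤ t ∧ t ≤ 3 := by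
      intro t ht
      constructor <;> nlinarith
    obtain ⟨l1, u1⟩ := B _ hγ
    obtain ⟨l2, u2⟩ := B _ hδ
    have hα : α*α ≤ 2 := by nlinarith [hmul β]
    have hβ' : β*β ≤ 2 := by nlinarith [hmul α]
    have B2 : ∀ t : ℤ, t*t ≤ 2 → -1 ≤ t ∧ t ≤ 1 := by
      intro t ht
      constructor <;> nlinarith
    obtain ⟨l3, u3⟩ := B2 _ hα
    obtain ⟨l4, u4⟩ := B2 _ hβ'
    interval_cases c <;> interval_cases α <;> interval_cases β <;>
      interval_cases γ <;> interval_cases δ <;> omega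
  · have hβ : β = 0 := by
      by_contra hb
      have h1 := one_le_sq β hb
      nlinarith [hmul α]
    rw [hβ] at h2
    have h2' : α*α = 2 := by linarith [h2]
    have : -2 ≤ α ∧ α ≤ 2 := by constructor <;> nlinarith
    obtain ⟨l, u⟩ := this
    interval_cases α <;> omega

/-- (a) No positive definite integral binary form represents 1, 2 and 15.
(b) For m ≥ 2, no positive definite integral form of rank m+1 represents both
I_m and I_{m-2} ⊥ ⟨3⟩ ⊥ ⟨3⟩. -/
theorem kappa_one_two_and_m_m_plus_one :
    (¬ ∃ M : Matrix (Fin 2) (Fin 2) ℤ, IsPDForm M ∧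
        RepresentsInt M 1 ∧ RepresentsInt M 2 ∧ RepresentsInt M 15) ∧
    (∀ m : ℕ, 2 ≤ m →
      ¬ ∃ L : Matrix (Fin (m + 1)) (Fin (m + 1)) ℤ, IsPDForm L ∧
          Represents L (1 : Matrix (Fin m) (Fin m) ℤ) ∧
          Represents L
            (Matrix.diagonal fun i : Fin m => if (i : ℕ) < m - 2 then (1 : ℤ) else 3)) := by
  constructor
  · rintro ⟨M, hM, ⟨x, hx⟩, ⟨y, hy⟩, ⟨z, hz⟩⟩
    set T : Matrix (Fin 2) (Fin 1) ℤ := fun i _ => x i with hTdef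
    have hT : Tᵀ * M * T = 1 := by
      ext i j
      obtain rfl : i = j := Subsingleton.elim i j
      rw [gram_entry_s2, Matrix.one_apply_eq]
      exact hx
    obtain ⟨c, hc, a, b, hid⟩ := key 1 M hM T hT
    have h2 : a y 0 * a y 0 + c * (b y * b y) = 2 := by
      have h := hid y y
      rw [hy] at h
      simpa [dotProduct, Fin.sum_univ_one] using h.symm
    have h15 : a z 0 * a z 0 + c * (b z * b z) = 15 := by
      have h := hid z z
      rw [hz] at h
      simpa [dotProduct, Fin.sum_univ_one] using h.symm
    exact arithA c _ _ _ _ hc h2 h15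
  · intro m hm
    rintro ⟨L, hL, ⟨T, hT⟩, ⟨S, hS⟩⟩
    obtain ⟨c, hc, a, b, hid⟩ := key m L hL T hT
    set s : Fin m → Fin (m+1) → ℤ := fun k i => S i k with hsdef
    have hGram : ∀ j k : Fin m, a (s j) ⬝ᵥ a (s k) + c * (b (s j) * b (s k)) =
        Matrix.diagonal (fun i : Fin m => if (i:ℕ) < m - 2 then (1:ℤ) else 3) j k := by
      intro j k
      rw [← hid, ← hS, gram_entry_s2]
    set ν : Fin m ⊕ Unit → ℤ := Sum.elim (fun _ => 1) (fun _ => c) with hν'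
    set V : Fin m → Fin m ⊕ Unit → ℤ :=
      fun k => Sum.elim (a (s k)) (fun _ => b (s k)) with hV'
    have hinner : ∀ j k : Fin m, ∑ i : Fin m ⊕ Unit, ν i * V j i * V k i
        = a (s j) ⬝ᵥ a (s k) + c * (b (s j) * b (s k)) := by
      intro j k
      rw [Fintype.sum_sum_type]
      simp only [hν', hV', Sum.elim_inl, Sum.elim_inr, one_mul, dotProduct,
        Finset.univ_unique, Finset.sum_singleton]
      ring
    have hν : ∀ i : Fin m ⊕ Unit, 1 ≤ ν i := by
      rintro (i | i)
      · simp [hν']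
      · simp [hν']
        omega
    have hν1 : ∀ i : Fin m ⊕ Unit, i ≠ Sum.inr () → ν i = 1 := by
      rintro (i | i) h
      · rfl
      · exact absurd rfl h
    have hcard : Fintype.card (Fin m ⊕ Unit) = (m - 2) + 3 := by
      simp only [Fintype.card_sum, Fintype.card_fin, Fintype.card_unit]
      omega
    set pm : Fin m := ⟨m - 2, by omega⟩ with hpm'
    set qm : Fin m := ⟨m - 1, by omega⟩ with hqm'
    have hd : ∀ j : Fin m, Matrix.diagonal
        (fun i : Fin m => if (i:ℕ) < m - 2 then (1:ℤ) else 3) j j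
        = if (j:ℕ) < m - 2 then (1:ℤ) else 3 := fun j => Matrix.diagonal_apply_eq _ j
    have hdne : ∀ j k : Fin m, j ≠ k → Matrix.diagonal
        (fun i : Fin m => if (i:ℕ) < m - 2 then (1:ℤ) else 3) j k = 0 :=
      fun j k h => Matrix.diagonal_apply_ne _ h
    apply comb (m - 2) (Fin m ⊕ Unit) inferInstance inferInstance ν hν (Sum.inr ()) hν1 hcard
      (fun j => V ⟨j.1, by omega⟩) (V pm) (V qm)
    · intro j
      rw [hinner, hGram, hd]
      exact if_pos j.2
    · intro j l hjl
      rw [hinner, hGram]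
      apply hdne
      intro e
      exact hjl (Fin.ext (by simpa [Fin.ext_iff] using e))
    · rw [hinner, hGram, hd, hpm']
      simp
    · rw [hinner, hGram, hd, hqm']
      have : ¬ (m - 1 < m - 2) := by omega
      simp [this]
    · rw [hinner, hGram]
      apply hdne
      simp [hpm', hqm', Fin.ext_iff]
      omega
    · intro j
      rw [hinner, hGram]
      apply hdne
      simp [hpm', Fin.ext_iff]
      omega
    · intro j
      rw [hinner, hGram]
      apply hdne
      simp [hqm', Fin.ext_iff]
      omega
end

section
/- Let a and b be positive integers that lie in different square classes, i.e. a·b is not a perfect square. Then the set of positive integers c such that no positive definite integral binary quadratic form represents all three of a, b, and c is infinite. -/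
open Matrix

lemma aux_castdown {n d q : ℕ} (hd : d ∣ n) (h : (q : ZMod n) = -1) :
    (q : ZMod d) = -1 := by
  have := congrArg (ZMod.castHom hd (ZMod d)) h
  rwa [map_natCast, map_neg, _root_.map_one] at this

/-- If `q ≡ -1 mod 8*D`, then `-D` is a nonresidue mod `q`. -/
lemma aux_nonsquare (D q : ℕ) (hD : 0 < D) (hq : q.Prime)
    (h : (q : ZMod (8 * D)) = -1) : ¬ IsSquare ((-(D : ℤ) : ZMod q)) := by
  haveI : Fact q.Prime := ⟨hq⟩
  rw [show ((-(D:ℤ) : ZMod q)) = (((-(D:ℤ) : ℤ) : ZMod q)) by push_cast; ring]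
  rw [← ZMod.nonsquare_iff_jacobiSym_eq_neg_one]
  have h8 : (q : ZMod 8) = -1 := aux_castdown (Dvd.intro D rfl) h
  have hq8 : q % 8 = 7 := by
    have : (q : ZMod 8).val = (-1 : ZMod 8).val := by rw [h8]
    simpa [ZMod.val_natCast] using this
  have hq4 : q % 4 = 3 := by omega
  have hqodd : Odd q := Nat.odd_iff.mpr (by omega)
  set e := D.factorization 2 with he
  set m := D / 2 ^ e with hm
  have hDm : 2 ^ e * m = D := Nat.ordProj_mul_ordCompl_eq_self D 2
  have hmodd : Odd m := Nat.odd_iff.mpr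
    (Nat.two_dvd_ne_zero.mp (Nat.not_dvd_ordCompl Nat.prime_two hD.ne'))
  have hmdvd : m ∣ 8 * D := (Nat.ordCompl_dvd D 2).trans (dvd_mul_left D 8)
  have hqm : ((q : ℤ) % m = (-1 : ℤ) % m) := by
    have h' : ((q : ℤ) : ZMod m) = ((-1 : ℤ) : ZMod m) := by
      push_cast
      exact aux_castdown hmdvd h
    exact (ZMod.intCast_eq_intCast_iff' _ _ _).mp h'
  have hJqm : jacobiSym (q : ℤ) m = ZMod.χ₄ m := by
    rw [jacobiSym.mod_left, hqm, ← jacobiSym.mod_left]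
    exact jacobiSym.at_neg_one hmodd
  have hJm : jacobiSym (m : ℤ) q = 1 := by
    rcases Nat.odd_mod_four_iff.mp (Nat.odd_iff.mp hmodd) with h1 | h3
    · rw [jacobiSym.quadratic_reciprocity_one_mod_four h1 hqodd, hJqm,
        ZMod.χ₄_nat_one_mod_four h1]
    · rw [jacobiSym.quadratic_reciprocity_three_mod_four h3 hq4, hJqm,
        ZMod.χ₄_nat_three_mod_four h3]
      ring
  have hχ₈ : ZMod.χ₈ q = 1 := by
    rw [ZMod.χ₈_nat_eq_if_mod_eight]
    simp [hq8, Nat.odd_iff.mp hqodd]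
  calc jacobiSym (-(D:ℤ)) q = ZMod.χ₄ q * jacobiSym (D : ℤ) q := jacobiSym.neg _ hqodd
  _ = -1 := by
      rw [ZMod.χ₄_nat_three_mod_four hq4, ← hDm]
      push_cast
      rw [jacobiSym.mul_left, jacobiSym.pow_left, jacobiSym.at_two hqodd, hχ₈, hJm]
      ring

lemma aux_expand (M : Matrix (Fin 2) (Fin 2) ℤ) (z w : Fin 2 → ℤ) :
    z ⬝ᵥ M.mulVec w =
      z 0 * (M 0 0 * w 0 + M 0 1 * w 1) + z 1 * (M 1 0 * w 0 + M 1 1 * w 1) := by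
  simp [dotProduct, Matrix.mulVec, Fin.sum_univ_two]

/-- If `-det M` is a nonresidue mod `q`, values of `M` divisible by `q` have both coords
divisible by `q`. -/
lemma aux_coords (M : Matrix (Fin 2) (Fin 2) ℤ) (hsymm : M.IsSymm) (q : ℕ) (hq : q.Prime)
    (hns : ¬ IsSquare ((-M.det : ℤ) : ZMod q)) (z : Fin 2 → ℤ)
    (hdvd : (q : ℤ) ∣ z ⬝ᵥ M.mulVec z) : (q : ℤ) ∣ z 0 ∧ (q : ℤ) ∣ z 1 := by
  haveI : Fact q.Prime := ⟨hq⟩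
  have hB : M 1 0 = M 0 1 := by
    conv_lhs => rw [← hsymm]
    rfl
  set A : ZMod q := ((M 0 0 : ℤ) : ZMod q) with hA
  set B : ZMod q := ((M 0 1 : ℤ) : ZMod q) with hB'
  set C : ZMod q := ((M 1 1 : ℤ) : ZMod q) with hC
  set z0 : ZMod q := ((z 0 : ℤ) : ZMod q) with hz0
  set z1 : ZMod q := ((z 1 : ℤ) : ZMod q) with hz1
  have hdetc : ((-M.det : ℤ) : ZMod q) = -(A * C - B * B) := by
    rw [Matrix.det_fin_two, hB]; push_cast; ring
  have heq : A * z0 ^ 2 + 2 * B * z0 * z1 + C * z1 ^ 2 = 0 := by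
    have h0 : ((z ⬝ᵥ M.mulVec z : ℤ) : ZMod q) = 0 :=
      (ZMod.intCast_zmod_eq_zero_iff_dvd _ _).mpr hdvd
    rw [aux_expand, hB] at h0
    push_cast at h0
    rw [← h0]; ring
  have hAne : A ≠ 0 := by
    intro h0
    exact hns ⟨B, by rw [hdetc, h0]; ring⟩
  have hz1' : z1 = 0 := by
    by_contra hne
    refine hns ⟨(A * z0 + B * z1) * z1⁻¹, ?_⟩
    rw [hdetc]
    field_simp
    linear_combination (-A) * heq
  have hz0' : z0 = 0 := by
    have : A * z0 ^ 2 = 0 := by rw [← heq, hz1']; ring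
    rcases mul_eq_zero.mp this with h | h
    · exact absurd h hAne
    · exact pow_eq_zero_iff (by norm_num) |>.mp h
  constructor
  · exact (ZMod.intCast_zmod_eq_zero_iff_dvd _ _).mp hz0'
  · exact (ZMod.intCast_zmod_eq_zero_iff_dvd _ _).mp hz1'

lemma aux_det_pos (M : Matrix (Fin 2) (Fin 2) ℤ) (hpd : IsPDForm M) : 0 < M.det := by
  have hB : M 1 0 = M 0 1 := by
    conv_lhs => rw [← hpd.1]
    rfl
  have hApos : 0 < M 0 0 := by
    have := hpd.2 ![1, 0] (by intro h; simpa using congrFun h 0)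
    rw [aux_expand] at this
    simpa using this
  have h2 : 0 < M 0 0 * M.det := by
    have := hpd.2 ![M 0 1, -(M 0 0)] (by
      intro h
      have := congrFun h 1
      simp at this
      omega)
    rw [aux_expand, hB] at this
    simp only [Matrix.cons_val_zero, Matrix.cons_val_one, Matrix.head_cons] at this
    rw [Matrix.det_fin_two, hB]
    nlinarith [this]
  nlinarith [hApos, h2]

/-- If positive integers a, b lie in different square classes, then infinitely many
positive integers c admit no binary form representing a, b, c simultaneously. -/
theorem infinitely_many_c_not_buried (a b : ℕ) (ha : 0 < a) (hb : 0 < b)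
    (hsq : ¬ IsSquare (a * b)) :
    {c : ℕ | 0 < c ∧ ¬ ∃ M : Matrix (Fin 2) (Fin 2) ℤ, IsPDForm M ∧
        RepresentsInt M (a : ℤ) ∧ RepresentsInt M (b : ℤ) ∧
        RepresentsInt M (c : ℤ)}.Infinite := by
  set n := 8 * (a * b).factorial with hn
  haveI : NeZero n := ⟨by positivity⟩
  obtain ⟨q, hqgt, hqp, hqmod⟩ :=
    Nat.forall_exists_prime_gt_and_eq_mod (q := n) (a := (-1 : ZMod n)) isUnit_one.neg 1
  apply Set.infinite_of_injective_forall_mem (f := fun k : ℕ => q ^ (2 * k + 1))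
  · intro k k' h
    have := Nat.pow_right_injective hqp.two_le h
    omega
  · intro k
    refine ⟨pow_pos hqp.pos _, ?_⟩
    rintro ⟨M, hpd, ⟨x, hx⟩, ⟨y, hy⟩, ⟨z, hz⟩⟩
    have hdetpos := aux_det_pos M hpd
    have hB : M 1 0 = M 0 1 := by
      conv_lhs => rw [← hpd.1]
      rfl
    set t : ℤ := x ⬝ᵥ M.mulVec y with ht
    set d : ℤ := x 0 * y 1 - x 1 * y 0 with hd
    have hid : (a : ℤ) * (b : ℤ) - t ^ 2 = M.det * d ^ 2 := by
      rw [← hx, ← hy, ht, hd, aux_expand M x x, aux_expand M y y, aux_expand M x y,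
        Matrix.det_fin_two, hB]
      ring
    have hdne : d ≠ 0 := by
      intro h0
      apply hsq
      rw [← Int.isSquare_natCast_iff]
      refine ⟨t, ?_⟩
      have : (a : ℤ) * (b : ℤ) = t ^ 2 := by
        rw [h0] at hid; nlinarith [hid]
      push_cast
      rw [this]; ring
    have hd2 : 1 ≤ d ^ 2 := by
      have h1 := Int.one_le_abs (by simpa using hdne)
      nlinarith [h1, sq_abs d, abs_nonneg d]
    have hdetle : M.det ≤ (a : ℤ) * b := by nlinarith [sq_nonneg t, hid, hd2, hdetpos]
    set D := M.det.toNat with hDdef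
    have hDcast : (D : ℤ) = M.det := Int.toNat_of_nonneg hdetpos.le
    have hDpos : 0 < D := by omega
    have hDle : D ≤ a * b := by
      have : (D : ℤ) ≤ ((a * b : ℕ) : ℤ) := by push_cast; omega
      exact_mod_cast this
    have hq8D : (q : ZMod (8 * D)) = -1 :=
      aux_castdown (mul_dvd_mul_left 8 (Nat.dvd_factorial hDpos hDle)) hqmod
    have hns : ¬ IsSquare ((-M.det : ℤ) : ZMod q) := by
      have := aux_nonsquare D q hDpos hqp hq8D
      rw [← hDcast]
      convert this using 2
      push_cast
      ring
    have key : ∀ m : ℕ, ∀ w : Fin 2 → ℤ, w ⬝ᵥ M.mulVec w ≠ (q : ℤ) ^ (2 * m + 1) := by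
      intro m
      induction m with
      | zero =>
        intro w hw
        obtain ⟨h0, h1⟩ := aux_coords M hpd.1 q hqp hns w
          (hw ▸ dvd_pow_self (q : ℤ) (by omega))
        obtain ⟨u0, hu0⟩ := h0
        obtain ⟨u1, hu1⟩ := h1
        have hexp : w ⬝ᵥ M.mulVec w =
            (q : ℤ) * ((q : ℤ) * (u0 * (M 0 0 * u0 + M 0 1 * u1)
              + u1 * (M 1 0 * u0 + M 1 1 * u1))) := by
          rw [aux_expand, hu0, hu1]; ring
        rw [hexp] at hw
        have hq0 : (q : ℤ) ≠ 0 := by exact_mod_cast hqp.pos.ne'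
        have h1' : (q : ℤ) * (u0 * (M 0 0 * u0 + M 0 1 * u1)
            + u1 * (M 1 0 * u0 + M 1 1 * u1)) = 1 := by
          apply mul_left_cancel₀ hq0
          rw [hw]; ring
        have : (q : ℤ) ∣ 1 := ⟨_, h1'.symm⟩
        have : q = 1 := by
          have := Int.eq_one_of_dvd_one (by positivity) this
          exact_mod_cast this
        omega
      | succ m ih =>
        intro w hw
        obtain ⟨h0, h1⟩ := aux_coords M hpd.1 q hqp hns w
          (hw ▸ dvd_pow_self (q : ℤ) (by omega))
        obtain ⟨u0, hu0⟩ := h0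
        obtain ⟨u1, hu1⟩ := h1
        apply ih ![u0, u1]
        have hq0 : (q : ℤ) ^ 2 ≠ 0 := by positivity
        apply mul_left_cancel₀ hq0
        have hexp : (q : ℤ) ^ 2 * (![u0, u1] ⬝ᵥ M.mulVec ![u0, u1]) = w ⬝ᵥ M.mulVec w := by
          rw [aux_expand, aux_expand, hu0, hu1]
          simp only [Matrix.cons_val_zero, Matrix.cons_val_one, Matrix.head_cons]
          ring
        rw [hexp, hw]
        ring
    apply key k z
    rw [hz]
    push_cast
    ring
end

section
/- There is no positive definite integral ternary quadratic form that represents all seven integers 1, 2, 3, 5, 10, 14, and 15. (Combined with the representability of any six positive integers by one ternary form, this gives κ(1,3) = 6.) -/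
open Matrix

def Fv (a b c t s : ℤ) : ℤ := a*t*t + 2*b*t*s + c*s*s

lemma abs_le_of_sq_le {x k : ℤ} (h0 : 0 ≤ k) (h : x*x ≤ k*k + 2*k) : -k ≤ x ∧ x ≤ k := by
  constructor <;> nlinarith [sq_nonneg (x-k), sq_nonneg (x+k), mul_self_nonneg (x-k-1), mul_self_nonneg (x+k+1)]

set_option maxHeartbeats 1000000 in
lemma case101_15 (t s u : ℤ) (h : t*t + Fv 1 0 1 s u = 15) : False := by
  simp only [Fv] at h
  have h1 : t*t ≤ 3*3+2*3 := by nlinarith [sq_nonneg s, sq_nonneg u]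
  have h2 : s*s ≤ 3*3+2*3 := by nlinarith [sq_nonneg t, sq_nonneg u]
  have h3 : u*u ≤ 3*3+2*3 := by nlinarith [sq_nonneg t, sq_nonneg s]
  obtain ⟨ht1, ht2⟩ := abs_le_of_sq_le (by norm_num) h1
  obtain ⟨hs1, hs2⟩ := abs_le_of_sq_le (by norm_num) h2
  obtain ⟨hu1, hu2⟩ := abs_le_of_sq_le (by norm_num) h3
  interval_cases t <;> interval_cases s <;> interval_cases u <;> omega

set_option maxHeartbeats 1000000 in
lemma case102_14 (t s u : ℤ) (h : t*t + Fv 1 0 2 s u = 14) : False := by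
  simp only [Fv] at h
  have h1 : t*t ≤ 3*3+2*3 := by nlinarith [sq_nonneg s, sq_nonneg u]
  have h2 : s*s ≤ 3*3+2*3 := by nlinarith [sq_nonneg t, sq_nonneg u]
  have h3 : u*u ≤ 2*2+2*2 := by nlinarith [sq_nonneg t, sq_nonneg s]
  obtain ⟨ht1, ht2⟩ := abs_le_of_sq_le (by norm_num) h1
  obtain ⟨hs1, hs2⟩ := abs_le_of_sq_le (by norm_num) h2
  obtain ⟨hu1, hu2⟩ := abs_le_of_sq_le (by norm_num) h3
  interval_cases t <;> interval_cases s <;> interval_cases u <;> omega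

set_option maxHeartbeats 1000000 in
lemma case103_15 (t s u : ℤ) (h : t*t + Fv 1 0 3 s u = 15) : False := by
  simp only [Fv] at h
  have h1 : t*t ≤ 3*3+2*3 := by nlinarith [sq_nonneg s, sq_nonneg u]
  have h2 : s*s ≤ 3*3+2*3 := by nlinarith [sq_nonneg t, sq_nonneg u]
  have h3 : u*u ≤ 2*2+2*2 := by nlinarith [sq_nonneg t, sq_nonneg s]
  obtain ⟨ht1, ht2⟩ := abs_le_of_sq_le (by norm_num) h1
  obtain ⟨hs1, hs2⟩ := abs_le_of_sq_le (by norm_num) h2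
  obtain ⟨hu1, hu2⟩ := abs_le_of_sq_le (by norm_num) h3
  interval_cases t <;> interval_cases s <;> interval_cases u <;> omega

set_option maxHeartbeats 1000000 in
lemma case202_15 (t s u : ℤ) (h : t*t + Fv 2 0 2 s u = 15) : False := by
  simp only [Fv] at h
  have h1 : t*t ≤ 3*3+2*3 := by nlinarith [sq_nonneg s, sq_nonneg u]
  have h2 : s*s ≤ 2*2+2*2 := by nlinarith [sq_nonneg t, sq_nonneg u]
  have h3 : u*u ≤ 2*2+2*2 := by nlinarith [sq_nonneg t, sq_nonneg s]
  obtain ⟨ht1, ht2⟩ := abs_le_of_sq_le (by norm_num) h1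
  obtain ⟨hs1, hs2⟩ := abs_le_of_sq_le (by norm_num) h2
  obtain ⟨hu1, hu2⟩ := abs_le_of_sq_le (by norm_num) h3
  interval_cases t <;> interval_cases s <;> interval_cases u <;> omega

set_option maxHeartbeats 1000000 in
lemma case203_10 (t s u : ℤ) (h : t*t + Fv 2 0 3 s u = 10) : False := by
  simp only [Fv] at h
  have h1 : t*t ≤ 3*3+2*3 := by nlinarith [sq_nonneg s, sq_nonneg u]
  have h2 : s*s ≤ 2*2+2*2 := by nlinarith [sq_nonneg t, sq_nonneg u]
  have h3 : u*u ≤ 1*1+2*1 := by nlinarith [sq_nonneg t, sq_nonneg s]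
  obtain ⟨ht1, ht2⟩ := abs_le_of_sq_le (by norm_num) h1
  obtain ⟨hs1, hs2⟩ := abs_le_of_sq_le (by norm_num) h2
  obtain ⟨hu1, hu2⟩ := abs_le_of_sq_le (by norm_num) h3
  interval_cases t <;> interval_cases s <;> interval_cases u <;> omega

set_option maxHeartbeats 1000000 in
lemma case204_14 (t s u : ℤ) (h : t*t + Fv 2 0 4 s u = 14) : False := by
  simp only [Fv] at h
  have h1 : t*t ≤ 3*3+2*3 := by nlinarith [sq_nonneg s, sq_nonneg u]
  have h2 : s*s ≤ 2*2+2*2 := by nlinarith [sq_nonneg t, sq_nonneg u]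
  have h3 : u*u ≤ 1*1+2*1 := by nlinarith [sq_nonneg t, sq_nonneg s]
  obtain ⟨ht1, ht2⟩ := abs_le_of_sq_le (by norm_num) h1
  obtain ⟨hs1, hs2⟩ := abs_le_of_sq_le (by norm_num) h2
  obtain ⟨hu1, hu2⟩ := abs_le_of_sq_le (by norm_num) h3
  interval_cases t <;> interval_cases s <;> interval_cases u <;> omega

set_option maxHeartbeats 1000000 in
lemma case205_15 (t s u : ℤ) (h : t*t + Fv 2 0 5 s u = 15) : False := by
  simp only [Fv] at h
  have h1 : t*t ≤ 3*3+2*3 := by nlinarith [sq_nonneg s, sq_nonneg u]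
  have h2 : s*s ≤ 2*2+2*2 := by nlinarith [sq_nonneg t, sq_nonneg u]
  have h3 : u*u ≤ 1*1+2*1 := by nlinarith [sq_nonneg t, sq_nonneg s]
  obtain ⟨ht1, ht2⟩ := abs_le_of_sq_le (by norm_num) h1
  obtain ⟨hs1, hs2⟩ := abs_le_of_sq_le (by norm_num) h2
  obtain ⟨hu1, hu2⟩ := abs_le_of_sq_le (by norm_num) h3
  interval_cases t <;> interval_cases s <;> interval_cases u <;> omega

set_option maxHeartbeats 1000000 in
lemma case212_5 (t s u : ℤ) (h : t*t + Fv 2 1 2 s u = 5) : False := by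
  simp only [Fv] at h
  have h1 : t*t ≤ 2*2+2*2 := by nlinarith [sq_nonneg (s+u), sq_nonneg s, sq_nonneg u]
  have h2 : s*s ≤ 2*2+2*2 := by nlinarith [sq_nonneg (s+u), sq_nonneg t, sq_nonneg u]
  have h3 : u*u ≤ 2*2+2*2 := by nlinarith [sq_nonneg (s+u), sq_nonneg t, sq_nonneg s]
  obtain ⟨ht1, ht2⟩ := abs_le_of_sq_le (by norm_num) h1
  obtain ⟨hs1, hs2⟩ := abs_le_of_sq_le (by norm_num) h2
  obtain ⟨hu1, hu2⟩ := abs_le_of_sq_le (by norm_num) h3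
  interval_cases t <;> interval_cases s <;> interval_cases u <;> omega

set_option maxHeartbeats 1000000 in
lemma case213_5 (t s u : ℤ) (h : t*t + Fv 2 1 3 s u = 5) : False := by
  simp only [Fv] at h
  have h1 : t*t ≤ 2*2+2*2 := by nlinarith [sq_nonneg (s+u), sq_nonneg s, sq_nonneg u]
  have h2 : s*s ≤ 2*2+2*2 := by nlinarith [sq_nonneg (s+u), sq_nonneg t, sq_nonneg u]
  have h3 : u*u ≤ 1*1+2*1 := by nlinarith [sq_nonneg (s+u), sq_nonneg t, sq_nonneg s]
  obtain ⟨ht1, ht2⟩ := abs_le_of_sq_le (by norm_num) h1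
  obtain ⟨hs1, hs2⟩ := abs_le_of_sq_le (by norm_num) h2
  obtain ⟨hu1, hu2⟩ := abs_le_of_sq_le (by norm_num) h3
  interval_cases t <;> interval_cases s <;> interval_cases u <;> omega

set_option maxHeartbeats 1000000 in
lemma case214_10 (t s u : ℤ) (h : t*t + Fv 2 1 4 s u = 10) : False := by
  simp only [Fv] at h
  have h1 : t*t ≤ 3*3+2*3 := by nlinarith [sq_nonneg (s+u), sq_nonneg s, sq_nonneg u]
  have h2 : s*s ≤ 3*3+2*3 := by nlinarith [sq_nonneg (s+u), sq_nonneg t, sq_nonneg u]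
  have h3 : u*u ≤ 1*1+2*1 := by nlinarith [sq_nonneg (s+u), sq_nonneg t, sq_nonneg s]
  obtain ⟨ht1, ht2⟩ := abs_le_of_sq_le (by norm_num) h1
  obtain ⟨hs1, hs2⟩ := abs_le_of_sq_le (by norm_num) h2
  obtain ⟨hu1, hu2⟩ := abs_le_of_sq_le (by norm_num) h3
  interval_cases t <;> interval_cases s <;> interval_cases u <;> omega

set_option maxHeartbeats 1000000 in
lemma case215_15 (t s u : ℤ) (h : t*t + Fv 2 1 5 s u = 15) : False := by
  simp only [Fv] at h
  have h1 : t*t ≤ 3*3+2*3 := by nlinarith [sq_nonneg (s+u), sq_nonneg s, sq_nonneg u]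
  have h2 : s*s ≤ 3*3+2*3 := by nlinarith [sq_nonneg (s+u), sq_nonneg t, sq_nonneg u]
  have h3 : u*u ≤ 1*1+2*1 := by nlinarith [sq_nonneg (s+u), sq_nonneg t, sq_nonneg s]
  obtain ⟨ht1, ht2⟩ := abs_le_of_sq_le (by norm_num) h1
  obtain ⟨hs1, hs2⟩ := abs_le_of_sq_le (by norm_num) h2
  obtain ⟨hu1, hu2⟩ := abs_le_of_sq_le (by norm_num) h3
  interval_cases t <;> interval_cases s <;> interval_cases u <;> omega


lemma sq1 {t : ℤ} (ht : t ≠ 0) : 1 ≤ t*t := by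
  rcases lt_or_gt_of_ne ht with h|h <;> nlinarith
lemma fv_min {a b c : ℤ} (hb0 : 0 ≤ b) (hba : 2*b ≤ a) (hac : a ≤ c) (ha : 0 < a)
    {t s : ℤ} (h : ¬(t = 0 ∧ s = 0)) : a ≤ Fv a b c t s := by
  simp only [Fv]
  rcases eq_or_ne s 0 with rfl | hs
  · have ht : t ≠ 0 := by tauto
    have := sq1 ht; nlinarith
  · have hs1 := sq1 hs
    rcases eq_or_ne t 0 with rfl | ht
    · nlinarith
    · have ht1 := sq1 ht
      rcases le_or_gt 0 (t*s) with hts | hts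
      · nlinarith
      · have key : 1 ≤ t*t + t*s + s*s := by nlinarith [sq_nonneg (t+s)]
        nlinarith [mul_le_mul_of_nonpos_right hba (le_of_lt hts)]
lemma fv_nonneg {a b c : ℤ} (hb0 : 0 ≤ b) (hba : 2*b ≤ a) (hac : a ≤ c) (ha : 0 < a)
    (t s : ℤ) : 0 ≤ Fv a b c t s := by
  by_cases h : t = 0 ∧ s = 0
  · simp [Fv, h.1, h.2]
  · linarith [fv_min hb0 hba hac ha h]
lemma no_reduced (a b c : ℤ) (hb0 : 0 ≤ b) (hba : 2*b ≤ a) (hac : a ≤ c) (ha : 0 < a)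
    (hD : 0 < a*c - b*b)
    (h2 : ∃ t s u : ℤ, t*t + Fv a b c s u = 2)
    (h3 : ∃ t s u : ℤ, t*t + Fv a b c s u = 3)
    (h5 : ∃ t s u : ℤ, t*t + Fv a b c s u = 5)
    (h10 : ∃ t s u : ℤ, t*t + Fv a b c s u = 10)
    (h14 : ∃ t s u : ℤ, t*t + Fv a b c s u = 14)
    (h15 : ∃ t s u : ℤ, t*t + Fv a b c s u = 15) : False := by
  have hc : 0 < c := lt_of_lt_of_le ha hac
  have ha2 : a ≤ 2 := by
    obtain ⟨t, s, u, h⟩ := h2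
    have hnn := fv_nonneg hb0 hba hac ha s u
    have htb : t*t ≤ 2*2+2*2 := by linarith
    obtain ⟨ht1, ht2⟩ := abs_le_of_sq_le (by norm_num) htb
    have htt : t*t ≤ 1 := by interval_cases t <;> omega
    have hFv : 1 ≤ Fv a b c s u := by omega
    have hne : ¬(s = 0 ∧ u = 0) := by
      rintro ⟨rfl, rfl⟩; simp [Fv] at hFv
    linarith [fv_min hb0 hba hac ha hne, mul_self_nonneg t]
  interval_cases a
  · have hb : b = 0 := by omega
    subst hb
    have hc3 : c ≤ 3 := by
      obtain ⟨t, s, u, h⟩ := h3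
      simp only [Fv] at h
      rcases eq_or_ne u 0 with rfl | hu
      · exfalso
        have hb1 : t*t ≤ 1*1+2*1 := by nlinarith [sq_nonneg s]
        have hb2 : s*s ≤ 1*1+2*1 := by nlinarith [sq_nonneg t]
        obtain ⟨ht1, ht2⟩ := abs_le_of_sq_le (by norm_num) hb1
        obtain ⟨hs1, hs2⟩ := abs_le_of_sq_le (by norm_num) hb2
        interval_cases t <;> interval_cases s <;> omega
      · nlinarith [sq1 hu, sq_nonneg t, sq_nonneg s,
          mul_le_mul_of_nonneg_left (sq1 hu) (le_of_lt hc)]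
    interval_cases c
    · obtain ⟨t, s, u, h⟩ := h15; exact case101_15 t s u h
    · obtain ⟨t, s, u, h⟩ := h14; exact case102_14 t s u h
    · obtain ⟨t, s, u, h⟩ := h15; exact case103_15 t s u h
  · have hc5 : c ≤ 5 := by
      obtain ⟨t, s, u, h⟩ := h5
      have hnn := fv_nonneg hb0 hba hac ha s u
      rcases eq_or_ne u 0 with rfl | hu
      · exfalso
        simp only [Fv] at h hnn
        have hb1 : b ≤ 1 := by omega
        have h1' : t*t ≤ 2*2+2*2 := by linarith
        have h2' : s*s ≤ 1*1+2*1 := by nlinarith [sq_nonneg t]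
        obtain ⟨ht1, ht2⟩ := abs_le_of_sq_le (by norm_num) h1'
        obtain ⟨hs1, hs2⟩ := abs_le_of_sq_le (by norm_num) h2'
        interval_cases t <;> interval_cases s <;> omega
      · have hFv5 : Fv 2 b c s u ≤ 5 := by nlinarith [mul_self_nonneg t]
        have key : 2 * Fv 2 b c s u = (2*s+b*u)*(2*s+b*u) + (2*c-b*b)*(u*u) := by
          simp only [Fv]; ring
        nlinarith [mul_self_nonneg (2*s+b*u), sq1 hu,
          mul_le_mul_of_nonneg_left (sq1 hu) (by nlinarith : (0:ℤ) ≤ 2*c-b*b)]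
    have hb1 : b = 0 ∨ b = 1 := by omega
    rcases hb1 with rfl | rfl
    · interval_cases c
      · obtain ⟨t, s, u, h⟩ := h15; exact case202_15 t s u h
      · obtain ⟨t, s, u, h⟩ := h10; exact case203_10 t s u h
      · obtain ⟨t, s, u, h⟩ := h14; exact case204_14 t s u h
      · obtain ⟨t, s, u, h⟩ := h15; exact case205_15 t s u h
    · interval_cases c
      · obtain ⟨t, s, u, h⟩ := h5; exact case212_5 t s u h
      · obtain ⟨t, s, u, h⟩ := h5; exact case213_5 t s u h
      · obtain ⟨t, s, u, h⟩ := h10; exact case214_10 t s u h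
      · obtain ⟨t, s, u, h⟩ := h15; exact case215_15 t s u h



lemma reduce_aux : ∀ (m : ℕ), ∀ (k : ℕ), ∀ a b c : ℤ, a.natAbs ≤ m → b.natAbs ≤ k →
    0 < a → 0 < a*c - b*b →
    ∃ a' b' c', 0 ≤ b' ∧ 2*b' ≤ a' ∧ a' ≤ c' ∧ 0 < a' ∧ 0 < a'*c' - b'*b' ∧
      ∀ t s : ℤ, ∃ t' s' : ℤ, Fv a' b' c' t' s' = Fv a b c t s := by
  intro m
  induction m using Nat.strong_induction_on with
  | _ m ihm =>
  intro k
  induction k using Nat.strong_induction_on with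
  | _ k ihk =>
  intro a b c hm hk ha hD
  have hc : 0 < c := by nlinarith [mul_self_nonneg b]
  by_cases h1 : 2 * b.natAbs ≤ a.natAbs
  · by_cases h2 : a ≤ c
    · -- already reduced up to sign of b
      rcases le_or_gt 0 b with hb | hb
      · exact ⟨a, b, c, hb, by omega, h2, ha, hD, fun t s => ⟨t, s, rfl⟩⟩
      · refine ⟨a, -b, c, by omega, by omega, h2, ha, by nlinarith, fun t s => ⟨t, -s, ?_⟩⟩
        simp only [Fv]; ring
    · -- swap
      have hcm : c.natAbs < m := by omega
      obtain ⟨a', b', c', h⟩ := ihm c.natAbs hcm b.natAbs c b a (le_refl _) (le_refl _) hc (by nlinarith)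
      refine ⟨a', b', c', h.1, h.2.1, h.2.2.1, h.2.2.2.1, h.2.2.2.2.1, fun t s => ?_⟩
      obtain ⟨t', s', ht⟩ := h.2.2.2.2.2 s t
      exact ⟨t', s', by rw [ht]; simp only [Fv]; ring⟩
  · -- shear: replace b by b' with |b'| ≤ a/2
    set r := b % a with hr
    have hr0 : 0 ≤ r := Int.emod_nonneg b (by omega)
    have hra : r < a := Int.emod_lt_of_pos b ha
    set b' : ℤ := if 2*r ≤ a then r else r - a with hb'
    have hdvd : a ∣ (b' - b) := by
      rcases le_or_gt (2*r) a with h | h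
      · rw [hb', if_pos h, hr]
        exact ⟨-(b/a), by rw [Int.emod_def]; ring⟩
      · rw [hb', if_neg (not_le.mpr h), hr]
        exact ⟨-(b/a) - 1, by rw [Int.emod_def]; ring⟩
    obtain ⟨j, hj⟩ := hdvd
    have hbj : b' = b + a * j := by linarith
    have hb'small : 2 * b'.natAbs ≤ a.natAbs := by
      rcases le_or_gt (2*r) a with h | h <;> simp only [hb', if_pos, if_neg, h] <;> omega
    have hlt : b'.natAbs < b.natAbs := by omega
    have hkk : b'.natAbs < k := by omega
    set c' : ℤ := c + 2*j*b + j*j*a with hc'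
    have hD' : 0 < a*c' - b'*b' := by rw [hbj, hc']; nlinarith [hD]
    obtain ⟨a2, b2, c2, h⟩ := ihk b'.natAbs hkk a b' c' hm (le_refl _) ha hD'
    refine ⟨a2, b2, c2, h.1, h.2.1, h.2.2.1, h.2.2.2.1, h.2.2.2.2.1, fun t s => ?_⟩
    obtain ⟨t', s', ht⟩ := h.2.2.2.2.2 (t - j*s) s
    refine ⟨t', s', by rw [ht, hbj, hc']; simp only [Fv]; ring⟩

lemma reduce (a b c : ℤ) (ha : 0 < a) (hD : 0 < a*c - b*b) :
    ∃ a' b' c', 0 ≤ b' ∧ 2*b' ≤ a' ∧ a' ≤ c' ∧ 0 < a' ∧ 0 < a'*c' - b'*b' ∧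
      ∀ t s : ℤ, ∃ t' s' : ℤ, Fv a' b' c' t' s' = Fv a b c t s :=
  reduce_aux a.natAbs b.natAbs a b c (le_refl _) (le_refl _) ha hD



lemma split (M : Matrix (Fin 3) (Fin 3) ℤ) (hsym : M.IsSymm)
    (hpd : ∀ x : Fin 3 → ℤ, x ≠ 0 → 0 < x ⬝ᵥ M.mulVec x)
    (v : Fin 3 → ℤ) (hv : v ⬝ᵥ M.mulVec v = 1) :
    ∃ a b c : ℤ, 0 < a ∧ 0 < a*c - b*b ∧
      ∀ n : ℤ, (∃ x, x ⬝ᵥ M.mulVec x = n) →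
        ∃ t y0 y1 : ℤ, t*t + Fv a b c y0 y1 = n := by
  classical
  have Bsymm : ∀ x y : Fin 3 → ℤ, x ⬝ᵥ M.mulVec y = y ⬝ᵥ M.mulVec x := by
    intro x y
    rw [dotProduct_mulVec, ← mulVec_transpose, hsym.eq, dotProduct_comm]
  let φ : (Fin 3 → ℤ) →ₗ[ℤ] ℤ :=
  { toFun := fun u => v ⬝ᵥ M.mulVec u
    map_add' := fun x y => by
      show v ⬝ᵥ M.mulVec (x + y) = v ⬝ᵥ M.mulVec x + v ⬝ᵥ M.mulVec y
      rw [mulVec_add, dotProduct_add]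
    map_smul' := fun r x => by
      show v ⬝ᵥ M.mulVec (r • x) = r * (v ⬝ᵥ M.mulVec x)
      rw [mulVec_smul, dotProduct_smul, smul_eq_mul] }
  have hφv : φ v = 1 := hv
  have hKmem : ∀ u : Fin 3 → ℤ, u - φ u • v ∈ LinearMap.ker φ := fun u => by
    rw [LinearMap.mem_ker, map_sub, _root_.map_smul, hφv, smul_eq_mul, mul_one, sub_self]
  set K := LinearMap.ker φ with hK
  let e : (Fin 3 → ℤ) ≃ₗ[ℤ] ℤ × ↥K :=
  { toFun := fun u => (φ u, ⟨u - φ u • v, hKmem u⟩)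
    map_add' := fun x y => by
      refine Prod.ext (map_add φ x y) (Subtype.ext ?_)
      show (x + y) - φ (x + y) • v = (x - φ x • v) + (y - φ y • v)
      rw [map_add, add_smul]; abel
    map_smul' := fun r x => by
      refine Prod.ext (_root_.map_smul φ r x) (Subtype.ext ?_)
      show (r • x) - φ (r • x) • v = r • (x - φ x • v)
      rw [_root_.map_smul φ r x, smul_eq_mul, mul_smul, smul_sub]
    invFun := fun p => p.1 • v + ↑p.2
    left_inv := fun u => by
      show φ u • v + (u - φ u • v) = u
      abel
    right_inv := fun p => by
      have hp : φ ↑p.2 = 0 := LinearMap.mem_ker.mp p.2.2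
      have h1 : φ (p.1 • v + ↑p.2) = p.1 := by
        rw [map_add, _root_.map_smul, hφv, hp, smul_eq_mul, mul_one, add_zero]
      refine Prod.ext h1 (Subtype.ext ?_)
      show (p.1 • v + ↑p.2) - φ (p.1 • v + ↑p.2) • v = (p.2 : Fin 3 → ℤ)
      rw [h1]; abel }
  have hK2 : Module.finrank ℤ ↥K = 2 := by
    have h3 : Module.finrank ℤ (Fin 3 → ℤ) = 3 := by simp
    have hprod : Module.finrank ℤ (ℤ × ↥K) = 1 + Module.finrank ℤ ↥K := by
      simp [Module.finrank_prod]
    have he := e.finrank_eq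
    omega
  let bas : Module.Basis (Fin 2) ℤ ↥K := (Module.finBasis ℤ ↥K).reindex (finCongr hK2)
  set b0 : Fin 3 → ℤ := ↑(bas 0) with hb0
  set b1 : Fin 3 → ℤ := ↑(bas 1) with hb1
  set a : ℤ := b0 ⬝ᵥ M.mulVec b0 with ha
  set bb : ℤ := b0 ⬝ᵥ M.mulVec b1 with hbb
  set cc : ℤ := b1 ⬝ᵥ M.mulVec b1 with hcc
  have hexp : ∀ y0 y1 : ℤ,
      (y0 • b0 + y1 • b1) ⬝ᵥ M.mulVec (y0 • b0 + y1 • b1) = Fv a bb cc y0 y1 := by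
    intro y0 y1
    have h10 : b1 ⬝ᵥ M.mulVec b0 = bb := Bsymm b1 b0
    simp only [mulVec_add, mulVec_smul, dotProduct_add, add_dotProduct,
      dotProduct_smul, smul_dotProduct]
    simp only [smul_eq_mul]
    rw [h10, ← ha, ← hbb, ← hcc, Fv]
    ring
  have hcoords : ∀ y0 y1 : ℤ, ¬(y0 = 0 ∧ y1 = 0) →
      (y0 • b0 + y1 • b1 : Fin 3 → ℤ) ≠ 0 := by
    intro y0 y1 hne h0
    have hzK : y0 • bas 0 + y1 • bas 1 = (0 : ↥K) := by
      apply Subtype.coe_injective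
      show ((y0 • bas 0 + y1 • bas 1 : ↥K) : Fin 3 → ℤ) = ((0 : ↥K) : Fin 3 → ℤ)
      rw [Submodule.coe_add, Submodule.coe_smul, Submodule.coe_smul, ← hb0, ← hb1,
        ZeroMemClass.coe_zero]
      exact h0
    have h0' : y0 = 0 := by
      have := congrArg (fun w => bas.repr w 0) hzK
      simpa [Finsupp.single_apply] using this
    have h1' : y1 = 0 := by
      have := congrArg (fun w => bas.repr w 1) hzK
      simpa [Finsupp.single_apply] using this
    exact hne ⟨h0', h1'⟩
  have hapos : 0 < a := by
    have hne : b0 ≠ 0 := by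
      simp only [hb0]
      exact fun h => bas.ne_zero 0 (Subtype.coe_injective h)
    exact hpd b0 hne
  have hDpos : 0 < a*cc - bb*bb := by
    have hz := hpd (bb • b0 + (-a) • b1)
      (hcoords bb (-a) (by rintro ⟨-, h⟩; omega))
    rw [hexp bb (-a)] at hz
    have hzz : Fv a bb cc bb (-a) = a * (a*cc - bb*bb) := by rw [Fv]; ring
    nlinarith [hz, hapos]
  refine ⟨a, bb, cc, hapos, hDpos, ?_⟩
  rintro n ⟨u, hu⟩
  set w : ↥K := ⟨u - φ u • v, hKmem u⟩ with hwdef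
  set y0 : ℤ := bas.repr w 0 with hy0
  set y1 : ℤ := bas.repr w 1 with hy1
  have hwc : (w : Fin 3 → ℤ) = y0 • b0 + y1 • b1 := by
    have hsum := bas.sum_repr w
    rw [Fin.sum_univ_two] at hsum
    calc (w : Fin 3 → ℤ) = ↑(y0 • bas 0 + y1 • bas 1) := by rw [hy0, hy1, hsum]
    _ = y0 • b0 + y1 • b1 := by
        rw [Submodule.coe_add, Submodule.coe_smul, Submodule.coe_smul]
  refine ⟨φ u, y0, y1, ?_⟩
  have hφw : v ⬝ᵥ M.mulVec (w : Fin 3 → ℤ) = 0 := LinearMap.mem_ker.mp w.2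
  have hwv : (w : Fin 3 → ℤ) ⬝ᵥ M.mulVec v = 0 := by rw [Bsymm]; exact hφw
  have hu' : u = φ u • v + (w : Fin 3 → ℤ) := by
    show u = φ u • v + (u - φ u • v)
    abel
  have hexpand : u ⬝ᵥ M.mulVec u
      = φ u * φ u + (w : Fin 3 → ℤ) ⬝ᵥ M.mulVec (w : Fin 3 → ℤ) := by
    conv_lhs => rw [hu']
    simp only [mulVec_add, mulVec_smul, dotProduct_add, add_dotProduct,
      dotProduct_smul, smul_dotProduct]
    simp only [smul_eq_mul]
    rw [hv, hφw, hwv]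
    ring
  rw [← hu, hexpand, hwc, hexp]

/-- No positive definite integral ternary quadratic form represents
1, 2, 3, 5, 10, 14 and 15 simultaneously. -/
theorem no_ternary_represents_seven :
    ¬ ∃ M : Matrix (Fin 3) (Fin 3) ℤ, IsPDForm M ∧
        RepresentsInt M 1 ∧ RepresentsInt M 2 ∧ RepresentsInt M 3 ∧
        RepresentsInt M 5 ∧ RepresentsInt M 10 ∧ RepresentsInt M 14 ∧
        RepresentsInt M 15 := by
  rintro ⟨M, hpdf, h1, h2, h3, h5, h10, h14, h15⟩
  obtain ⟨hsym, hpd⟩ := hpdf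
  obtain ⟨v, hv⟩ := h1
  obtain ⟨a, b, c, ha, hD, hrep⟩ := split M hsym hpd v hv
  obtain ⟨a', b', c', hb0', hba', hac', ha', hD', hval⟩ := reduce a b c ha hD
  have key : ∀ n : ℤ, RepresentsInt M n → ∃ t s u : ℤ, t*t + Fv a' b' c' s u = n := by
    intro n hn
    obtain ⟨t, y0, y1, hy⟩ := hrep n hn
    obtain ⟨s, u, hsu⟩ := hval y0 y1
    exact ⟨t, s, u, by rw [hsu, hy]⟩
  exact no_reduced a' b' c' hb0' hba' hac' ha' hD' (key 2 h2) (key 3 h3) (key 5 h5)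
    (key 10 h10) (key 14 h14) (key 15 h15)
end

section
/- Let ℓ₁ and ℓ₂ be primitive positive definite integral binary quadratic forms such that no positive definite integral binary quadratic form represents both ℓ₁ and ℓ₂. Then the following are equivalent: (i) there exists a positive definite integral ternary quadratic form representing both ℓ₁ and ℓ₂; (ii) there exist a positive integer a and integers b₁, c₁, b₂, c₂ such that ℓ₁ is isometric to the form with matrix (a, b₁; b₁, c₁), ℓ₂ is isometric to the form with matrix (a, b₂; b₂, c₂) (equivalently, a is primitively represented by both ℓ₁ and ℓ₂), and the open real interval ((b₁b₂ − √(det ℓ₁ · det ℓ₂))/a, (b₁b₂ + √(det ℓ₁ · det ℓ₂))/a) contains an integer. -/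
open Matrix

/-- A binary integral form is primitive: no integral lattice properly contains the
corresponding lattice on its rational quadratic space. Concretely, every rational vector v
with vᵀMv ∈ ℤ and Mv ∈ ℤ² is already integral. -/
def IsPrimitiveForm (M : Matrix (Fin 2) (Fin 2) ℤ) : Prop :=
  ∀ v : Fin 2 → ℚ,
    (∃ z : ℤ, v ⬝ᵥ (M.map (Int.cast : ℤ → ℚ)).mulVec v = (z : ℚ)) →
    (∀ i, ∃ z : ℤ, (M.map (Int.cast : ℤ → ℚ)).mulVec v i = (z : ℚ)) →
    ∀ i, ∃ z : ℤ, v i = (z : ℚ)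

/-! ### Auxiliary lemmas -/

section Aux

lemma castVec_mulVec {n m : ℕ} (M : Matrix (Fin n) (Fin m) ℤ) (x : Fin m → ℤ) :
    (M.map (Int.cast : ℤ → ℚ)).mulVec (fun i => (x i : ℚ)) = fun i => ((M.mulVec x i : ℤ) : ℚ) := by
  funext i
  simp [Matrix.mulVec, dotProduct]

lemma cast_dotProduct {n : ℕ} (x y : Fin n → ℤ) :
    (fun i => (x i : ℚ)) ⬝ᵥ (fun i => (y i : ℚ)) = ((x ⬝ᵥ y : ℤ) : ℚ) := by
  simp [dotProduct]

lemma conj_dot {n m : ℕ} {R : Type*} [CommRing R] (L : Matrix (Fin n) (Fin n) R)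
    (T : Matrix (Fin n) (Fin m) R) (x y : Fin m → R) :
    x ⬝ᵥ (Tᵀ * L * T).mulVec y = (T.mulVec x) ⬝ᵥ L.mulVec (T.mulVec y) := by
  rw [Matrix.dotProduct_mulVec, ← Matrix.vecMul_vecMul, ← Matrix.vecMul_vecMul,
    Matrix.vecMul_transpose, ← Matrix.dotProduct_mulVec, ← Matrix.dotProduct_mulVec]

lemma exists_int_smul {n : ℕ} (x : Fin n → ℚ) :
    ∃ (N : ℤ) (z : Fin n → ℤ), 0 < N ∧ ∀ i, (z i : ℚ) = N * x i := by
  refine ⟨∏ i, ((x i).den : ℤ), fun i => (x i).num * (∏ j ∈ Finset.univ.erase i, ((x j).den : ℤ)), ?_, ?_⟩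
  · exact Finset.prod_pos fun i _ => Int.natCast_pos.mpr (x i).den_pos
  · intro i
    have h : (∏ j, ((x j).den : ℤ)) = ((x i).den : ℤ) * ∏ j ∈ Finset.univ.erase i, ((x j).den : ℤ) := by
      rw [← Finset.prod_erase_mul _ _ (Finset.mem_univ i)]; ring
    rw [h]
    push_cast
    rw [mul_right_comm, mul_comm ((x i).den : ℚ) (x i), Rat.mul_den_eq_num]

lemma cast_conj {n m : ℕ} (L : Matrix (Fin n) (Fin n) ℤ) (T : Matrix (Fin n) (Fin m) ℤ) :
    ((Tᵀ * L * T).map (Int.cast : ℤ → ℚ)) =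
      (T.map (Int.cast : ℤ → ℚ))ᵀ * L.map (Int.cast : ℤ → ℚ) * T.map (Int.cast : ℤ → ℚ) := by
  have h1 : (Int.cast : ℤ → ℚ) = ⇑(Int.castRingHom ℚ) := rfl
  rw [h1, Matrix.map_mul, Matrix.map_mul, Matrix.transpose_map]

lemma pd_rat {m : ℕ} (M : Matrix (Fin m) (Fin m) ℤ)
    (hM : ∀ x : Fin m → ℤ, x ≠ 0 → 0 < x ⬝ᵥ M.mulVec x) :
    ∀ x : Fin m → ℚ, x ≠ 0 → 0 < x ⬝ᵥ (M.map (Int.cast : ℤ → ℚ)).mulVec x := by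
  intro x hx
  obtain ⟨N, z, hN, hz⟩ := exists_int_smul x
  have hzx : (fun i => (z i : ℚ)) = (N : ℚ) • x := by
    funext i; simp [hz i]
  have hz0 : z ≠ 0 := by
    intro h0
    apply hx
    funext i
    have := hz i
    rw [h0] at this
    simp at this
    rcases this with h | h
    · exact absurd h (by exact_mod_cast hN.ne')
    · exact h
  have hpos : 0 < z ⬝ᵥ M.mulVec z := hM z hz0
  have key : ((z ⬝ᵥ M.mulVec z : ℤ) : ℚ) = (N : ℚ) ^ 2 * (x ⬝ᵥ (M.map (Int.cast : ℤ → ℚ)).mulVec x) := by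
    rw [← cast_dotProduct, ← castVec_mulVec, hzx]
    rw [smul_dotProduct, Matrix.mulVec_smul, dotProduct_smul]
    simp [smul_smul]
    ring
  have h2 : (0:ℚ) < (N:ℚ)^2 := by positivity
  have h3 : (0:ℚ) < ((z ⬝ᵥ M.mulVec z : ℤ) : ℚ) := by exact_mod_cast hpos
  nlinarith [key ▸ h3]

lemma rep_mulVec_ne_zero {n m : ℕ} (L : Matrix (Fin n) (Fin n) ℤ) (ℓ : Matrix (Fin m) (Fin m) ℤ)
    (T : Matrix (Fin n) (Fin m) ℤ) (hrep : Tᵀ * L * T = ℓ)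
    (hℓ : ∀ x : Fin m → ℤ, x ≠ 0 → 0 < x ⬝ᵥ ℓ.mulVec x)
    (c : Fin m → ℚ) (hc : c ≠ 0) : (T.map (Int.cast : ℤ → ℚ)).mulVec c ≠ 0 := by
  intro h0
  have h1 : c ⬝ᵥ (ℓ.map (Int.cast : ℤ → ℚ)).mulVec c = 0 := by
    rw [← hrep, cast_conj, conj_dot, h0]
    simp
  have := pd_rat ℓ hℓ c hc
  rw [h1] at this
  exact lt_irrefl 0 this

/-- primitive integer vector in a given rational direction -/
lemma exists_primitive_dir (w : Fin 3 → ℚ) (hw : w ≠ 0) :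
    ∃ (v : Fin 3 → ℤ) (s : ℚ), s ≠ 0 ∧ (∀ i, (v i : ℚ) = s * w i) ∧
      ∀ k : ℤ, (∀ i, k ∣ v i) → IsUnit k := by
  obtain ⟨N, z, hN, hz⟩ := exists_int_smul w
  have hz0 : z ≠ 0 := by
    intro h0
    apply hw
    funext i
    have := hz i
    rw [h0] at this
    simp at this
    rcases this with h | h
    · exact absurd h (by exact_mod_cast hN.ne')
    · exact h
  set g : ℤ := (Int.gcd (Int.gcd (z 0) (z 1)) (z 2) : ℤ) with hg
  have hgdvd : ∀ i, g ∣ z i := by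
    intro i
    fin_cases i
    · exact dvd_trans (Int.gcd_dvd_left _ _) (Int.gcd_dvd_left _ _)
    · exact dvd_trans (Int.gcd_dvd_left _ _) (Int.gcd_dvd_right _ _)
    · exact Int.gcd_dvd_right _ _
  have hgne : g ≠ 0 := by
    intro h0
    apply hz0
    funext i
    have h1 : g ∣ z i := hgdvd i
    rw [h0] at h1
    exact zero_dvd_iff.mp h1
  have hgq : (g:ℚ) ≠ 0 := by exact_mod_cast hgne
  refine ⟨fun i => z i / g, (g : ℚ)⁻¹ * N, ?_, ?_, ?_⟩
  · have hN' : (N:ℚ) ≠ 0 := by exact_mod_cast hN.ne'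
    exact mul_ne_zero (inv_ne_zero hgq) hN'
  · intro i
    obtain ⟨c, hc⟩ := hgdvd i
    show ((z i / g : ℤ) : ℚ) = _
    rw [hc, Int.mul_ediv_cancel_left _ hgne]
    have h4 : (N:ℚ) * w i = (g:ℚ) * c := by
      rw [← hz i, hc]; push_cast; ring
    rw [mul_assoc, h4, inv_mul_cancel_left₀ hgq]
  · intro k hk
    have hkg : ∀ i, (k * g) ∣ z i := by
      intro i
      obtain ⟨c, hc⟩ := hgdvd i
      obtain ⟨d, hd⟩ := hk i
      have hd' : z i / g = k * d := hd
      rw [hc, Int.mul_ediv_cancel_left _ hgne] at hd'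
      exact ⟨d, by rw [hc, hd']; ring⟩
    have h1 : (k * g) ∣ 1 * g := by
      rw [one_mul, hg]
      have h01 : (k*g) ∣ (Int.gcd (z 0) (z 1) : ℤ) := Int.dvd_coe_gcd (hkg 0) (hkg 1)
      exact Int.dvd_coe_gcd h01 (hkg 2)
    exact isUnit_of_dvd_one ((mul_dvd_mul_iff_right hgne).mp h1)

lemma quad2' {R : Type*} [CommRing R] (a b c p q : R) :
    ![p,q] ⬝ᵥ (!![a,b;b,c]).mulVec ![p,q] = a*p^2 + 2*b*p*q + c*q^2 := by
  simp [Matrix.mulVec, dotProduct, Fin.sum_univ_two]; ring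

lemma quad3' {R : Type*} [CommRing R] (a b₁ b₂ c₁ t c₂ p q r : R) :
    ![p,q,r] ⬝ᵥ (!![a,b₁,b₂;b₁,c₁,t;b₂,t,c₂]).mulVec ![p,q,r] =
      a*p^2 + c₁*q^2 + c₂*r^2 + 2*b₁*p*q + 2*b₂*p*r + 2*t*q*r := by
  simp [Matrix.mulVec, dotProduct, Fin.sum_univ_three]; ring

lemma det3' {R : Type*} [CommRing R] (a b₁ b₂ c₁ t c₂ : R) :
    (!![a,b₁,b₂;b₁,c₁,t;b₂,t,c₂]).det = a*c₁*c₂ - a*t^2 - b₁^2*c₂ + 2*b₁*b₂*t - b₂^2*c₁ := by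
  simp [Matrix.det_fin_three]; ring

lemma det2' {R : Type*} [CommRing R] (a b c : R) :
    (!![a,b;b,c]).det = a*c - b^2 := by
  simp [Matrix.det_fin_two]; ring

lemma vec2_expand (x : Fin 2 → ℤ) : x = ![x 0, x 1] := by funext i; fin_cases i <;> rfl
lemma vec3_expand (x : Fin 3 → ℤ) : x = ![x 0, x 1, x 2] := by funext i; fin_cases i <;> rfl

lemma pd2_of_minors (a b c : ℤ) (ha : 0 < a) (hd : 0 < a*c - b^2) :
    ∀ x : Fin 2 → ℤ, x ≠ 0 → 0 < x ⬝ᵥ (!![a,b;b,c]).mulVec x := by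
  intro x hx
  rw [vec2_expand x, quad2']
  rcases eq_or_ne (x 1) 0 with h1 | h1
  · have h0 : x 0 ≠ 0 := by
      intro h0; apply hx; funext i; fin_cases i <;> simp [h0, h1]
    rw [h1]
    have := mul_pos ha (mul_self_pos.mpr h0)
    nlinarith [this]
  · have : 0 < x 1 * x 1 := mul_self_pos.mpr h1
    nlinarith [sq_nonneg (a * x 0 + b * x 1), mul_pos hd this,
      mul_nonneg ha.le (sq_nonneg (a * x 0 + b * x 1)), ha]

lemma det2_pos' (a b c : ℤ)
    (hpd : ∀ x : Fin 2 → ℤ, x ≠ 0 → 0 < x ⬝ᵥ (!![a,b;b,c]).mulVec x) : 0 < a*c - b^2 := by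
  have ha : 0 < a := by
    have := hpd ![1,0] (by intro h; have := congrFun h 0; simp at this)
    rw [quad2'] at this
    nlinarith [this]
  have hx : (![b, -a] : Fin 2 → ℤ) ≠ 0 := by
    intro h; have := congrFun h 1; simp at this; omega
  have h2 := hpd _ hx
  rw [quad2'] at h2
  nlinarith [h2, ha]

lemma pd3_of_minors (a b₁ b₂ c₁ t c₂ : ℤ) (ha : 0 < a) (hd1 : 0 < a*c₁ - b₁^2)
    (hdet : 0 < (!![a,b₁,b₂;b₁,c₁,t;b₂,t,c₂]).det) :
    ∀ x : Fin 3 → ℤ, x ≠ 0 → 0 < x ⬝ᵥ (!![a,b₁,b₂;b₁,c₁,t;b₂,t,c₂]).mulVec x := by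
  intro x hx
  rw [det3'] at hdet
  rw [vec3_expand x, quad3']
  have key : ∀ p q r : ℤ, (q ≠ 0 ∨ r ≠ 0) →
      0 < a*p^2 + c₁*q^2 + c₂*r^2 + 2*b₁*p*q + 2*b₂*p*r + 2*t*q*r := by
    intro p q r hqr
    rcases eq_or_ne r 0 with hr | hr
    · have hq : q ≠ 0 := by tauto
      rw [hr]
      have hq2 : 0 < q * q := mul_self_pos.mpr hq
      nlinarith [mul_nonneg hd1.le (sq_nonneg (a*p + b₁*q)), mul_pos (mul_pos hd1 hd1) hq2,
        mul_pos ha hd1]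
    · have hr2 : 0 < r * r := mul_self_pos.mpr hr
      nlinarith [mul_nonneg hd1.le (sq_nonneg (a*p + b₁*q + b₂*r)),
        sq_nonneg ((a*c₁-b₁^2)*q + (a*t-b₁*b₂)*r), mul_pos (mul_pos ha hdet) hr2,
        mul_pos ha hd1]
  rcases eq_or_ne (x 1) 0 with h1 | h1
  · rcases eq_or_ne (x 2) 0 with h2 | h2
    · have h0 : x 0 ≠ 0 := by
        intro h0; apply hx; funext i; fin_cases i <;> simp [h0, h1, h2]
      rw [h1, h2]
      have := mul_pos ha (mul_self_pos.mpr h0)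
      nlinarith [this]
    · exact key _ _ _ (Or.inr h2)
  · exact key _ _ _ (Or.inl h1)

lemma det3_pos (a b₁ b₂ c₁ t c₂ : ℤ)
    (hpd : ∀ x : Fin 3 → ℤ, x ≠ 0 → 0 < x ⬝ᵥ (!![a,b₁,b₂;b₁,c₁,t;b₂,t,c₂]).mulVec x) :
    0 < (!![a,b₁,b₂;b₁,c₁,t;b₂,t,c₂]).det := by
  have ha : 0 < a := by
    have := hpd ![1,0,0] (by intro h; have := congrFun h 0; simp at this)
    rw [quad3'] at this
    nlinarith [this]
  have hKpd : ∀ y : Fin 2 → ℤ, y ≠ 0 →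
      0 < y ⬝ᵥ (!![a*c₁-b₁^2, a*t-b₁*b₂; a*t-b₁*b₂, a*c₂-b₂^2]).mulVec y := by
    intro y hy
    have hxne : (![-(b₁ * y 0 + b₂ * y 1), a * y 0, a * y 1] : Fin 3 → ℤ) ≠ 0 := by
      intro h
      apply hy
      have h1 := congrFun h 1
      have h2 := congrFun h 2
      simp at h1 h2
      funext i
      fin_cases i <;> simp <;> omega
    have hq := hpd _ hxne
    rw [quad3'] at hq
    rw [vec2_expand y, quad2']
    nlinarith [hq, ha]
  have hdK := det2_pos' _ _ _ hKpd
  rw [det3']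
  nlinarith [hdK, ha]

lemma isom_det {n : ℕ} (A B : Matrix (Fin n) (Fin n) ℤ) (h : IsomForm A B) :
    B.det = A.det := by
  obtain ⟨U, hU, hEq⟩ := h
  have h2 : U.det = 1 ∨ U.det = -1 := Int.isUnit_iff.mp hU
  rw [← hEq, Matrix.det_mul, Matrix.det_mul, Matrix.det_transpose]
  rcases h2 with h | h <;> rw [h] <;> ring

lemma isom_pd {n : ℕ} (A B : Matrix (Fin n) (Fin n) ℤ) (h : IsomForm A B)
    (hA : ∀ x : Fin n → ℤ, x ≠ 0 → 0 < x ⬝ᵥ A.mulVec x) :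
    ∀ x : Fin n → ℤ, x ≠ 0 → 0 < x ⬝ᵥ B.mulVec x := by
  obtain ⟨U, hU, hEq⟩ := h
  intro x hx
  have hUx : U.mulVec x ≠ 0 := by
    intro h0
    apply hx
    have h1 : (U⁻¹ * U).mulVec x = 0 := by
      rw [← Matrix.mulVec_mulVec, h0, Matrix.mulVec_zero]
    rwa [Matrix.nonsing_inv_mul _ hU, Matrix.one_mulVec] at h1
  rw [← hEq, conj_dot]
  exact hA _ hUx

lemma dot_symm {n : ℕ} {R : Type*} [CommRing R] (L : Matrix (Fin n) (Fin n) R)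
    (hs : L.IsSymm) (x y : Fin n → R) :
    x ⬝ᵥ L.mulVec y = y ⬝ᵥ L.mulVec x := by
  rw [Matrix.dotProduct_mulVec, ← Matrix.mulVec_transpose, hs.eq, dotProduct_comm]

lemma conj_entry {n m : ℕ} {R : Type*} [CommRing R] (B : Matrix (Fin n) (Fin n) R)
    (U : Matrix (Fin n) (Fin m) R) (i j : Fin m) :
    (Uᵀ * B * U) i j = (fun k => U k i) ⬝ᵥ B.mulVec (fun k => U k j) := by
  simp only [Matrix.mul_apply, Matrix.transpose_apply, Matrix.mulVec, dotProduct,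
    Finset.sum_mul, Finset.mul_sum]
  rw [Finset.sum_comm]
  apply Finset.sum_congr rfl
  intro k _
  apply Finset.sum_congr rfl
  intro l _
  ring

lemma gram3 {R : Type*} [CommRing R] (L : Matrix (Fin 3) (Fin 3) R) (hs : L.IsSymm)
    (z₀ z₁ z₂ : Fin 3 → R) (p q r : R) :
    (p • z₀ + q • z₁ + r • z₂) ⬝ᵥ L.mulVec (p • z₀ + q • z₁ + r • z₂) =
      (z₀ ⬝ᵥ L.mulVec z₀) * p^2 + (z₁ ⬝ᵥ L.mulVec z₁) * q^2 + (z₂ ⬝ᵥ L.mulVec z₂) * r^2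
      + 2 * (z₀ ⬝ᵥ L.mulVec z₁) * p * q + 2 * (z₀ ⬝ᵥ L.mulVec z₂) * p * r
      + 2 * (z₁ ⬝ᵥ L.mulVec z₂) * q * r := by
  have h01 := dot_symm L hs z₀ z₁
  have h02 := dot_symm L hs z₀ z₂
  have h12 := dot_symm L hs z₁ z₂
  simp only [Matrix.mulVec_add, Matrix.mulVec_smul, add_dotProduct,
    smul_dotProduct, dotProduct_add, dotProduct_smul, smul_eq_mul]
  linear_combination (-(q*p)) * h01 - (r*p) * h02 - (r*q) * h12

/-- Pull an integral vector in the rational span of a represented binary lattice back to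
integral coordinates, using primitivity. -/
lemma prim_pullback (ℓ : Matrix (Fin 2) (Fin 2) ℤ) (hp : IsPrimitiveForm ℓ)
    (L : Matrix (Fin 3) (Fin 3) ℤ) (T : Matrix (Fin 3) (Fin 2) ℤ) (hT : Tᵀ * L * T = ℓ)
    (z : Fin 3 → ℤ) (s : Fin 2 → ℚ)
    (hz : (fun i => (z i : ℚ)) = (T.map (Int.cast : ℤ → ℚ)).mulVec s) :
    ∃ nvec : Fin 2 → ℤ, (fun i => ((nvec i : ℤ) : ℚ)) = s ∧ z = T.mulVec nvec := by
  have hc1 : ∃ k : ℤ, s ⬝ᵥ (ℓ.map (Int.cast : ℤ → ℚ)).mulVec s = (k : ℚ) := by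
    refine ⟨z ⬝ᵥ L.mulVec z, ?_⟩
    rw [← hT, cast_conj, conj_dot, ← hz, castVec_mulVec, cast_dotProduct]
  have hc2 : ∀ i, ∃ k : ℤ, (ℓ.map (Int.cast : ℤ → ℚ)).mulVec s i = (k : ℚ) := by
    intro i
    refine ⟨(Tᵀ.mulVec (L.mulVec z)) i, ?_⟩
    rw [← hT, cast_conj]
    rw [← Matrix.mulVec_mulVec, ← Matrix.mulVec_mulVec, ← hz, castVec_mulVec]
    rw [show (T.map (Int.cast : ℤ → ℚ))ᵀ = Tᵀ.map (Int.cast : ℤ → ℚ) from Matrix.transpose_map.symm]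
    rw [castVec_mulVec]
  have hint := hp s hc1 hc2
  set n : Fin 2 → ℤ := fun i => (hint i).choose with hn
  have hsn : (fun i => ((n i : ℤ) : ℚ)) = s := by
    funext i
    exact ((hint i).choose_spec).symm
  refine ⟨n, hsn, ?_⟩
  have h2 : (fun i => (z i : ℚ)) = fun i => ((T.mulVec n i : ℤ) : ℚ) := by
    rw [hz, ← hsn, castVec_mulVec]
  funext i
  exact_mod_cast congrFun h2 i

lemma complete_isom (ℓ : Matrix (Fin 2) (Fin 2) ℤ) (L : Matrix (Fin 3) (Fin 3) ℤ)
    (hLs : L.IsSymm) (T : Matrix (Fin 3) (Fin 2) ℤ) (hT : Tᵀ * L * T = ℓ)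
    (v : Fin 3 → ℤ) (mvec : Fin 2 → ℤ) (hv : v = T.mulVec mvec)
    (hcop : IsCoprime (mvec 0) (mvec 1)) :
    ∃ (w : Fin 3 → ℤ) (nvec : Fin 2 → ℤ), w = T.mulVec nvec ∧
      (∀ j : Fin 2, ∃ p q : ℤ, (fun i => T i j) = p • v + q • w) ∧
      IsomForm ℓ !![v ⬝ᵥ L.mulVec v, v ⬝ᵥ L.mulVec (T.mulVec nvec);
                    v ⬝ᵥ L.mulVec (T.mulVec nvec), (T.mulVec nvec) ⬝ᵥ L.mulVec (T.mulVec nvec)] := by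
  obtain ⟨α, β, hαβ⟩ := hcop
  set U : Matrix (Fin 2) (Fin 2) ℤ := !![mvec 0, -β; mvec 1, α] with hU
  set V : Matrix (Fin 2) (Fin 2) ℤ := !![α, β; -(mvec 1), mvec 0] with hV
  have hUV : U * V = 1 := by
    ext i j
    fin_cases i <;> fin_cases j <;>
      simp [hU, hV, Matrix.mul_apply, Fin.sum_univ_two] <;> linarith [hαβ]
  have hdetU : U.det = 1 := by
    rw [hU, Matrix.det_fin_two_of]; linarith [hαβ]
  set w : Fin 3 → ℤ := T.mulVec ![-β, α] with hw
  have hcol0 : (fun k => U k 0) = mvec := by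
    funext k; fin_cases k <;> simp [hU]
  have hcol1 : (fun k => U k 1) = ![-β, α] := by
    funext k; fin_cases k <;> simp [hU]
  have hTU0 : ∀ i, (T * U) i 0 = v i := by
    intro i
    rw [Matrix.mul_apply, Fin.sum_univ_two, hv]
    simp [hU, Matrix.mulVec, dotProduct, Fin.sum_univ_two]
  have hTU1 : ∀ i, (T * U) i 1 = w i := by
    intro i
    rw [Matrix.mul_apply, Fin.sum_univ_two, hw]
    simp [hU, Matrix.mulVec, dotProduct, Fin.sum_univ_two]
  have hTUV : (T * U) * V = T := by rw [Matrix.mul_assoc, hUV, Matrix.mul_one]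
  refine ⟨w, ![-β, α], hw, ?_, ?_⟩
  · intro j
    refine ⟨V 0 j, V 1 j, ?_⟩
    funext i
    have h := congrFun (congrFun hTUV i) j
    rw [Matrix.mul_apply, Fin.sum_univ_two, hTU0, hTU1] at h
    simp only [Pi.add_apply, Pi.smul_apply, smul_eq_mul]
    rw [← h]
    ring
  · refine ⟨U, by rw [hdetU]; exact isUnit_one, ?_⟩
    ext i j
    rw [conj_entry]
    fin_cases i <;> fin_cases j
    · show (fun k => U k 0) ⬝ᵥ ℓ.mulVec (fun k => U k 0) = v ⬝ᵥ L.mulVec v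
      rw [hcol0, ← hT, conj_dot, ← hv]
    · show (fun k => U k 0) ⬝ᵥ ℓ.mulVec (fun k => U k 1) = v ⬝ᵥ L.mulVec (T.mulVec ![-β, α])
      rw [hcol0, hcol1, ← hT, conj_dot, ← hv]
    · show (fun k => U k 1) ⬝ᵥ ℓ.mulVec (fun k => U k 0) = v ⬝ᵥ L.mulVec (T.mulVec ![-β, α])
      rw [hcol0, hcol1, ← hT, conj_dot, ← hv]
      exact dot_symm L hLs _ _
    · show (fun k => U k 1) ⬝ᵥ ℓ.mulVec (fun k => U k 1) =
        (T.mulVec ![-β, α]) ⬝ᵥ L.mulVec (T.mulVec ![-β, α])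
      rw [hcol1, ← hT, conj_dot]

end Aux

set_option maxHeartbeats 2000000 in
/-- For primitive binary forms ℓ₁, ℓ₂ whose pair is not buried in rank 2: buried in rank 3
iff some positive integer a is primitively represented by both, in such a way that the open
interval ((b₁b₂ − √(det ℓ₁ det ℓ₂))/a, (b₁b₂ + √(det ℓ₁ det ℓ₂))/a) contains an integer. -/
theorem buried_in_rank_three_iff (ℓ₁ ℓ₂ : Matrix (Fin 2) (Fin 2) ℤ)
    (h₁ : IsPDForm ℓ₁) (h₂ : IsPDForm ℓ₂)
    (hp₁ : IsPrimitiveForm ℓ₁) (hp₂ : IsPrimitiveForm ℓ₂)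
    (hnb : ¬ ∃ L : Matrix (Fin 2) (Fin 2) ℤ, IsPDForm L ∧
        Represents L ℓ₁ ∧ Represents L ℓ₂) :
    (∃ L : Matrix (Fin 3) (Fin 3) ℤ, IsPDForm L ∧ Represents L ℓ₁ ∧ Represents L ℓ₂) ↔
      (∃ (a : ℕ) (b₁ c₁ b₂ c₂ : ℤ), 0 < a ∧
        IsomForm ℓ₁ !![(a : ℤ), b₁; b₁, c₁] ∧
        IsomForm ℓ₂ !![(a : ℤ), b₂; b₂, c₂] ∧
        ∃ t : ℤ,
          ((b₁ * b₂ : ℤ) - Real.sqrt ((ℓ₁.det * ℓ₂.det : ℤ) : ℝ)) / (a : ℝ) < (t : ℝ) ∧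
          (t : ℝ) < ((b₁ * b₂ : ℤ) + Real.sqrt ((ℓ₁.det * ℓ₂.det : ℤ) : ℝ)) / (a : ℝ)) := by
  constructor
  · rintro ⟨L, hL, ⟨T₁, hT₁⟩, ⟨T₂, hT₂⟩⟩
    -- a nonzero rational vector in the intersection of the two planes
    set M' : Matrix (Fin 4) (Fin 4) ℚ :=
      !![(T₁ 0 0 : ℚ), (T₁ 0 1 : ℚ), -(T₂ 0 0 : ℚ), -(T₂ 0 1 : ℚ);
         (T₁ 1 0 : ℚ), (T₁ 1 1 : ℚ), -(T₂ 1 0 : ℚ), -(T₂ 1 1 : ℚ);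
         (T₁ 2 0 : ℚ), (T₁ 2 1 : ℚ), -(T₂ 2 0 : ℚ), -(T₂ 2 1 : ℚ);
         0, 0, 0, 0] with hM'
    have hdet0 : M'.det = 0 := by
      apply Matrix.det_eq_zero_of_row_eq_zero 3
      intro j; fin_cases j <;> simp [hM']
    obtain ⟨x, hx0, hxv⟩ := Matrix.exists_mulVec_eq_zero_iff.mpr hdet0
    have hcombo : (T₁.map (Int.cast : ℤ → ℚ)).mulVec ![x 0, x 1]
        = (T₂.map (Int.cast : ℤ → ℚ)).mulVec ![x 2, x 3] := by
      funext i
      fin_cases i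
      · have h := congrFun hxv 0
        simp [hM', Matrix.mulVec, dotProduct, Fin.sum_univ_four] at h
        simp [Matrix.mulVec, dotProduct, Fin.sum_univ_two, Matrix.map_apply]
        linarith [h]
      · have h := congrFun hxv 1
        simp [hM', Matrix.mulVec, dotProduct, Fin.sum_univ_four] at h
        simp [Matrix.mulVec, dotProduct, Fin.sum_univ_two, Matrix.map_apply]
        linarith [h]
      · have h := congrFun hxv 2
        simp [hM', Matrix.mulVec, dotProduct, Fin.sum_univ_four] at h
        simp [Matrix.mulVec, dotProduct, Fin.sum_univ_two, Matrix.map_apply]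
        linarith [h]
    have hu₁ne : (![x 0, x 1] : Fin 2 → ℚ) ≠ 0 := by
      intro hu0
      have hw0 : (T₂.map (Int.cast : ℤ → ℚ)).mulVec ![x 2, x 3] = 0 := by
        rw [← hcombo, hu0, Matrix.mulVec_zero]
      have hu₂ : (![x 2, x 3] : Fin 2 → ℚ) = 0 := by
        by_contra h
        exact rep_mulVec_ne_zero L ℓ₂ T₂ hT₂ h₂.2 _ h hw0
      apply hx0
      funext i
      fin_cases i
      · exact congrFun hu0 0
      · exact congrFun hu0 1
      · exact congrFun hu₂ 0
      · exact congrFun hu₂ 1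
    have hwne := rep_mulVec_ne_zero L ℓ₁ T₁ hT₁ h₁.2 _ hu₁ne
    obtain ⟨v, s, hs0, hsv, hvprim⟩ := exists_primitive_dir _ hwne
    have hv1 : (fun i => (v i : ℚ)) = (T₁.map (Int.cast : ℤ → ℚ)).mulVec (s • ![x 0, x 1]) := by
      rw [Matrix.mulVec_smul]
      funext i
      rw [hsv i]
      rfl
    have hv2 : (fun i => (v i : ℚ)) = (T₂.map (Int.cast : ℤ → ℚ)).mulVec (s • ![x 2, x 3]) := by
      rw [Matrix.mulVec_smul, ← hcombo, ← Matrix.mulVec_smul]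
      exact hv1
    have hvne : v ≠ 0 := by
      intro h0
      have h2 := hvprim 2 (by intro i; rw [h0]; simp)
      rcases Int.isUnit_iff.mp h2 with h | h <;> omega
    obtain ⟨m₁, hm₁, hvT₁⟩ := prim_pullback ℓ₁ hp₁ L T₁ hT₁ v _ hv1
    obtain ⟨m₂, hm₂, hvT₂⟩ := prim_pullback ℓ₂ hp₂ L T₂ hT₂ v _ hv2
    have hcop : ∀ (T : Matrix (Fin 3) (Fin 2) ℤ) (m : Fin 2 → ℤ), v = T.mulVec m →
        IsCoprime (m 0) (m 1) := by
      intro T m hvm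
      rw [Int.isCoprime_iff_gcd_eq_one]
      have hdv : ∀ i, ((Int.gcd (m 0) (m 1) : ℤ)) ∣ v i := by
        intro i
        rw [hvm]
        have hexp : T.mulVec m i = T i 0 * m 0 + T i 1 * m 1 := by
          simp [Matrix.mulVec, dotProduct, Fin.sum_univ_two]
        rw [hexp]
        exact dvd_add (Dvd.dvd.mul_left (Int.gcd_dvd_left _ _) _)
          (Dvd.dvd.mul_left (Int.gcd_dvd_right _ _) _)
      have hun := hvprim _ hdv
      rcases Int.isUnit_iff.mp hun with h | h <;> omega
    obtain ⟨w₁, n₁, hw₁, hcols₁, hIso1⟩ :=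
      complete_isom ℓ₁ L hL.1 T₁ hT₁ v m₁ hvT₁ (hcop T₁ m₁ hvT₁)
    obtain ⟨w₂, n₂, hw₂, hcols₂, hIso2⟩ :=
      complete_isom ℓ₂ L hL.1 T₂ hT₂ v m₂ hvT₂ (hcop T₂ m₂ hvT₂)
    rw [← hw₁] at hIso1
    rw [← hw₂] at hIso2
    have hcastv : (fun i => (v i : ℚ)) =
        (T₁.map (Int.cast : ℤ → ℚ)).mulVec (fun i => (m₁ i : ℚ)) := by
      rw [castVec_mulVec, hvT₁]
    have hcastw₁ : (fun i => (w₁ i : ℚ)) =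
        (T₁.map (Int.cast : ℤ → ℚ)).mulVec (fun i => (n₁ i : ℚ)) := by
      rw [castVec_mulVec, hw₁]
    by_cases hdeg : ∃ cv : Fin 2 → ℚ, (fun i => (w₂ i : ℚ)) =
        (T₁.map (Int.cast : ℤ → ℚ)).mulVec cv
    · exfalso
      obtain ⟨cv, hcv⟩ := hdeg
      have hzj : ∀ j : Fin 2, ∃ nv : Fin 2 → ℤ, (fun i => T₂ i j) = T₁.mulVec nv := by
        intro j
        obtain ⟨p, q, hpq⟩ := hcols₂ j
        have hzq : (fun i => ((T₂ i j : ℤ) : ℚ)) =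
            (T₁.map (Int.cast : ℤ → ℚ)).mulVec
              ((p:ℚ) • (fun i => (m₁ i:ℚ)) + (q:ℚ) • cv) := by
          rw [Matrix.mulVec_add, Matrix.mulVec_smul, Matrix.mulVec_smul, ← hcastv, ← hcv]
          funext i
          have hpqi := congrFun hpq i
          simp only [Pi.add_apply, Pi.smul_apply, smul_eq_mul] at hpqi ⊢
          rw [hpqi]
          push_cast
          ring
        obtain ⟨nv, _, hnv⟩ := prim_pullback ℓ₁ hp₁ L T₁ hT₁ (fun i => T₂ i j) _ hzq
        exact ⟨nv, hnv⟩
      obtain ⟨nv0, hnv0⟩ := hzj 0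
      obtain ⟨nv1, hnv1⟩ := hzj 1
      set T' : Matrix (Fin 2) (Fin 2) ℤ := Matrix.of (fun i j => ![nv0, nv1] j i) with hT'
      have hTT : T₁ * T' = T₂ := by
        ext i j
        rw [Matrix.mul_apply, Fin.sum_univ_two]
        fin_cases j
        · have h := congrFun hnv0 i
          simp only [Matrix.mulVec, dotProduct, Fin.sum_univ_two] at h
          simp [hT']
          linarith [h]
        · have h := congrFun hnv1 i
          simp only [Matrix.mulVec, dotProduct, Fin.sum_univ_two] at h
          simp [hT']
          linarith [h]
      apply hnb
      refine ⟨ℓ₁, h₁, ⟨1, by simp⟩, ⟨T', ?_⟩⟩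
      calc T'ᵀ * ℓ₁ * T' = T'ᵀ * (T₁ᵀ * L * T₁) * T' := by rw [hT₁]
        _ = (T₁ * T')ᵀ * L * (T₁ * T') := by
            rw [Matrix.transpose_mul]; simp only [Matrix.mul_assoc]
        _ = ℓ₂ := by rw [hTT, hT₂]
    · -- nondegenerate case
      have haI : 0 < v ⬝ᵥ L.mulVec v := hL.2 v hvne
      have hGpd2 : ∀ x : Fin 3 → ℤ, x ≠ 0 → 0 < x ⬝ᵥ
          (!![v ⬝ᵥ L.mulVec v, v ⬝ᵥ L.mulVec w₁, v ⬝ᵥ L.mulVec w₂;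
             v ⬝ᵥ L.mulVec w₁, w₁ ⬝ᵥ L.mulVec w₁, w₁ ⬝ᵥ L.mulVec w₂;
             v ⬝ᵥ L.mulVec w₂, w₁ ⬝ᵥ L.mulVec w₂, w₂ ⬝ᵥ L.mulVec w₂]).mulVec x := by
        intro x hx
        rcases eq_or_ne (x 2) 0 with h2 | h2
        · have hxy : (![x 0, x 1] : Fin 2 → ℤ) ≠ 0 := by
            intro h
            apply hx
            funext i
            fin_cases i
            · exact congrFun h 0
            · exact congrFun h 1
            · exact h2
          have hq := isom_pd _ _ hIso1 h₁.2 ![x 0, x 1] hxy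
          rw [quad2'] at hq
          rw [vec3_expand x, quad3', h2]
          ring_nf
          ring_nf at hq
          linarith [hq]
        · have hSne : x 0 • v + x 1 • w₁ + x 2 • w₂ ≠ 0 := by
            intro h0
            apply hdeg
            have hx2q : ((x 2 : ℤ) : ℚ) ≠ 0 := by exact_mod_cast h2
            refine ⟨(-(x 0 : ℚ)/(x 2 : ℚ)) • (fun i => (m₁ i : ℚ)) +
              (-(x 1 : ℚ)/(x 2 : ℚ)) • (fun i => (n₁ i : ℚ)), ?_⟩
            rw [Matrix.mulVec_add, Matrix.mulVec_smul, Matrix.mulVec_smul, ← hcastv, ← hcastw₁]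
            funext i
            have h0i := congrFun h0 i
            simp only [Pi.add_apply, Pi.smul_apply, Pi.zero_apply, smul_eq_mul] at h0i
            have h0q : (x 0 : ℚ) * (v i : ℚ) + (x 1 : ℚ) * (w₁ i : ℚ)
                + (x 2 : ℚ) * (w₂ i : ℚ) = 0 := by
              exact_mod_cast congrArg (Int.cast : ℤ → ℚ) h0i
            simp only [Pi.add_apply, Pi.smul_apply, smul_eq_mul]
            rw [div_mul_eq_mul_div, div_mul_eq_mul_div, ← add_div, eq_div_iff hx2q]
            linear_combination h0q
          have hq := hL.2 _ hSne
          rw [gram3 L hL.1 v w₁ w₂ (x 0) (x 1) (x 2)] at hq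
          rw [vec3_expand x, quad3']
          linarith [hq]
      have hdetG := det3_pos _ _ _ _ _ _ hGpd2
      rw [det3'] at hdetG
      have hd1' : (v ⬝ᵥ L.mulVec v) * (w₁ ⬝ᵥ L.mulVec w₁) - (v ⬝ᵥ L.mulVec w₁)^2 = ℓ₁.det := by
        rw [← isom_det _ _ hIso1, det2']
      have hd2' : (v ⬝ᵥ L.mulVec v) * (w₂ ⬝ᵥ L.mulVec w₂) - (v ⬝ᵥ L.mulVec w₂)^2 = ℓ₂.det := by
        rw [← isom_det _ _ hIso2, det2']
      have hsq : ((v ⬝ᵥ L.mulVec v) * (w₁ ⬝ᵥ L.mulVec w₂)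
          - (v ⬝ᵥ L.mulVec w₁) * (v ⬝ᵥ L.mulVec w₂))^2 < ℓ₁.det * ℓ₂.det := by
        rw [← hd1', ← hd2']
        nlinarith [mul_pos haI hdetG, hdetG, haI]
      have htoNat : (((v ⬝ᵥ L.mulVec v).toNat : ℤ)) = v ⬝ᵥ L.mulVec v :=
        Int.toNat_of_nonneg haI.le
      refine ⟨(v ⬝ᵥ L.mulVec v).toNat, v ⬝ᵥ L.mulVec w₁, w₁ ⬝ᵥ L.mulVec w₁,
        v ⬝ᵥ L.mulVec w₂, w₂ ⬝ᵥ L.mulVec w₂, by omega, by rw [htoNat]; exact hIso1,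
        by rw [htoNat]; exact hIso2, w₁ ⬝ᵥ L.mulVec w₂, ?_, ?_⟩
      · have hAR : (((v ⬝ᵥ L.mulVec v).toNat : ℕ) : ℝ) = ((v ⬝ᵥ L.mulVec v : ℤ) : ℝ) := by
          exact_mod_cast congrArg (Int.cast : ℤ → ℝ) htoNat
        have haR : (0:ℝ) < ((v ⬝ᵥ L.mulVec v : ℤ) : ℝ) := by exact_mod_cast haI
        have hsqR : (((v ⬝ᵥ L.mulVec v) * (w₁ ⬝ᵥ L.mulVec w₂)
            - (v ⬝ᵥ L.mulVec w₁) * (v ⬝ᵥ L.mulVec w₂) : ℤ) : ℝ)^2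
            < ((ℓ₁.det * ℓ₂.det : ℤ) : ℝ) := by
          have : ((((v ⬝ᵥ L.mulVec v) * (w₁ ⬝ᵥ L.mulVec w₂)
            - (v ⬝ᵥ L.mulVec w₁) * (v ⬝ᵥ L.mulVec w₂))^2 : ℤ) : ℝ)
              < ((ℓ₁.det * ℓ₂.det : ℤ) : ℝ) := by exact_mod_cast hsq
          push_cast at this ⊢
          linarith [this]
        have habs := (Real.lt_sqrt (abs_nonneg _)).mpr (by rw [sq_abs]; exact hsqR)
        have h1 := (abs_lt.mp habs).1
        have h2 := (abs_lt.mp habs).2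
        rw [hAR, div_lt_iff₀ haR]
        push_cast at h1 ⊢
        nlinarith [h1]
      · have hAR : (((v ⬝ᵥ L.mulVec v).toNat : ℕ) : ℝ) = ((v ⬝ᵥ L.mulVec v : ℤ) : ℝ) := by
          exact_mod_cast congrArg (Int.cast : ℤ → ℝ) htoNat
        have haR : (0:ℝ) < ((v ⬝ᵥ L.mulVec v : ℤ) : ℝ) := by exact_mod_cast haI
        have hsqR : (((v ⬝ᵥ L.mulVec v) * (w₁ ⬝ᵥ L.mulVec w₂)
            - (v ⬝ᵥ L.mulVec w₁) * (v ⬝ᵥ L.mulVec w₂) : ℤ) : ℝ)^2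
            < ((ℓ₁.det * ℓ₂.det : ℤ) : ℝ) := by
          have : ((((v ⬝ᵥ L.mulVec v) * (w₁ ⬝ᵥ L.mulVec w₂)
            - (v ⬝ᵥ L.mulVec w₁) * (v ⬝ᵥ L.mulVec w₂))^2 : ℤ) : ℝ)
              < ((ℓ₁.det * ℓ₂.det : ℤ) : ℝ) := by exact_mod_cast hsq
          push_cast at this ⊢
          linarith [this]
        have habs := (Real.lt_sqrt (abs_nonneg _)).mpr (by rw [sq_abs]; exact hsqR)
        have h1 := (abs_lt.mp habs).1
        have h2 := (abs_lt.mp habs).2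
        rw [hAR, lt_div_iff₀ haR]
        push_cast at h2 ⊢
        nlinarith [h2]
  · rintro ⟨a, b₁, c₁, b₂, c₂, haN, hI1, hI2, t, ht1, ht2⟩
    have haZ : (0:ℤ) < (a:ℤ) := by exact_mod_cast haN
    have haR : (0:ℝ) < (a:ℝ) := by exact_mod_cast haN
    -- determinants
    have hd1 : ℓ₁.det = (a:ℤ)*c₁ - b₁^2 := by
      rw [← isom_det _ _ hI1, det2']
    have hd2 : ℓ₂.det = (a:ℤ)*c₂ - b₂^2 := by
      rw [← isom_det _ _ hI2, det2']
    have hd1pos : 0 < (a:ℤ)*c₁ - b₁^2 :=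
      det2_pos' _ _ _ (isom_pd _ _ hI1 h₁.2)
    -- real interval gives integer inequality
    set D : ℝ := ((ℓ₁.det * ℓ₂.det : ℤ) : ℝ) with hD
    have hlt1 : (b₁*b₂ : ℝ) - Real.sqrt D < t * a := by
      rw [div_lt_iff₀ haR] at ht1
      push_cast at ht1 ⊢
      linarith
    have hlt2 : ((t:ℝ)) * a < (b₁*b₂:ℝ) + Real.sqrt D := by
      rw [lt_div_iff₀ haR] at ht2
      push_cast at ht2 ⊢
      linarith
    have habs : |(t:ℝ) * a - b₁*b₂| < Real.sqrt D := by
      rw [abs_lt]; constructor <;> linarith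
    have hsqrtpos : 0 < Real.sqrt D := lt_of_le_of_lt (abs_nonneg _) habs
    have hDnn : 0 ≤ D := by
      by_contra hcon
      push_neg at hcon
      rw [Real.sqrt_eq_zero_of_nonpos hcon.le] at hsqrtpos
      exact lt_irrefl 0 hsqrtpos
    have hsqR : ((t:ℝ) * a - b₁*b₂)^2 < D := by
      have := mul_self_lt_mul_self (abs_nonneg _) habs
      rw [abs_mul_abs_self, Real.mul_self_sqrt hDnn] at this
      nlinarith [this]
    have hsqZ : ((a:ℤ)*t - b₁*b₂)^2 < ℓ₁.det * ℓ₂.det := by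
      have hsqR' := hsqR
      rw [hD] at hsqR'
      push_cast at hsqR'
      have : ((((a:ℤ)*t - b₁*b₂)^2 : ℤ) : ℝ) < ((ℓ₁.det * ℓ₂.det : ℤ) : ℝ) := by
        push_cast
        nlinarith [hsqR']
      exact_mod_cast this
    have hkey : ((a:ℤ)*t - b₁*b₂)^2 < ((a:ℤ)*c₁ - b₁^2) * ((a:ℤ)*c₂ - b₂^2) := by
      rw [hd1, hd2] at hsqZ; exact hsqZ
    set G : Matrix (Fin 3) (Fin 3) ℤ := !![(a:ℤ),b₁,b₂;b₁,c₁,t;b₂,t,c₂] with hGdef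
    have hdetG : 0 < G.det := by
      rw [hGdef, det3']
      have h5 : 0 < (a:ℤ) * ((a:ℤ)*c₁*c₂ - (a:ℤ)*t^2 - b₁^2*c₂ + 2*b₁*b₂*t - b₂^2*c₁) := by
        nlinarith [hkey]
      by_contra hcon
      push_neg at hcon
      nlinarith [h5, mul_nonpos_of_nonneg_of_nonpos haZ.le hcon]
    have hGpd : IsPDForm G := by
      constructor
      · ext i j
        fin_cases i <;> fin_cases j <;> simp [hGdef, Matrix.IsSymm]
      · rw [hGdef]
        exact pd3_of_minors _ _ _ _ _ _ haZ hd1pos (hGdef ▸ hdetG)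
    refine ⟨G, hGpd, ?_, ?_⟩
    · obtain ⟨U, hU, hEq⟩ := hI1
      have hE : (!![1,0;0,1;0,0] : Matrix (Fin 3) (Fin 2) ℤ)ᵀ * G *
          (!![1,0;0,1;0,0] : Matrix (Fin 3) (Fin 2) ℤ) = !![(a:ℤ),b₁;b₁,c₁] := by
        rw [hGdef]
        ext i j
        fin_cases i <;> fin_cases j <;>
          simp [Matrix.mul_apply, Fin.sum_univ_three, Fin.sum_univ_two, Matrix.transpose,
            Matrix.vecHead, Matrix.vecTail]
      refine ⟨(!![1,0;0,1;0,0] : Matrix (Fin 3) (Fin 2) ℤ) * U⁻¹, ?_⟩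
      have h6 : (U⁻¹)ᵀ * Uᵀ = 1 := by
        rw [← Matrix.transpose_mul, Matrix.mul_nonsing_inv _ hU, Matrix.transpose_one]
      have h7 : U * U⁻¹ = 1 := Matrix.mul_nonsing_inv _ hU
      calc ((!![1,0;0,1;0,0] : Matrix (Fin 3) (Fin 2) ℤ) * U⁻¹)ᵀ * G *
            ((!![1,0;0,1;0,0] : Matrix (Fin 3) (Fin 2) ℤ) * U⁻¹)
          = (U⁻¹)ᵀ * ((!![1,0;0,1;0,0] : Matrix (Fin 3) (Fin 2) ℤ)ᵀ * G *
              (!![1,0;0,1;0,0] : Matrix (Fin 3) (Fin 2) ℤ)) * U⁻¹ := by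
            rw [Matrix.transpose_mul]
            simp only [Matrix.mul_assoc]
        _ = (U⁻¹)ᵀ * (Uᵀ * ℓ₁ * U) * U⁻¹ := by rw [hE, hEq]
        _ = ((U⁻¹)ᵀ * Uᵀ) * ℓ₁ * (U * U⁻¹) := by simp only [Matrix.mul_assoc]
        _ = ℓ₁ := by rw [h6, h7, Matrix.one_mul, Matrix.mul_one]
    · obtain ⟨U, hU, hEq⟩ := hI2
      have hE : (!![1,0;0,0;0,1] : Matrix (Fin 3) (Fin 2) ℤ)ᵀ * G *
          (!![1,0;0,0;0,1] : Matrix (Fin 3) (Fin 2) ℤ) = !![(a:ℤ),b₂;b₂,c₂] := by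
        rw [hGdef]
        ext i j
        fin_cases i <;> fin_cases j <;>
          simp [Matrix.mul_apply, Fin.sum_univ_three, Fin.sum_univ_two, Matrix.transpose,
            Matrix.vecHead, Matrix.vecTail]
      refine ⟨(!![1,0;0,0;0,1] : Matrix (Fin 3) (Fin 2) ℤ) * U⁻¹, ?_⟩
      have h6 : (U⁻¹)ᵀ * Uᵀ = 1 := by
        rw [← Matrix.transpose_mul, Matrix.mul_nonsing_inv _ hU, Matrix.transpose_one]
      have h7 : U * U⁻¹ = 1 := Matrix.mul_nonsing_inv _ hU
      calc ((!![1,0;0,0;0,1] : Matrix (Fin 3) (Fin 2) ℤ) * U⁻¹)ᵀ * G *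
            ((!![1,0;0,0;0,1] : Matrix (Fin 3) (Fin 2) ℤ) * U⁻¹)
          = (U⁻¹)ᵀ * ((!![1,0;0,0;0,1] : Matrix (Fin 3) (Fin 2) ℤ)ᵀ * G *
              (!![1,0;0,0;0,1] : Matrix (Fin 3) (Fin 2) ℤ)) * U⁻¹ := by
            rw [Matrix.transpose_mul]
            simp only [Matrix.mul_assoc]
        _ = (U⁻¹)ᵀ * (Uᵀ * ℓ₂ * U) * U⁻¹ := by rw [hE, hEq]
        _ = ((U⁻¹)ᵀ * Uᵀ) * ℓ₂ * (U * U⁻¹) := by simp only [Matrix.mul_assoc]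
        _ = ℓ₂ := by rw [h6, h7, Matrix.one_mul, Matrix.mul_one]
end

section
/- Let ℓ₁ and ℓ₂ be positive definite integral binary quadratic forms. Suppose there exists a positive integer a with a² ≤ 4 · det ℓ₁ · det ℓ₂ that is primitively represented by both ℓ₁ and ℓ₂. Then there exists a positive definite integral ternary quadratic form representing both ℓ₁ and ℓ₂ (the pair is buried in rank 3). -/
open Matrix

private lemma quad_congr {n m : ℕ} (A : Matrix (Fin n) (Fin n) ℤ)
    (P : Matrix (Fin n) (Fin m) ℤ) (x : Fin m → ℤ) :
    x ⬝ᵥ (Pᵀ * A * P).mulVec x = (P.mulVec x) ⬝ᵥ A.mulVec (P.mulVec x) := by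
  rw [← Matrix.mulVec_mulVec, ← Matrix.mulVec_mulVec, Matrix.dotProduct_mulVec,
    Matrix.vecMul_transpose]

private lemma pd2_pos_det (ℓ : Matrix (Fin 2) (Fin 2) ℤ) (h : IsPDForm ℓ) :
    0 < ℓ.det := by
  have h00 : 0 < ℓ 0 0 := by
    have := h.2 ![1, 0] (by intro hc; simpa using congrFun hc 0)
    simpa [dotProduct, Matrix.mulVec, Fin.sum_univ_two] using this
  have h10 : ℓ 1 0 = ℓ 0 1 := by
    have := h.1; rw [Matrix.IsSymm] at this
    have := congrFun (congrFun this 1) 0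
    simpa using this.symm
  have hv : 0 < (![ℓ 0 1, -(ℓ 0 0)] : Fin 2 → ℤ) ⬝ᵥ ℓ.mulVec ![ℓ 0 1, -(ℓ 0 0)] := by
    apply h.2
    intro hc
    have := congrFun hc 1
    simp at this
    omega
  have hexp : (![ℓ 0 1, -(ℓ 0 0)] : Fin 2 → ℤ) ⬝ᵥ ℓ.mulVec ![ℓ 0 1, -(ℓ 0 0)]
      = ℓ 0 0 * ℓ.det := by
    simp [dotProduct, Matrix.mulVec, Fin.sum_univ_two, Matrix.det_fin_two, h10]
    ring
  rw [hexp] at hv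
  nlinarith

private lemma glue_id (a b₁ c₁ b₂ c₂ e : ℤ) (x : Fin 3 → ℤ) :
    a * (a*c₁ - b₁^2) * (x ⬝ᵥ (!![a, b₁, b₂; b₁, c₁, e; b₂, e, c₂]).mulVec x) =
      (a*c₁ - b₁^2) * (a * x 0 + b₁ * x 1 + b₂ * x 2)^2
      + ((a*c₁-b₁^2) * x 1 + (a*e - b₁*b₂) * x 2)^2
      + ((a*c₁-b₁^2)*(a*c₂-b₂^2) - (a*e-b₁*b₂)^2) * x 2^2 := by
  simp [dotProduct, Matrix.mulVec, Fin.sum_univ_three]; ring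

private lemma glue_pd (a b₁ c₁ b₂ c₂ e : ℤ) (ha : 0 < a) (hd₁ : 0 < a*c₁ - b₁^2)
    (hD : 0 < (a*c₁-b₁^2)*(a*c₂-b₂^2) - (a*e-b₁*b₂)^2) :
    IsPDForm !![a, b₁, b₂; b₁, c₁, e; b₂, e, c₂] := by
  constructor
  · rw [Matrix.IsSymm]
    ext i j
    fin_cases i <;> fin_cases j <;> simp
  · intro x hx
    have key := glue_id a b₁ c₁ b₂ c₂ e x
    by_contra hle
    push_neg at hle
    have h1 : 0 ≤ (a*c₁ - b₁^2) * (a * x 0 + b₁ * x 1 + b₂ * x 2)^2 := by positivity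
    have h2 : 0 ≤ ((a*c₁-b₁^2) * x 1 + (a*e - b₁*b₂) * x 2)^2 := by positivity
    have h3 : 0 ≤ ((a*c₁-b₁^2)*(a*c₂-b₂^2) - (a*e-b₁*b₂)^2) * x 2^2 := by positivity
    have hlhs : a * (a*c₁ - b₁^2) *
        (x ⬝ᵥ (!![a, b₁, b₂; b₁, c₁, e; b₂, e, c₂]).mulVec x) ≤ 0 := by
      have : 0 < a * (a*c₁ - b₁^2) := by positivity
      nlinarith
    have hx2 : x 2 = 0 := by
      by_contra h
      have h4 : 0 < x 2 ^ 2 := by positivity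
      nlinarith [mul_pos hD h4]
    have hx1 : x 1 = 0 := by
      rw [hx2] at key
      by_contra h
      have h4 : 0 < x 1 ^ 2 := by positivity
      nlinarith [mul_nonneg hd₁.le (sq_nonneg (a * x 0 + b₁ * x 1)),
        mul_pos (mul_pos hd₁ hd₁) h4]
    have hx0 : x 0 = 0 := by
      rw [hx2, hx1] at key
      by_contra h
      have h4 : 0 < x 0 ^ 2 := by positivity
      nlinarith [mul_pos (mul_pos ha ha) h4, mul_pos hd₁ (mul_pos (mul_pos ha ha) h4)]
    apply hx
    funext i
    fin_cases i <;> assumption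

private lemma reduce_binary (ℓ : Matrix (Fin 2) (Fin 2) ℤ) (hsymm : ℓ.IsSymm) (a : ℤ)
    (x : Fin 2 → ℤ) (hcop : IsCoprime (x 0) (x 1)) (hval : x ⬝ᵥ ℓ.mulVec x = a) :
    ∃ b c : ℤ, ∃ Q : Matrix (Fin 2) (Fin 2) ℤ,
      Qᵀ * !![a, b; b, c] * Q = ℓ ∧ a * c - b ^ 2 = ℓ.det := by
  obtain ⟨u, w, huw⟩ := hcop
  set P : Matrix (Fin 2) (Fin 2) ℤ := !![x 0, -w; x 1, u] with hP
  have hdetP : P.det = 1 := by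
    simp [hP, Matrix.det_fin_two]
    linear_combination huw
  set M := Pᵀ * ℓ * P with hMdef
  have hM00 : M 0 0 = a := by
    rw [← hval]
    simp [hMdef, hP, Matrix.mul_apply, dotProduct, Matrix.mulVec,
      Fin.sum_univ_two, Matrix.vecHead, Matrix.vecTail]
    ring
  have hMsymm : Mᵀ = M := by
    rw [hMdef, Matrix.transpose_mul, Matrix.transpose_mul, Matrix.transpose_transpose,
      hsymm.eq, Matrix.mul_assoc]
  have hM10 : M 1 0 = M 0 1 := by
    conv_lhs => rw [← hMsymm]
    rfl
  have hMeq : M = !![a, M 0 1; M 0 1, M 1 1] := by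
    ext i j
    fin_cases i <;> fin_cases j <;> simp [hM00, hM10]
  refine ⟨M 0 1, M 1 1, P.adjugate, ?_, ?_⟩
  · have hPQ : P * P.adjugate = 1 := by
      rw [Matrix.mul_adjugate, hdetP, one_smul]
    calc P.adjugateᵀ * !![a, M 0 1; M 0 1, M 1 1] * P.adjugate
        = P.adjugateᵀ * (Pᵀ * ℓ * P) * P.adjugate := by rw [← hMeq]
      _ = (P * P.adjugate)ᵀ * ℓ * (P * P.adjugate) := by
          simp only [Matrix.transpose_mul, Matrix.mul_assoc]
      _ = ℓ := by rw [hPQ]; simp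
  · have : M.det = ℓ.det := by
      rw [hMdef, Matrix.det_mul, Matrix.det_mul, Matrix.det_transpose, hdetP]
      ring
    rw [hMeq] at this
    simp [Matrix.det_fin_two] at this
    rw [Matrix.det_fin_two]
    linear_combination this

private def E₁ : Matrix (Fin 3) (Fin 2) ℤ := !![1,0;0,1;0,0]
private def E₂ : Matrix (Fin 3) (Fin 2) ℤ := !![1,0;0,0;0,1]

private lemma embed1 (a b₁ c₁ b₂ c₂ e : ℤ) :
    E₁ᵀ * !![a, b₁, b₂; b₁, c₁, e; b₂, e, c₂] * E₁ = !![a, b₁; b₁, c₁] := by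
  ext i j
  fin_cases i <;> fin_cases j <;>
    simp [E₁, Matrix.mul_apply, Fin.sum_univ_three, Fin.sum_univ_two,
      Matrix.vecHead, Matrix.vecTail]

private lemma embed2 (a b₁ c₁ b₂ c₂ e : ℤ) :
    E₂ᵀ * !![a, b₁, b₂; b₁, c₁, e; b₂, e, c₂] * E₂ = !![a, b₂; b₂, c₂] := by
  ext i j
  fin_cases i <;> fin_cases j <;>
    simp [E₂, Matrix.mul_apply, Fin.sum_univ_three, Fin.sum_univ_two,
      Matrix.vecHead, Matrix.vecTail]

private def lift2 (R : Matrix (Fin 2) (Fin 2) ℤ) : Matrix (Fin 3) (Fin 2) ℤ :=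
  !![R 0 0, R 0 1; R 1 0, R 1 1; 0, 0]

private def ext3 (K : Matrix (Fin 2) (Fin 2) ℤ) : Matrix (Fin 3) (Fin 3) ℤ :=
  !![K 0 0, K 0 1, 0; K 1 0, K 1 1, 0; 0, 0, 1]

private lemma lift2_spec (K : Matrix (Fin 2) (Fin 2) ℤ) (R : Matrix (Fin 2) (Fin 2) ℤ) :
    (lift2 R)ᵀ * ext3 K * lift2 R = Rᵀ * K * R := by
  ext i j
  fin_cases i <;> fin_cases j <;>
    simp [lift2, ext3, Matrix.mul_apply, Fin.sum_univ_three, Fin.sum_univ_two,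
      Matrix.vecHead, Matrix.vecTail] <;> ring

private lemma ext3_pd (K : Matrix (Fin 2) (Fin 2) ℤ) (hK : IsPDForm K) :
    IsPDForm (ext3 K) := by
  have h10 : K 1 0 = K 0 1 := by
    have := congrFun (congrFun hK.1 0) 1
    simpa using this
  constructor
  · rw [Matrix.IsSymm]
    ext i j
    fin_cases i <;> fin_cases j <;> simp [ext3, h10]
  · intro x hx
    have hq : x ⬝ᵥ (ext3 K).mulVec x =
        (![x 0, x 1] : Fin 2 → ℤ) ⬝ᵥ K.mulVec ![x 0, x 1] + x 2 * x 2 := by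
      simp [ext3, dotProduct, Matrix.mulVec, Fin.sum_univ_three, Fin.sum_univ_two,
        Matrix.vecHead, Matrix.vecTail]
    rw [hq]
    by_cases h01 : (![x 0, x 1] : Fin 2 → ℤ) = 0
    · have hx0 : x 0 = 0 := by simpa using congrFun h01 0
      have hx1 : x 1 = 0 := by simpa using congrFun h01 1
      have hx2 : x 2 ≠ 0 := by
        intro hc
        exact hx (funext fun i => by fin_cases i <;> assumption)
      have : 0 ≤ (![x 0, x 1] : Fin 2 → ℤ) ⬝ᵥ K.mulVec ![x 0, x 1] := by
        rw [h01]
        simp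
      nlinarith [mul_self_pos.mpr hx2]
    · have := hK.2 _ h01
      nlinarith [mul_self_nonneg (x 2)]

private lemma degenerate_case (a b₁ c₁ b₂ c₂ e : ℤ) (ha : 0 < a)
    (hd₁ : 0 < a*c₁ - b₁^2) (hd₂ : 0 < a*c₂ - b₂^2)
    (hdeg : (a*e - b₁*b₂)^2 = (a*c₁-b₁^2)*(a*c₂-b₂^2)) :
    ∃ K : Matrix (Fin 2) (Fin 2) ℤ, IsPDForm K ∧
      ∃ S : Matrix (Fin 2) (Fin 3) ℤ,
        Sᵀ * K * S = !![a, b₁, b₂; b₁, c₁, e; b₂, e, c₂] := by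
  set d₁ : ℤ := a*c₁ - b₁^2 with hd₁def
  set s : ℤ := a*e - b₁*b₂ with hsdef
  set L : Matrix (Fin 3) (Fin 3) ℤ := !![a, b₁, b₂; b₁, c₁, e; b₂, e, c₂] with hLdef
  have hs0 : s ≠ 0 := by
    intro h
    rw [h] at hdeg
    nlinarith
  -- the (unscaled) kernel vector
  set v' : Fin 3 → ℤ := ![b₁*e - b₂*c₁, -s, d₁] with hv'def
  have hLv' : L.mulVec v' = 0 := by
    funext i
    fin_cases i <;>
      simp [hLdef, hv'def, Matrix.mulVec, dotProduct, Fin.sum_univ_three] <;>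
      [skip; skip; skip]
    · simp only [hd₁def, hsdef]; ring
    · simp only [hd₁def, hsdef]; ring
    · have key : a * (b₂ * (b₁*e - b₂*c₁) + e * (-s) + c₂ * d₁) = 0 := by
        rw [hd₁def, hsdef]; linear_combination -hdeg
      have := mul_left_cancel₀ (ne_of_gt ha) (by linarith [key] : a * (b₂ * (b₁*e - b₂*c₁) + e * (-s) + c₂ * d₁) = a * 0)
      linear_combination this
  -- primitivize
  set g : ℕ := Int.gcd (Int.gcd (v' 0) (v' 1)) (v' 2) with hgdef
  have hv'2 : v' 2 = d₁ := by simp [hv'def]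
  have hv'1 : v' 1 = -s := by simp [hv'def]
  have hgpos : 0 < g := by
    rw [hgdef, Int.gcd_pos_iff]
    right
    rw [hv'2]
    exact ne_of_gt hd₁
  have hgdvd : ∀ i, (g:ℤ) ∣ v' i := by
    intro i
    fin_cases i
    · exact dvd_trans (Int.gcd_dvd_left _ _) (Int.gcd_dvd_left _ _)
    · exact dvd_trans (Int.gcd_dvd_left _ _) (Int.gcd_dvd_right _ _)
    · exact Int.gcd_dvd_right _ _
  set v : Fin 3 → ℤ := fun i => v' i / (g:ℤ) with hvdef
  have hvsmul : ∀ i, (g:ℤ) * v i = v' i := fun i => Int.mul_ediv_cancel' (hgdvd i)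
  have hgne : (g:ℤ) ≠ 0 := by exact_mod_cast ne_of_gt hgpos
  have hLv : L.mulVec v = 0 := by
    funext i
    have h1 : (g:ℤ) * (L.mulVec v) i = (L.mulVec v') i := by
      simp [Matrix.mulVec, dotProduct, Fin.sum_univ_three, ← hvsmul]
      ring
    have h2 : (L.mulVec v') i = 0 := by rw [hLv']; rfl
    have := h1.trans h2
    exact (mul_eq_zero.mp this).resolve_left hgne
  have hv2pos : 0 < v 2 := by
    have h := hvsmul 2
    rw [hv'2] at h
    rcases lt_trichotomy (v 2) 0 with hc | hc | hc
    · have : (g:ℤ) * v 2 < 0 :=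
        mul_neg_of_pos_of_neg (by exact_mod_cast hgpos) hc
      linarith
    · rw [hc] at h; simp at h; exact absurd h.symm (ne_of_gt hd₁)
    · exact hc
  have hv1ne : v 1 ≠ 0 := by
    intro hc
    have h := hvsmul 1
    rw [hv'1, hc] at h
    simp at h
    omega
  have hprim : Int.gcd (Int.gcd (v 0) (v 1)) (v 2) = 1 := by
    set h : ℕ := Int.gcd (Int.gcd (v 0) (v 1)) (v 2) with hhdef
    have hdvd : ∀ i, ((g*h : ℕ) : ℤ) ∣ v' i := by
      intro i
      rw [← hvsmul i]
      push_cast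
      apply mul_dvd_mul_left
      fin_cases i
      · exact dvd_trans (Int.gcd_dvd_left _ _) (Int.gcd_dvd_left _ _)
      · exact dvd_trans (Int.gcd_dvd_left _ _) (Int.gcd_dvd_right _ _)
      · exact Int.gcd_dvd_right _ _
    have : ((g*h : ℕ) : ℤ) ∣ (g : ℤ) := by
      rw [hgdef]
      exact Int.natCast_dvd_natCast.mpr (Int.dvd_gcd (Int.natCast_dvd_natCast.mpr (Int.dvd_gcd (hdvd 0) (hdvd 1))) (hdvd 2))
    rw [Int.natCast_dvd_natCast] at this
    have h1 : h ∣ 1 := (Nat.mul_dvd_mul_iff_left hgpos).mp (by simpa using this)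
    exact Nat.dvd_one.mp h1
  -- Bezout data for (v 1, v 2)
  set g₂ : ℕ := Int.gcd (v 1) (v 2) with hg₂def
  have hg₂pos : 0 < g₂ := by
    rw [hg₂def, Int.gcd_pos_iff]; exact Or.inl hv1ne
  have hg₂ne : ((g₂:ℤ)) ≠ 0 := by exact_mod_cast ne_of_gt hg₂pos
  set α : ℤ := Int.gcdA (v 1) (v 2) with hαdef
  set β : ℤ := Int.gcdB (v 1) (v 2) with hβdef
  have hBez : ((g₂:ℤ)) = v 1 * α + v 2 * β := Int.gcd_eq_gcd_ab (v 1) (v 2)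
  have hpdvd : ((g₂:ℤ)) ∣ v 1 := Int.gcd_dvd_left _ _
  have hqdvd : ((g₂:ℤ)) ∣ v 2 := Int.gcd_dvd_right _ _
  set p' : ℤ := v 1 / (g₂:ℤ) with hp'def
  set q' : ℤ := v 2 / (g₂:ℤ) with hq'def
  have hp : ((g₂:ℤ)) * p' = v 1 := Int.mul_ediv_cancel' hpdvd
  have hq : ((g₂:ℤ)) * q' = v 2 := Int.mul_ediv_cancel' hqdvd
  have hcan : p' * α + q' * β = 1 := by
    have : ((g₂:ℤ)) * (p' * α + q' * β) = ((g₂:ℤ)) * 1 := by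
      rw [mul_one]
      calc ((g₂:ℤ)) * (p' * α + q' * β) = ((g₂:ℤ) * p') * α + ((g₂:ℤ) * q') * β := by ring
        _ = v 1 * α + v 2 * β := by rw [hp, hq]
        _ = ((g₂:ℤ)) := hBez.symm
    exact mul_left_cancel₀ hg₂ne this
  -- coprimality of g₂ with v 0
  have hgr : Int.gcd ((g₂:ℤ)) (v 0) = 1 := by
    have e1 : Int.gcd ((g₂:ℤ)) (v 0) = Nat.gcd (Nat.gcd (v 1).natAbs (v 2).natAbs) (v 0).natAbs := by
      simp [Int.gcd, hg₂def]
    have e2 : Nat.gcd (Nat.gcd (v 0).natAbs (v 1).natAbs) (v 2).natAbs = 1 := by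
      simpa [Int.gcd] using hprim
    rw [e1, Nat.gcd_comm, ← Nat.gcd_assoc]
    exact e2
  set γ : ℤ := Int.gcdA ((g₂:ℤ)) (v 0) with hγdef
  set δ : ℤ := Int.gcdB ((g₂:ℤ)) (v 0) with hδdef
  have h1 : (1:ℤ) = (g₂:ℤ) * γ + v 0 * δ := by
    have := Int.gcd_eq_gcd_ab ((g₂:ℤ)) (v 0)
    rw [hgr] at this
    exact_mod_cast this
  -- the unimodular matrix
  set U : Matrix (Fin 3) (Fin 3) ℤ := !![v 0, 0, γ; v 1, -β, -δ*p'; v 2, α, -δ*q'] with hUdef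
  have hdetU : U.det = 1 := by
    rw [hUdef, Matrix.det_fin_three]
    simp
    linear_combination (v 0 * δ) * hcan - γ * hBez - h1
  set V : Matrix (Fin 3) (Fin 3) ℤ := U.adjugate with hVdef
  have hUV : U * V = 1 := by rw [hVdef, Matrix.mul_adjugate, hdetU, one_smul]
  have hVU : V * U = 1 := by rw [hVdef, Matrix.adjugate_mul, hdetU, one_smul]
  set B : Matrix (Fin 3) (Fin 3) ℤ := Uᵀ * L * U with hBdef
  have hLsymm : Lᵀ = L := by
    rw [hLdef]; ext i j; fin_cases i <;> fin_cases j <;> simp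
  have hBsymm : Bᵀ = B := by
    rw [hBdef, Matrix.transpose_mul, Matrix.transpose_mul, Matrix.transpose_transpose,
      hLsymm, Matrix.mul_assoc]
  have hUcol : ∀ k, U k 0 = v k := by
    intro k; fin_cases k <;> simp [hUdef]
  have hLU0 : ∀ k, (L * U) k 0 = 0 := by
    intro k
    have h := congrFun hLv k
    simp only [Matrix.mulVec, dotProduct, Pi.zero_apply] at h
    rw [Matrix.mul_apply]
    simpa [hUcol] using h
  have hB0 : ∀ i, B i 0 = 0 := by
    intro i
    rw [hBdef, Matrix.mul_assoc, Matrix.mul_apply]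
    simp [hLU0]
  have hB0' : ∀ i, B 0 i = 0 := by
    intro i
    have := congrFun (congrFun hBsymm i) 0
    rw [Matrix.transpose_apply] at this
    rw [this]; exact hB0 i
  set K : Matrix (Fin 2) (Fin 2) ℤ := !![B 1 1, B 1 2; B 2 1, B 2 2] with hKdef
  set S : Matrix (Fin 2) (Fin 3) ℤ := !![V 1 0, V 1 1, V 1 2; V 2 0, V 2 1, V 2 2] with hSdef
  have hLVBV : L = Vᵀ * B * V := by
    have : Vᵀ * B * V = (U * V)ᵀ * L * (U * V) := by
      rw [hBdef]
      simp only [Matrix.transpose_mul, Matrix.mul_assoc]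
    rw [this, hUV]
    simp
  have hfact : Sᵀ * K * S = L := by
    rw [hLVBV]
    ext i j
    simp only [hSdef, hKdef, Matrix.mul_apply, Fin.sum_univ_three, Fin.sum_univ_two,
      Matrix.transpose_apply, Matrix.cons_val', Matrix.cons_val_zero, Matrix.cons_val_one,
      Matrix.head_cons, Matrix.head_fin_const, Matrix.empty_val', Matrix.cons_val_fin_one]
    fin_cases i <;> fin_cases j <;>
      simp [hB0, hB0'] <;> ring
  clear_value d₁ s L v g₂ α β p' q' γ δ U V B K S
  refine ⟨K, ⟨?_, ?_⟩, S, hfact⟩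
  · rw [Matrix.IsSymm]
    ext i j
    fin_cases i <;> fin_cases j <;> simp [hKdef]
    · exact congrFun (congrFun hBsymm 1) 2
    · exact congrFun (congrFun hBsymm 2) 1
  · intro x hx
    set xt : Fin 3 → ℤ := ![0, x 0, x 1] with hxtdef
    set y : Fin 3 → ℤ := U.mulVec xt with hydef
    have hyi : ∀ i, y i = U i 1 * x 0 + U i 2 * x 1 := by
      intro i
      simp [hydef, hxtdef, Matrix.mulVec, dotProduct, Fin.sum_univ_three]
    clear_value y
    have h1 : x ⬝ᵥ K.mulVec x = xt ⬝ᵥ B.mulVec xt := by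
      simp [hKdef, hxtdef, dotProduct, Matrix.mulVec, Fin.sum_univ_two,
        Fin.sum_univ_three, hB0 1, hB0 2, hB0' 1, hB0' 2]
    have h2 : xt ⬝ᵥ B.mulVec xt = y ⬝ᵥ L.mulVec y := by
      rw [hBdef, quad_congr, ← hydef]
    clear_value xt
    have key := glue_id a b₁ c₁ b₂ c₂ e y
    rw [← hLdef, ← hd₁def, ← hsdef] at key
    have hzero : d₁ * (a*c₂-b₂^2) - s^2 = 0 := by linarith [hdeg]
    by_contra hle
    push_neg at hle
    have key2 : a * d₁ * (y ⬝ᵥ L.mulVec y) =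
        d₁ * (a * y 0 + b₁ * y 1 + b₂ * y 2)^2 + (d₁ * y 1 + s * y 2)^2 := by
      linear_combination key + y 2 ^ 2 * hzero
    have hyL : y ⬝ᵥ L.mulVec y ≤ 0 := by linarith [h1, h2, hle]
    have hnn : 0 ≤ a * d₁ * (y ⬝ᵥ L.mulVec y) := by
      rw [key2]; positivity
    have hnp : a * d₁ * (y ⬝ᵥ L.mulVec y) ≤ 0 :=
      mul_nonpos_iff.mpr (Or.inl ⟨(mul_pos ha hd₁).le, hyL⟩)
    have hQ0 : a * d₁ * (y ⬝ᵥ L.mulVec y) = 0 := le_antisymm hnp hnn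
    have hsum : d₁ * (a * y 0 + b₁ * y 1 + b₂ * y 2)^2 + (d₁ * y 1 + s * y 2)^2 = 0 := by
      linarith [key2, hQ0]
    have hA : a * y 0 + b₁ * y 1 + b₂ * y 2 = 0 := by
      have e1 : d₁ * (a * y 0 + b₁ * y 1 + b₂ * y 2)^2 = 0 := by
        linarith [sq_nonneg (d₁ * y 1 + s * y 2),
          mul_nonneg hd₁.le (sq_nonneg (a * y 0 + b₁ * y 1 + b₂ * y 2))]
      have e2 := (mul_eq_zero.mp e1).resolve_left (ne_of_gt hd₁)
      exact pow_eq_zero_iff (by norm_num) |>.mp e2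
    have hBq : d₁ * y 1 + s * y 2 = 0 := by
      have e1 : (d₁ * y 1 + s * y 2)^2 = 0 := by
        linarith [mul_nonneg hd₁.le (sq_nonneg (a * y 0 + b₁ * y 1 + b₂ * y 2)),
          sq_nonneg (d₁ * y 1 + s * y 2)]
      exact pow_eq_zero_iff (by norm_num) |>.mp e1
    -- the corresponding relations for v
    have hva : a * v 0 + b₁ * v 1 + b₂ * v 2 = 0 := by
      have := congrFun hLv 0
      simp [hLdef, Matrix.mulVec, dotProduct, Fin.sum_univ_three] at this
      linear_combination this
    have hvb : d₁ * v 1 + s * v 2 = 0 := by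
      have hg1 := hvsmul 1
      have hg2 := hvsmul 2
      rw [hv'1] at hg1
      rw [hv'2] at hg2
      have : (g:ℤ) * (d₁ * v 1 + s * v 2) = 0 := by
        calc (g:ℤ) * (d₁ * v 1 + s * v 2) = d₁ * ((g:ℤ) * v 1) + s * ((g:ℤ) * v 2) := by ring
          _ = d₁ * (-s) + s * d₁ := by rw [hg1, hg2]
          _ = 0 := by ring
      exact (mul_eq_zero.mp this).resolve_left hgne
    have hr1 : y 1 * v 2 = y 2 * v 1 := by
      have : d₁ * (y 1 * v 2 - y 2 * v 1) = 0 := by linear_combination v 2 * hBq - y 2 * hvb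
      have := (mul_eq_zero.mp this).resolve_left (ne_of_gt hd₁)
      linarith
    have hr0 : y 0 * v 2 = y 2 * v 0 := by
      have : a * (y 0 * v 2 - y 2 * v 0) = 0 := by
        linear_combination v 2 * hA - y 2 * hva - b₁ * hr1
      have := (mul_eq_zero.mp this).resolve_left (ne_of_gt ha)
      linarith
    set z : Fin 3 → ℤ := ![-(y 2), v 2 * x 0, v 2 * x 1] with hzdef
    have hUz : U.mulVec z = 0 := by
      funext i
      simp only [Pi.zero_apply]
      have hcomp : (U.mulVec z) i = v 2 * y i - y 2 * v i := by
        rw [hyi i, ← hUcol i]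
        simp [hzdef, Matrix.mulVec, dotProduct, Fin.sum_univ_three]
        ring
      rw [hcomp]
      fin_cases i
      · show v 2 * y 0 - y 2 * v 0 = 0
        linear_combination hr0
      · show v 2 * y 1 - y 2 * v 1 = 0
        linear_combination hr1
      · show v 2 * y 2 - y 2 * v 2 = 0
        ring
    have hz0 : z = 0 := by
      have : (V * U).mulVec z = V.mulVec (U.mulVec z) := by
        rw [← Matrix.mulVec_mulVec]
      rw [hVU, hUz] at this
      simpa using this
    have hx0 : x 0 = 0 := by
      have := congrFun hz0 1
      simp [hzdef] at this
      rcases this with h | h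
      · exact absurd h (ne_of_gt hv2pos)
      · exact h
    have hx1 : x 1 = 0 := by
      have := congrFun hz0 2
      simp [hzdef] at this
      rcases this with h | h
      · exact absurd h (ne_of_gt hv2pos)
      · exact h
    exact hx (funext fun i => by fin_cases i <;> assumption)


/-- If a positive integer a with a² ≤ 4 det ℓ₁ det ℓ₂ is primitively represented by both
binary forms ℓ₁ and ℓ₂, then the pair (ℓ₁, ℓ₂) is buried in rank 3. -/
theorem buried_in_rank_three_of_small_common_value (ℓ₁ ℓ₂ : Matrix (Fin 2) (Fin 2) ℤ)
    (h₁ : IsPDForm ℓ₁) (h₂ : IsPDForm ℓ₂)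
    (a : ℕ) (ha : 0 < a) (hbound : (a : ℤ) ^ 2 ≤ 4 * ℓ₁.det * ℓ₂.det)
    (hr₁ : ∃ x : Fin 2 → ℤ, IsCoprime (x 0) (x 1) ∧ x ⬝ᵥ ℓ₁.mulVec x = (a : ℤ))
    (hr₂ : ∃ x : Fin 2 → ℤ, IsCoprime (x 0) (x 1) ∧ x ⬝ᵥ ℓ₂.mulVec x = (a : ℤ)) :
    ∃ L : Matrix (Fin 3) (Fin 3) ℤ, IsPDForm L ∧ Represents L ℓ₁ ∧ Represents L ℓ₂ := by
  obtain ⟨x₁, hc₁, hv₁⟩ := hr₁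
  obtain ⟨x₂, hc₂, hv₂⟩ := hr₂
  obtain ⟨b₁, c₁, Q₁, hQ₁, hdet₁⟩ := reduce_binary ℓ₁ h₁.1 (a : ℤ) x₁ hc₁ hv₁
  obtain ⟨b₂, c₂, Q₂, hQ₂, hdet₂⟩ := reduce_binary ℓ₂ h₂.1 (a : ℤ) x₂ hc₂ hv₂
  have haZ : (0:ℤ) < (a:ℤ) := by exact_mod_cast ha
  have hd₁ : 0 < (a:ℤ)*c₁ - b₁^2 := by rw [hdet₁]; exact pd2_pos_det ℓ₁ h₁
  have hd₂ : 0 < (a:ℤ)*c₂ - b₂^2 := by rw [hdet₂]; exact pd2_pos_det ℓ₂ h₂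
  set e : ℤ := (2*(b₁*b₂) + (a:ℤ)) / (2*(a:ℤ)) with hedef
  have hs : 4*((a:ℤ)*e - b₁*b₂)^2 ≤ (a:ℤ)^2 := by
    have h2a : (0:ℤ) < 2*(a:ℤ) := by linarith
    have hdm := Int.mul_ediv_add_emod (2*(b₁*b₂) + (a:ℤ)) (2*(a:ℤ))
    rw [← hedef] at hdm
    have h0 : 0 ≤ (2*(b₁*b₂) + (a:ℤ)) % (2*(a:ℤ)) := Int.emod_nonneg _ (ne_of_gt h2a)
    have hlt := Int.emod_lt_of_pos (2*(b₁*b₂) + (a:ℤ)) h2a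
    have h2s : 2*((a:ℤ)*e - b₁*b₂) = (a:ℤ) - (2*(b₁*b₂) + (a:ℤ)) % (2*(a:ℤ)) := by
      linear_combination hdm
    have hsub : (0:ℤ) ≤ 2*(a:ℤ) - (2*(b₁*b₂) + (a:ℤ)) % (2*(a:ℤ)) := by linarith
    nlinarith [mul_nonneg h0 hsub, h2s]
  have hDnn : 0 ≤ ((a:ℤ)*c₁-b₁^2)*((a:ℤ)*c₂-b₂^2) - ((a:ℤ)*e - b₁*b₂)^2 := by
    have hb : (a:ℤ)^2 ≤ 4 * (((a:ℤ)*c₁-b₁^2) * ((a:ℤ)*c₂-b₂^2)) := by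
      rw [hdet₁, hdet₂]; linarith [hbound]
    linarith
  rcases hDnn.eq_or_lt with hDeq | hDlt
  · -- degenerate case
    obtain ⟨K, hK, S, hfact⟩ := degenerate_case (a:ℤ) b₁ c₁ b₂ c₂ e haZ hd₁ hd₂
      (by linarith)
    refine ⟨ext3 K, ext3_pd K hK, ⟨lift2 (S * (E₁ * Q₁)), ?_⟩,
      ⟨lift2 (S * (E₂ * Q₂)), ?_⟩⟩
    · rw [lift2_spec]
      calc (S * (E₁ * Q₁))ᵀ * K * (S * (E₁ * Q₁))
          = (E₁*Q₁)ᵀ * (Sᵀ * K * S) * (E₁*Q₁) := by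
            simp only [Matrix.transpose_mul, Matrix.mul_assoc]
        _ = Q₁ᵀ * (E₁ᵀ * !![(a:ℤ), b₁, b₂; b₁, c₁, e; b₂, e, c₂] * E₁) * Q₁ := by
            rw [hfact]; simp only [Matrix.transpose_mul, Matrix.mul_assoc]
        _ = Q₁ᵀ * !![(a:ℤ), b₁; b₁, c₁] * Q₁ := by rw [embed1]
        _ = ℓ₁ := hQ₁
    · rw [lift2_spec]
      calc (S * (E₂ * Q₂))ᵀ * K * (S * (E₂ * Q₂))
          = (E₂*Q₂)ᵀ * (Sᵀ * K * S) * (E₂*Q₂) := by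
            simp only [Matrix.transpose_mul, Matrix.mul_assoc]
        _ = Q₂ᵀ * (E₂ᵀ * !![(a:ℤ), b₁, b₂; b₁, c₁, e; b₂, e, c₂] * E₂) * Q₂ := by
            rw [hfact]; simp only [Matrix.transpose_mul, Matrix.mul_assoc]
        _ = Q₂ᵀ * !![(a:ℤ), b₂; b₂, c₂] * Q₂ := by rw [embed2]
        _ = ℓ₂ := hQ₂
  · -- nondegenerate case
    refine ⟨!![(a:ℤ), b₁, b₂; b₁, c₁, e; b₂, e, c₂],
      glue_pd (a:ℤ) b₁ c₁ b₂ c₂ e haZ hd₁ hDlt, ⟨E₁ * Q₁, ?_⟩, ⟨E₂ * Q₂, ?_⟩⟩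
    · calc (E₁*Q₁)ᵀ * !![(a:ℤ), b₁, b₂; b₁, c₁, e; b₂, e, c₂] * (E₁*Q₁)
          = Q₁ᵀ * (E₁ᵀ * !![(a:ℤ), b₁, b₂; b₁, c₁, e; b₂, e, c₂] * E₁) * Q₁ := by
            simp only [Matrix.transpose_mul, Matrix.mul_assoc]
        _ = Q₁ᵀ * !![(a:ℤ), b₁; b₁, c₁] * Q₁ := by rw [embed1]
        _ = ℓ₁ := hQ₁
    · calc (E₂*Q₂)ᵀ * !![(a:ℤ), b₁, b₂; b₁, c₁, e; b₂, e, c₂] * (E₂*Q₂)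
          = Q₂ᵀ * (E₂ᵀ * !![(a:ℤ), b₁, b₂; b₁, c₁, e; b₂, e, c₂] * E₂) * Q₂ := by
            simp only [Matrix.transpose_mul, Matrix.mul_assoc]
        _ = Q₂ᵀ * !![(a:ℤ), b₂; b₂, c₂] * Q₂ := by rw [embed2]
        _ = ℓ₂ := hQ₂
end

section
/- Let m ∈ {6, 7, 8} and let E_m denote the Gram matrix of the root lattice E_m. If a positive definite integral quadratic form L (of any rank) represents both the identity form I_m and E_m, then L represents the form I_m ⊥ E_m; in particular, any such L has rank at least 2m, so no form of rank ≤ 2m−1 represents both I_m and E_m. -/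
open Matrix

/-- The Gram (Cartan) matrix of the root system E_m (m = 6, 7, 8), in the Bourbaki
labelling: nodes 0, 1, …, m-2 form a chain and node m-1 is attached to node 2. -/
def EGram (m : ℕ) : Matrix (Fin m) (Fin m) ℤ := fun i j =>
  if i = j then 2
  else if ((i : ℕ) + 1 = (j : ℕ) ∧ (j : ℕ) < m - 1) ∨
          ((j : ℕ) + 1 = (i : ℕ) ∧ (i : ℕ) < m - 1) ∨
          ((i : ℕ) = m - 1 ∧ (j : ℕ) = 2) ∨
          ((j : ℕ) = m - 1 ∧ (i : ℕ) = 2) then -1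
  else 0

/-! ### Auxiliary material -/

namespace RepEm

lemma pairing {n p q : ℕ} (L : Matrix (Fin n) (Fin n) ℤ) (T : Matrix (Fin n) (Fin p) ℤ)
    (S : Matrix (Fin n) (Fin q) ℤ) (x : Fin p → ℤ) (y : Fin q → ℤ) :
    (T *ᵥ x) ⬝ᵥ (L *ᵥ (S *ᵥ y)) = x ⬝ᵥ ((Tᵀ * L * S) *ᵥ y) := by
  calc (T *ᵥ x) ⬝ᵥ (L *ᵥ (S *ᵥ y))
      = ((T *ᵥ x) ᵥ* L) ⬝ᵥ (S *ᵥ y) := dotProduct_mulVec _ _ _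
    _ = ((x ᵥ* Tᵀ) ᵥ* L) ⬝ᵥ (S *ᵥ y) := by rw [vecMul_transpose]
    _ = (x ᵥ* (Tᵀ * L)) ⬝ᵥ (S *ᵥ y) := by rw [vecMul_vecMul]
    _ = x ⬝ᵥ ((Tᵀ * L) *ᵥ (S *ᵥ y)) := (dotProduct_mulVec _ _ _).symm
    _ = x ⬝ᵥ ((Tᵀ * L * S) *ᵥ y) := by rw [mulVec_mulVec]

lemma dot_transpose {p : ℕ} (M : Matrix (Fin p) (Fin p) ℤ) (x y : Fin p → ℤ) :
    x ⬝ᵥ (Mᵀ *ᵥ y) = y ⬝ᵥ (M *ᵥ x) := by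
  calc x ⬝ᵥ (Mᵀ *ᵥ y) = x ⬝ᵥ (y ᵥ* M) := by rw [mulVec_transpose]
    _ = (y ᵥ* M) ⬝ᵥ x := dotProduct_comm _ _
    _ = y ⬝ᵥ (M *ᵥ x) := (dotProduct_mulVec _ _ _).symm

lemma quad_congr {p : ℕ} (M N : Matrix (Fin p) (Fin p) ℤ) (h : M + Mᵀ = N + Nᵀ)
    (a : Fin p → ℤ) : a ⬝ᵥ (M *ᵥ a) = a ⬝ᵥ (N *ᵥ a) := by
  have hM : a ⬝ᵥ (Mᵀ *ᵥ a) = a ⬝ᵥ (M *ᵥ a) := dot_transpose M a a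
  have hN : a ⬝ᵥ (Nᵀ *ᵥ a) = a ⬝ᵥ (N *ᵥ a) := dot_transpose N a a
  have h2 : a ⬝ᵥ ((M + Mᵀ) *ᵥ a) = a ⬝ᵥ ((N + Nᵀ) *ᵥ a) := by rw [h]
  rw [add_mulVec, dotProduct_add, add_mulVec, dotProduct_add, hM, hN] at h2
  linarith

lemma dot_vecMulVec {p : ℕ} (u a : Fin p → ℤ) :
    a ⬝ᵥ (vecMulVec u u *ᵥ a) = (u ⬝ᵥ a) * (u ⬝ᵥ a) := by
  have h1 : vecMulVec u u *ᵥ a = (u ⬝ᵥ a) • u := by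
    ext i
    simp only [mulVec, dotProduct, vecMulVec_apply, Pi.smul_apply, smul_eq_mul,
      mul_assoc, ← Finset.mul_sum]
    rw [mul_comm]
  rw [h1, dotProduct_smul, smul_eq_mul, dotProduct_comm]

lemma quad_expand {p : ℕ} (M : Matrix (Fin p) (Fin p) ℤ) (k : ℤ) (u v : Fin p → ℤ) :
    (k • u + v) ⬝ᵥ (M *ᵥ (k • u + v)) =
      k * k * (u ⬝ᵥ (M *ᵥ u)) + k * (u ⬝ᵥ (M *ᵥ v)) + k * (v ⬝ᵥ (M *ᵥ u))
        + v ⬝ᵥ (M *ᵥ v) := by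
  rw [mulVec_add, mulVec_smul, dotProduct_add, add_dotProduct, add_dotProduct,
    dotProduct_smul, dotProduct_smul, smul_dotProduct, smul_dotProduct]
  simp only [smul_eq_mul]
  ring

/-! ### The auxiliary matrices for m = 6, 7, 8 -/

def G6 : Matrix (Fin 6) (Fin 6) ℤ :=
  !![4, 5, 6, 4, 2, 3; 5, 10, 12, 8, 4, 6; 6, 12, 18, 12, 6, 9;
     4, 8, 12, 10, 5, 6; 2, 4, 6, 5, 4, 3; 3, 6, 9, 6, 3, 6]

def V6 : Matrix (Fin 6) (Fin 6) ℤ :=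
  !![1, 2, 4, 2, 0, 2; 0, 2, 8, 4, 0, 4; 0, 0, 6, 8, 4, 6;
     0, 0, 0, 3, 2, 4; 0, 0, 0, 0, 0, 2; 0, 0, 0, 0, 0, 2]

def W6 : Matrix (Fin 6) (Fin 6) ℤ :=
  !![2, 5, 6, 4, 2, 3; 0, 5, 12, 8, 4, 6; 0, 0, 9, 12, 6, 9;
     0, 0, 0, 5, 5, 6; 0, 0, 0, 0, 2, 3; 0, 0, 0, 0, 0, 3]

def u6 : Fin 6 → ℤ := ![1, 2, 0, 1, 2, 0]

def G7 : Matrix (Fin 7) (Fin 7) ℤ :=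
  !![4, 6, 8, 6, 4, 2, 4; 6, 12, 16, 12, 8, 4, 8; 8, 16, 24, 18, 12, 6, 12;
     6, 12, 18, 15, 10, 5, 9; 4, 8, 12, 10, 8, 4, 6; 2, 4, 6, 5, 4, 3, 3;
     4, 8, 12, 9, 6, 3, 7]

def U7 : Matrix (Fin 7) (Fin 7) ℤ :=
  !![1, 3, 4, 3, 2, 1, 2; 0, 3, 8, 6, 4, 2, 4; 0, 0, 6, 9, 6, 3, 6;
     0, 0, 0, 3, 5, 1, 3; 0, 0, 0, 0, 2, 2, 3; 0, 0, 0, 0, 0, 0, 0;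
     0, 0, 0, 0, 0, 0, 1]

def p7 : Fin 7 → ℤ := ![0, 0, 0, 1, 0, 1, 1]

def G8 : Matrix (Fin 8) (Fin 8) ℤ :=
  !![4, 7, 10, 8, 6, 4, 2, 5; 7, 14, 20, 16, 12, 8, 4, 10; 10, 20, 30, 24, 18, 12, 6, 15;
     8, 16, 24, 20, 15, 10, 5, 12; 6, 12, 18, 15, 12, 8, 4, 9; 4, 8, 12, 10, 8, 6, 3, 6;
     2, 4, 6, 5, 4, 3, 2, 3; 5, 10, 15, 12, 9, 6, 3, 8]

def U8 : Matrix (Fin 8) (Fin 8) ℤ :=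
  !![2, 7, 10, 8, 6, 4, 2, 5; 0, 7, 20, 16, 12, 8, 4, 10; 0, 0, 15, 24, 18, 12, 6, 15;
     0, 0, 0, 10, 15, 10, 5, 12; 0, 0, 0, 0, 6, 8, 4, 9; 0, 0, 0, 0, 0, 3, 3, 6;
     0, 0, 0, 0, 0, 0, 1, 3; 0, 0, 0, 0, 0, 0, 0, 4]

/-! ### Congruence exclusion lemmas -/

lemma cong6 : ∀ a : Fin 6 → ℤ,
    ¬(1 ≤ a ⬝ᵥ (G6 *ᵥ a) ∧ a ⬝ᵥ (G6 *ᵥ a) ≤ 3) := by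
  rintro a ⟨h1, h2⟩
  have hid1 : a ⬝ᵥ (G6 *ᵥ a) = (u6 ⬝ᵥ a) * (u6 ⬝ᵥ a) + 3 * (a ⬝ᵥ (V6 *ᵥ a)) := by
    have h := quad_congr G6 (vecMulVec u6 u6 + (3 : ℤ) • V6) (by decide) a
    rw [h, add_mulVec, dotProduct_add, dot_vecMulVec, smul_mulVec,
      dotProduct_smul, smul_eq_mul]
  have hid2 : a ⬝ᵥ (G6 *ᵥ a) = 2 * (a ⬝ᵥ (W6 *ᵥ a)) := by
    have h := quad_congr G6 ((2 : ℤ) • W6) (by decide) a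
    rw [h, smul_mulVec, dotProduct_smul, smul_eq_mul]
  set s := u6 ⬝ᵥ a with hs
  obtain ⟨c, hc⟩ : ∃ c, s = 3 * c + s % 3 := ⟨s / 3, by omega⟩
  have h3 : s % 3 = 0 ∨ s % 3 = 1 ∨ s % 3 = 2 := by omega
  obtain ⟨r, hr⟩ : ∃ r : ℤ, r = c * c := ⟨_, rfl⟩
  rcases h3 with h | h | h
  · have hss : s * s = 9 * r + 0 := by rw [hc, h, hr]; ring
    rw [hss] at hid1; omega
  · have hss : s * s = 9 * r + 6 * c + 1 := by rw [hc, h, hr]; ring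
    rw [hss] at hid1; omega
  · have hss : s * s = 9 * r + 12 * c + 4 := by rw [hc, h, hr]; ring
    rw [hss] at hid1; omega

lemma cong7 : ∀ a : Fin 7 → ℤ,
    ¬(1 ≤ a ⬝ᵥ (G7 *ᵥ a) ∧ a ⬝ᵥ (G7 *ᵥ a) ≤ 2) := by
  rintro a ⟨h1, h2⟩
  have hid1 : a ⬝ᵥ (G7 *ᵥ a) = 3 * ((p7 ⬝ᵥ a) * (p7 ⬝ᵥ a)) + 4 * (a ⬝ᵥ (U7 *ᵥ a)) := by
    have h := quad_congr G7 ((3 : ℤ) • vecMulVec p7 p7 + (4 : ℤ) • U7) (by decide) a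
    rw [h, add_mulVec, dotProduct_add, smul_mulVec, smul_mulVec,
      dotProduct_smul, dotProduct_smul, smul_eq_mul, smul_eq_mul, dot_vecMulVec]
  set s := p7 ⬝ᵥ a with hs
  obtain ⟨c, hc⟩ : ∃ c, s = 2 * c + s % 2 := ⟨s / 2, by omega⟩
  have h3 : s % 2 = 0 ∨ s % 2 = 1 := by omega
  obtain ⟨r, hr⟩ : ∃ r : ℤ, r = c * c := ⟨_, rfl⟩
  rcases h3 with h | h
  · have hss : s * s = 4 * r + 0 := by rw [hc, h, hr]; ring
    rw [hss] at hid1; omega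
  · have hss : s * s = 4 * r + 4 * c + 1 := by rw [hc, h, hr]; ring
    rw [hss] at hid1; omega

lemma cong8 : ∀ a : Fin 8 → ℤ,
    ¬(1 ≤ a ⬝ᵥ (G8 *ᵥ a) ∧ a ⬝ᵥ (G8 *ᵥ a) ≤ 1) := by
  rintro a ⟨h1, h2⟩
  have hid : a ⬝ᵥ (G8 *ᵥ a) = 2 * (a ⬝ᵥ (U8 *ᵥ a)) := by
    have h := quad_congr G8 ((2 : ℤ) • U8) (by decide) a
    rw [h, smul_mulVec, dotProduct_smul, smul_eq_mul]
  omega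

/-! ### Packaged data for each m -/

lemma hdata (m : ℕ) (hm : m = 6 ∨ m = 7 ∨ m = 8) :
    ∃ (G : Matrix (Fin m) (Fin m) ℤ) (d : ℤ), 1 ≤ d ∧ Gᵀ = G ∧
      G * EGram m = d • 1 ∧ EGram m * G = d • 1 ∧
      ∀ a : Fin m → ℤ, ¬(1 ≤ a ⬝ᵥ (G *ᵥ a) ∧ a ⬝ᵥ (G *ᵥ a) ≤ d) := by
  rcases hm with rfl | rfl | rfl
  · exact ⟨G6, 3, by norm_num, by decide, by decide, by decide, cong6⟩
  · exact ⟨G7, 2, by norm_num, by decide, by decide, by decide, cong7⟩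
  · exact ⟨G8, 1, by norm_num, by decide, by decide, by decide, cong8⟩

end RepEm

open RepEm in
/-- For m ∈ {6,7,8}: any positive definite integral form representing both I_m and E_m
represents I_m ⊥ E_m; in particular its rank is at least 2m. -/
theorem represents_Im_perp_Em (m : ℕ) (hm : m = 6 ∨ m = 7 ∨ m = 8)
    (n : ℕ) (L : Matrix (Fin n) (Fin n) ℤ) (hL : IsPDForm L)
    (hI : Represents L (1 : Matrix (Fin m) (Fin m) ℤ))
    (hE : Represents L (EGram m)) :
    Represents L
      (Matrix.reindex finSumFinEquiv finSumFinEquiv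
        (Matrix.fromBlocks (1 : Matrix (Fin m) (Fin m) ℤ) 0 0 (EGram m))) ∧
    2 * m ≤ n := by
  obtain ⟨T, hT⟩ := hI
  obtain ⟨S, hS⟩ := hE
  obtain ⟨G, d, hd, hGs, hGE, hEG, hcong⟩ := hdata m hm
  have hLs : Lᵀ = L := hL.1
  have hpsd : ∀ z : Fin n → ℤ, 0 ≤ z ⬝ᵥ (L *ᵥ z) := by
    intro z
    rcases eq_or_ne z 0 with rfl | hz
    · simp
    · exact (hL.2 z hz).le
  set B := Tᵀ * L * S with hBdef
  have hBT : Sᵀ * L * T = Bᵀ := by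
    rw [hBdef, transpose_mul, transpose_mul, transpose_transpose, hLs, ← Matrix.mul_assoc]
  have key : ∀ x y : Fin m → ℤ,
      0 ≤ x ⬝ᵥ x + 2 * (x ⬝ᵥ (B *ᵥ y)) + y ⬝ᵥ (EGram m *ᵥ y) := by
    intro x y
    have h0 := hpsd (T *ᵥ x + S *ᵥ y)
    rw [mulVec_add, dotProduct_add, add_dotProduct, add_dotProduct,
      pairing, pairing, pairing, pairing, hT, hS, hBT, ← hBdef, one_mulVec] at h0
    have hyB : y ⬝ᵥ (Bᵀ *ᵥ x) = x ⬝ᵥ (B *ᵥ y) := dot_transpose B y x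
    rw [hyB] at h0
    linarith
  have hB0 : B = 0 := by
    ext i j
    have hrow : ∀ (c : ℤ) (y : Fin m → ℤ),
        0 ≤ c * c + 2 * (c * ((B *ᵥ y) i)) + y ⬝ᵥ (EGram m *ᵥ y) := by
      intro c y
      have h := key (c • Pi.single i 1) y
      simp only [smul_dotProduct, dotProduct_smul, single_dotProduct,
        Pi.single_eq_same, smul_eq_mul, mul_one, one_mul] at h
      nlinarith [h]
    set a : Fin m → ℤ := B i with hadef
    set q : ℤ := a ⬝ᵥ (G *ᵥ a) with hqdef
    have hGaE : (G *ᵥ a) ⬝ᵥ (EGram m *ᵥ (G *ᵥ a)) = d * q := by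
      rw [pairing, hGs, hGE, Matrix.smul_mul, one_mul, smul_mulVec,
        dotProduct_smul, smul_eq_mul, ← hqdef]
    have hcross1 : (G *ᵥ a) ⬝ᵥ (EGram m *ᵥ (Pi.single j 1)) = d * a j := by
      have h1 : (Pi.single j (1 : ℤ)) = (1 : Matrix (Fin m) (Fin m) ℤ) *ᵥ (Pi.single j 1) :=
        (one_mulVec _).symm
      rw [h1, pairing, hGs, mul_one, hGE, smul_mulVec, one_mulVec,
        dotProduct_smul, dotProduct_single, smul_eq_mul, mul_one]
    have hcross2 : (Pi.single j (1 : ℤ)) ⬝ᵥ (EGram m *ᵥ (G *ᵥ a)) = d * a j := by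
      rw [mulVec_mulVec, hEG, smul_mulVec, one_mulVec, dotProduct_smul,
        single_dotProduct, smul_eq_mul, one_mul]
    have hEjj : (Pi.single j (1 : ℤ)) ⬝ᵥ (EGram m *ᵥ (Pi.single j 1)) = 2 := by
      rw [mulVec_single_one, single_dotProduct, one_mul]
      simp [EGram]
    have hBGa : (B *ᵥ (G *ᵥ a)) i = q := rfl
    have hq2 : q * q ≤ d * q := by
      have h := hrow (-q) (G *ᵥ a)
      rw [hBGa, hGaE] at h
      nlinarith [h]
    have hq0 : q = 0 := by
      by_contra hq
      have h1 : 1 ≤ q := by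
        rcases lt_trichotomy q 0 with h | h | h
        · nlinarith [hq2, hd]
        · exact absurd h hq
        · omega
      have h2 : q ≤ d := by nlinarith [hq2, h1]
      exact hcong a ⟨h1, h2⟩
    have hBy : (B *ᵥ ((-(a j)) • (G *ᵥ a) + Pi.single j 1)) i = a j := by
      show a ⬝ᵥ _ = _
      rw [dotProduct_add, dotProduct_smul, ← hqdef, hq0, dotProduct_single]
      simp
    have hyEy : ((-(a j)) • (G *ᵥ a) + Pi.single j 1) ⬝ᵥ
        (EGram m *ᵥ ((-(a j)) • (G *ᵥ a) + Pi.single j 1)) =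
          -(a j) * -(a j) * (d * q) + (-(a j)) * (d * a j) + (-(a j)) * (d * a j) + 2 := by
      rw [quad_expand, hGaE, hcross1, hcross2, hEjj]
    have h := hrow (-(a j)) ((-(a j)) • (G *ᵥ a) + Pi.single j 1)
    rw [hBy, hyEy, hq0] at h
    have hsq : a j * a j ≤ 0 := by nlinarith [h, hd]
    have : a j = 0 := by nlinarith [hsq, mul_self_nonneg (a j)]
    exact this
  have hB02 : Tᵀ * L * S = 0 := by rw [← hBdef]; exact hB0
  have hB' : Sᵀ * L * T = 0 := by rw [hBT, hB0, transpose_zero]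
  set T₀ : Matrix (Fin n) (Fin m ⊕ Fin m) ℤ := fromCols T S with hT₀
  have h₀ : T₀ᵀ * L * T₀ = fromBlocks 1 0 0 (EGram m) := by
    rw [hT₀, transpose_fromCols, fromRows_mul, fromRows_mul_fromCols,
      hT, hS, hB02, hB']
  set T' : Matrix (Fin n) (Fin (m + m)) ℤ :=
    T₀.submatrix id ⇑(finSumFinEquiv (m := m) (n := m)).symm with hT'
  have hrep : T'ᵀ * L * T' =
      Matrix.reindex finSumFinEquiv finSumFinEquiv
        (Matrix.fromBlocks (1 : Matrix (Fin m) (Fin m) ℤ) 0 0 (EGram m)) := by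
    rw [hT', transpose_submatrix]
    have hs2 : T₀ᵀ.submatrix (⇑(finSumFinEquiv (m := m) (n := m)).symm) id * L =
        (T₀ᵀ * L).submatrix ⇑(finSumFinEquiv (m := m) (n := m)).symm id := by
      have h := submatrix_mul T₀ᵀ L (⇑(finSumFinEquiv (m := m) (n := m)).symm) id id
        Function.bijective_id
      rw [submatrix_id_id] at h
      exact h.symm
    rw [hs2]
    have hs3 := submatrix_mul (T₀ᵀ * L) T₀ (⇑(finSumFinEquiv (m := m) (n := m)).symm) id
      (⇑(finSumFinEquiv (m := m) (n := m)).symm) Function.bijective_id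
    rw [← hs3, h₀, reindex_apply]
  refine ⟨⟨T', hrep⟩, ?_⟩
  -- rank argument over ℚ
  have hdetE : (EGram m).det ≠ 0 := by
    intro h0
    have hdet := congrArg Matrix.det hGE
    rw [det_mul, h0, mul_zero, det_smul, det_one, mul_one] at hdet
    have hne : d ^ Fintype.card (Fin m) ≠ 0 := pow_ne_zero _ (by omega)
    exact hne hdet.symm
  set f : ℤ →+* ℚ := Int.castRingHom ℚ with hf
  set N : Matrix (Fin (m + m)) (Fin (m + m)) ℤ :=
    Matrix.reindex finSumFinEquiv finSumFinEquiv
      (Matrix.fromBlocks (1 : Matrix (Fin m) (Fin m) ℤ) 0 0 (EGram m)) with hN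
  have hNdet : (N.map f).det ≠ 0 := by
    have hmd := RingHom.map_det f N
    rw [RingHom.mapMatrix_apply] at hmd
    rw [← hmd]
    have hNd : N.det = (EGram m).det := by
      rw [hN, Matrix.det_reindex_self, Matrix.det_fromBlocks_zero₂₁, det_one, one_mul]
    rw [hNd, hf]
    simpa using hdetE
  have hfact : N.map f = (T'.map f)ᵀ * (L.map f) * (T'.map f) := by
    rw [← hrep, Matrix.map_mul, Matrix.map_mul, Matrix.transpose_map]
  have h1 : (N.map f).rank = m + m := by
    rw [Matrix.rank_of_isUnit _ ((Matrix.isUnit_iff_isUnit_det _).2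
      (isUnit_iff_ne_zero.2 hNdet))]
    simp
  have h2 : (N.map f).rank ≤ (T'.map f).rank := by
    rw [hfact]
    exact Matrix.rank_mul_le_right _ _
  have h3 : (T'.map f).rank ≤ n :=
    le_trans (Matrix.rank_le_card_height _) (le_of_eq (Fintype.card_fin n))
  omega
end

section
/- The root form A₆ is not represented by the form I₆ ⊥ E₆. (Together with the fact that any quadratic form representing both I₆ and E₆ represents I₆ ⊥ E₆, this shows κ(6,12) = 2.) -/
open Matrix

set_option maxRecDepth 100000
set_option maxHeartbeats 1000000

/-- The Gram matrix of the root lattice A₆. -/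
def A6 : Matrix (Fin 6) (Fin 6) ℤ :=
  !![2, -1, 0, 0, 0, 0;
     -1, 2, -1, 0, 0, 0;
     0, -1, 2, -1, 0, 0;
     0, 0, -1, 2, -1, 0;
     0, 0, 0, -1, 2, -1;
     0, 0, 0, 0, -1, 2]

/-- The Gram (Cartan) matrix of the root system E₆: chain 0–1–2–3–4 with node 5
attached to node 2. -/
def E6 : Matrix (Fin 6) (Fin 6) ℤ :=
  !![2, -1, 0, 0, 0, 0;
     -1, 2, -1, 0, 0, 0;
     0, -1, 2, -1, 0, -1;
     0, 0, -1, 2, -1, 0;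
     0, 0, 0, -1, 2, 0;
     0, 0, -1, 0, 0, 2]

lemma conj_apply' {k : Type*} [Fintype k] (M : Matrix k k ℤ) (S : Matrix k (Fin 6) ℤ)
    (i j : Fin 6) :
    (Sᵀ * M * S) i j = (fun a => S a i) ⬝ᵥ M.mulVec fun a => S a j := by
  simp only [Matrix.mul_apply, Matrix.transpose_apply, dotProduct, Matrix.mulVec,
    Finset.sum_mul, Finset.mul_sum]
  rw [Finset.sum_comm]
  exact Finset.sum_congr rfl fun a _ => Finset.sum_congr rfl fun b _ => by ring

lemma block_dot' (u v : Fin 6 ⊕ Fin 6 → ℤ) :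
    u ⬝ᵥ (Matrix.fromBlocks (1 : Matrix (Fin 6) (Fin 6) ℤ) 0 0 E6).mulVec v
      = (fun a => u (Sum.inl a)) ⬝ᵥ (fun a => v (Sum.inl a))
        + (fun a => u (Sum.inr a)) ⬝ᵥ E6.mulVec fun a => v (Sum.inr a) := by
  simp [dotProduct, mulVec, Fintype.sum_sum_type, Matrix.one_apply, Finset.mul_sum,
    ite_mul, mul_ite]

lemma E6_dot' (v w : Fin 6 → ℤ) :
    v ⬝ᵥ E6.mulVec w
      = v 0 * (2 * w 0 - w 1) + v 1 * (-(w 0) + 2 * w 1 - w 2)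
        + v 2 * (-(w 1) + 2 * w 2 - w 3 - w 5) + v 3 * (-(w 2) + 2 * w 3 - w 4)
        + v 4 * (-(w 3) + 2 * w 4) + v 5 * (-(w 2) + 2 * w 5) := by
  simp only [dotProduct, mulVec, Fin.sum_univ_six,
    show E6 0 0 = 2 from rfl,
    show E6 0 1 = -1 from rfl,
    show E6 0 2 = 0 from rfl,
    show E6 0 3 = 0 from rfl,
    show E6 0 4 = 0 from rfl,
    show E6 0 5 = 0 from rfl,
    show E6 1 0 = -1 from rfl,
    show E6 1 1 = 2 from rfl,
    show E6 1 2 = -1 from rfl,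
    show E6 1 3 = 0 from rfl,
    show E6 1 4 = 0 from rfl,
    show E6 1 5 = 0 from rfl,
    show E6 2 0 = 0 from rfl,
    show E6 2 1 = -1 from rfl,
    show E6 2 2 = 2 from rfl,
    show E6 2 3 = -1 from rfl,
    show E6 2 4 = 0 from rfl,
    show E6 2 5 = -1 from rfl,
    show E6 3 0 = 0 from rfl,
    show E6 3 1 = 0 from rfl,
    show E6 3 2 = -1 from rfl,
    show E6 3 3 = 2 from rfl,
    show E6 3 4 = -1 from rfl,
    show E6 3 5 = 0 from rfl,
    show E6 4 0 = 0 from rfl,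
    show E6 4 1 = 0 from rfl,
    show E6 4 2 = 0 from rfl,
    show E6 4 3 = -1 from rfl,
    show E6 4 4 = 2 from rfl,
    show E6 4 5 = 0 from rfl,
    show E6 5 0 = 0 from rfl,
    show E6 5 1 = 0 from rfl,
    show E6 5 2 = -1 from rfl,
    show E6 5 3 = 0 from rfl,
    show E6 5 4 = 0 from rfl,
    show E6 5 5 = 2 from rfl]
  ring

lemma E6_aniso' (v : Fin 6 → ℤ) (h : v ⬝ᵥ E6.mulVec v ≤ 1) : v = 0 := by
  rw [E6_dot'] at h
  set y0 := v 0 with h0; set y1 := v 1 with h1; set y2 := v 2 with h2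
  set y3 := v 3 with h3; set y4 := v 4 with h4; set y5 := v 5 with h5
  obtain ⟨m, hm⟩ : ∃ m : ℤ, y0 * (2 * y0 - y1) + y1 * (-y0 + 2 * y1 - y2)
      + y2 * (-y1 + 2 * y2 - y3 - y5) + y3 * (-y2 + 2 * y3 - y4)
      + y4 * (-y3 + 2 * y4) + y5 * (-y2 + 2 * y5) = 2 * m :=
    ⟨y0*y0+y1*y1+y2*y2+y3*y3+y4*y4+y5*y5 - y0*y1 - y1*y2 - y2*y3 - y3*y4 - y2*y5, by ring⟩
  rw [hm] at h
  have hm0 : m ≤ 0 := by omega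
  have h60 : 30*(2*y0-y1)^2 + 10*(3*y1-2*y2)^2 + 5*(4*y2-3*y3-3*y5)^2
      + 3*(5*y3-4*y4-3*y5)^2 + 18*(2*y4-y5)^2 + 30*y5^2 ≤ 0 := by nlinarith [hm, hm0]
  have q1 := sq_nonneg (2*y0-y1); have q2 := sq_nonneg (3*y1-2*y2)
  have q3 := sq_nonneg (4*y2-3*y3-3*y5); have q4 := sq_nonneg (5*y3-4*y4-3*y5)
  have q5 := sq_nonneg (2*y4-y5); have q6 := sq_nonneg y5
  have s1 : (2*y0-y1)^2 = 0 := by nlinarith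
  have s2 : (3*y1-2*y2)^2 = 0 := by nlinarith
  have s3 : (4*y2-3*y3-3*y5)^2 = 0 := by nlinarith
  have s4 : (5*y3-4*y4-3*y5)^2 = 0 := by nlinarith
  have s5 : (2*y4-y5)^2 = 0 := by nlinarith
  have s6 : y5^2 = 0 := by nlinarith
  have t1 := pow_eq_zero_iff (n := 2) (by norm_num) |>.mp s1
  have t2 := pow_eq_zero_iff (n := 2) (by norm_num) |>.mp s2
  have t3 := pow_eq_zero_iff (n := 2) (by norm_num) |>.mp s3
  have t4 := pow_eq_zero_iff (n := 2) (by norm_num) |>.mp s4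
  have t5 := pow_eq_zero_iff (n := 2) (by norm_num) |>.mp s5
  have t6 := pow_eq_zero_iff (n := 2) (by norm_num) |>.mp s6
  have z0 : y0 = 0 := by omega
  have z1 : y1 = 0 := by omega
  have z2 : y2 = 0 := by omega
  have z3 : y3 = 0 := by omega
  have z4 : y4 = 0 := by omega
  have z5 : y5 = 0 := by omega
  funext i
  fin_cases i
  · exact z0
  · exact z1
  · exact z2
  · exact z3
  · exact z4
  · exact z5

lemma class_col' (u v : Fin 6 → ℤ) (h : u ⬝ᵥ u + v ⬝ᵥ E6.mulVec v = 2) :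
    u = 0 ∨ v = 0 := by
  by_contra hc
  push_neg at hc
  obtain ⟨hu, hv⟩ := hc
  obtain ⟨a, ha⟩ := Function.ne_iff.mp hu
  have ha' : u a ≠ 0 := ha
  have hpos : 0 < u a * u a := mul_self_pos.mpr ha'
  have hle : u a * u a ≤ u ⬝ᵥ u :=
    Finset.single_le_sum (f := fun b => u b * u b)
      (fun b _ => mul_self_nonneg _) (Finset.mem_univ a)
  have h2 : v ⬝ᵥ E6.mulVec v ≤ 1 := by linarith
  exact hv (E6_aniso' v h2)

lemma not_sq_seven (d : ℤ) (h : d * d = 7) : False := by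
  have h1 : d ≤ 2 := by nlinarith
  have h2 : -2 ≤ d := by nlinarith
  interval_cases d <;> omega

lemma detA6 : A6.det = 7 := by
  simp [A6, Matrix.det_succ_row_zero, Fin.sum_univ_succ]
  decide

lemma detE6 : E6.det = 3 := by
  simp [E6, Matrix.det_succ_row_zero, Fin.sum_univ_succ]
  decide

/-- A₆ is not represented by I₆ ⊥ E₆. -/
theorem A6_not_represented_by_I6_perp_E6 :
    ¬ Represents
      (Matrix.reindex finSumFinEquiv finSumFinEquiv
        (Matrix.fromBlocks (1 : Matrix (Fin 6) (Fin 6) ℤ) 0 0 E6)) A6 := by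
  rintro ⟨T, hT⟩
  obtain ⟨S, hS⟩ : ∃ S : Matrix (Fin 6 ⊕ Fin 6) (Fin 6) ℤ,
      Sᵀ * (Matrix.fromBlocks (1 : Matrix (Fin 6) (Fin 6) ℤ) 0 0 E6) * S = A6 := by
    refine ⟨T.submatrix finSumFinEquiv id, ?_⟩
    set e := finSumFinEquiv (m := 6) (n := 6)
    set L := Matrix.fromBlocks (1 : Matrix (Fin 6) (Fin 6) ℤ) 0 0 E6
    have h1 : (T.submatrix (⇑e) id)ᵀ = Tᵀ.submatrix id ⇑e := rfl
    have h2 : L = (Matrix.reindex e e L).submatrix ⇑e ⇑e := by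
      simp [Matrix.reindex_apply, Matrix.submatrix_submatrix]
    rw [h1, h2, Matrix.submatrix_mul_equiv, Matrix.submatrix_mul_equiv]
    rw [hT]
    rfl
  set x : Fin 6 → Fin 6 → ℤ := fun i a => S (Sum.inl a) i with hxdef
  set y : Fin 6 → Fin 6 → ℤ := fun i a => S (Sum.inr a) i with hydef
  have hkey : ∀ i j, x i ⬝ᵥ x j + y i ⬝ᵥ E6.mulVec (y j) = A6 i j := by
    intro i j
    have h := congrFun (congrFun hS i) j
    rw [conj_apply', block_dot'] at h
    exact h
  have hdiag : ∀ i, A6 i i = 2 := by intro i; fin_cases i <;> rfl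
  have hclass : ∀ i, x i = 0 ∨ y i = 0 := fun i =>
    class_col' (x i) (y i) (by rw [hkey i i, hdiag i])
  have hpropx : ∀ i j : Fin 6, A6 i j = -1 → x i = 0 → x j = 0 := by
    intro i j hij hxi
    rcases hclass j with h | h
    · exact h
    · exfalso
      have hk := hkey i j
      rw [hij, hxi, h] at hk
      simp at hk
  have hpropy : ∀ i j : Fin 6, A6 i j = -1 → y i = 0 → y j = 0 := by
    intro i j hij hyi
    rcases hclass j with h | h
    · exfalso
      have hk := hkey i j
      rw [hij, hyi, h] at hk
      simp at hk
    · exact h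
  have e01 : A6 0 1 = -1 := rfl
  have e12 : A6 1 2 = -1 := rfl
  have e23 : A6 2 3 = -1 := rfl
  have e34 : A6 3 4 = -1 := rfl
  have e45 : A6 4 5 = -1 := rfl
  rcases hclass 0 with h0 | h0
  · -- all columns lie in the E6 block
    have hx1 := hpropx 0 1 e01 h0
    have hx2 := hpropx 1 2 e12 hx1
    have hx3 := hpropx 2 3 e23 hx2
    have hx4 := hpropx 3 4 e34 hx3
    have hx5 := hpropx 4 5 e45 hx4
    have hxall : ∀ i, x i = 0 := by
      intro i
      fin_cases i
      · exact h0
      · exact hx1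
      · exact hx2
      · exact hx3
      · exact hx4
      · exact hx5
    set Y : Matrix (Fin 6) (Fin 6) ℤ := fun a i => y i a with hYdef
    have hY : Yᵀ * E6 * Y = A6 := by
      ext i j
      rw [conj_apply']
      have h := hkey i j
      rw [hxall i] at h
      simpa using h
    have hdet : Yᵀ.det * E6.det * Y.det = A6.det := by
      rw [← Matrix.det_mul, ← Matrix.det_mul, hY]
    rw [Matrix.det_transpose, detE6, detA6] at hdet
    have h37 : (3 : ℤ) ∣ 7 := ⟨Y.det * Y.det, by linear_combination -hdet⟩
    norm_num at h37
  · -- all columns lie in the I6 block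
    have hy1 := hpropy 0 1 e01 h0
    have hy2 := hpropy 1 2 e12 hy1
    have hy3 := hpropy 2 3 e23 hy2
    have hy4 := hpropy 3 4 e34 hy3
    have hy5 := hpropy 4 5 e45 hy4
    have hyall : ∀ i, y i = 0 := by
      intro i
      fin_cases i
      · exact h0
      · exact hy1
      · exact hy2
      · exact hy3
      · exact hy4
      · exact hy5
    set X : Matrix (Fin 6) (Fin 6) ℤ := fun a i => x i a with hXdef
    have hX : Xᵀ * (1 : Matrix (Fin 6) (Fin 6) ℤ) * X = A6 := by
      ext i j
      rw [conj_apply', Matrix.one_mulVec]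
      have h := hkey i j
      rw [hyall i] at h
      simpa using h
    rw [Matrix.mul_one] at hX
    have hdet : Xᵀ.det * X.det = A6.det := by rw [← Matrix.det_mul, hX]
    rw [Matrix.det_transpose, detA6] at hdet
    exact not_sq_seven X.det hdet
end
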